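/- arXiv:2007.12257 — 4 statements merged into one kernel-verified Lean document; each statement's English description precedes it below -/
import Mathlib

section
/- Let D be a digraph, X ⊆ V(D), and k a positive integer. Then at least one of the following holds: (1) D contains k directed odd cycles such that every vertex is in at most two of them; (2) D contains k directed odd X-paths with pairwise distinct endpoints such that every vertex is in at most two of them; or (3) there is a vertex set Y of size at most 4k−1 such that D−Y contains no directed odd X-walk. -/
variable {V : Type}

/-- `w` is a directed walk of length `n` in the digraph with edge relation `R`. -/
def IsWalkOn (R : V → V → Prop) (w : ℕ → V) (n : ℕ) : Prop :=
  ∀ i < n, R (w i) (w (i + 1))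

/-- The set of vertices used by the walk `w` of length `n`. -/
def walkVerts (w : ℕ → V) (n : ℕ) : Set V :=
  {v | ∃ i ≤ n, w i = v}

/-- The set of directed edges used by the walk `w` of length `n`. -/
def walkEdges (w : ℕ → V) (n : ℕ) : Set (V × V) :=
  {e | ∃ i < n, w i = e.1 ∧ w (i + 1) = e.2}

/-- A directed path: a walk with no repeated vertices. -/
def IsPathOn (R : V → V → Prop) (w : ℕ → V) (n : ℕ) : Prop :=
  IsWalkOn R w n ∧ ∀ i ≤ n, ∀ j ≤ n, w i = w j → i = j

/-- A directed cycle of length `n`: a closed walk with no repeated vertices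
except that the last vertex equals the first. -/
def IsCycleOn (R : V → V → Prop) (w : ℕ → V) (n : ℕ) : Prop :=
  0 < n ∧ IsWalkOn R w n ∧ w n = w 0 ∧ ∀ i < n, ∀ j < n, w i = w j → i = j

/-- `v` is reachable from `u` by a directed walk all of whose vertices lie in `S`. -/
def ReachIn (R : V → V → Prop) (S : Set V) (u v : V) : Prop :=
  ∃ w n, IsWalkOn R w n ∧ w 0 = u ∧ w n = v ∧ ∀ i ≤ n, w i ∈ S

/-- Every two vertices of `C` are mutually reachable inside `S`. -/
def StrongIn (R : V → V → Prop) (S C : Set V) : Prop :=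
  ∀ u ∈ C, ∀ v ∈ C, ReachIn R S u v

/-- `C` is a strongly connected component of the subgraph induced on `S`. -/
def IsSCCOf (R : V → V → Prop) (S C : Set V) : Prop :=
  C.Nonempty ∧ C ⊆ S ∧ StrongIn R S C ∧
    ∀ C', C ⊆ C' → C' ⊆ S → StrongIn R S C' → C' = C

/-- A directed `X`-walk: endpoints in `X`, all internal vertices outside `X`. -/
def IsXWalk (R : V → V → Prop) (X : Set V) (w : ℕ → V) (n : ℕ) : Prop :=
  IsWalkOn R w n ∧ w 0 ∈ X ∧ w n ∈ X ∧ ∀ i, 0 < i → i < n → w i ∉ X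

/-- `S` meets every directed odd cycle. -/
def HitsOdd (R : V → V → Prop) (S : Set V) : Prop :=
  ∀ c m, IsCycleOn R c m → Odd m → ∃ i < m, c i ∈ S

/-- `S` meets every directed odd cycle of the subgraph induced on `W`. -/
def HitsOddIn (R : V → V → Prop) (S W : Set V) : Prop :=
  ∀ c m, IsCycleOn R c m → Odd m → walkVerts c m ⊆ W → ∃ i < m, c i ∈ S

/-- A half-integral packing of `k` directed odd cycles: every vertex lies in at most
two of the `k` cycles. -/
def HalfPackOdd (R : V → V → Prop) (k : ℕ) : Prop :=
  ∃ (c : Fin k → ℕ → V) (len : Fin k → ℕ),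
    (∀ i, IsCycleOn R (c i) (len i) ∧ Odd (len i)) ∧
    ∀ v, {i | v ∈ walkVerts (c i) (len i)}.ncard ≤ 2

/-- A linkage of order `s` from `A` to `B` avoiding `Z`: `s` pairwise vertex-disjoint
directed paths from `A` to `B`, none of which meets `Z`. -/
def ExLinkage (R : V → V → Prop) (A B Z : Set V) (s : ℕ) : Prop :=
  ∃ (P : Fin s → ℕ → V) (len : Fin s → ℕ),
    (∀ i, IsPathOn R (P i) (len i) ∧ P i 0 ∈ A ∧ P i (len i) ∈ B ∧
      Disjoint (walkVerts (P i) (len i)) Z) ∧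
    ∀ i j, i ≠ j → Disjoint (walkVerts (P i) (len i)) (walkVerts (P j) (len j))

/-- `T` is `r`-well-linked: for all disjoint equal-size subsets `A, B ⊆ T` of size at
least `r`, there are linkages of order `|A|` from `A` to `B` and from `B` to `A` in
`G - (T \ (A ∪ B))`. -/
def WellLinked (R : V → V → Prop) (T : Finset V) (r : ℕ) : Prop :=
  ∀ A B : Finset V, A ⊆ T → B ⊆ T → Disjoint A B → A.card = B.card → r ≤ A.card →
    ExLinkage R (↑A) (↑B) ((↑T : Set V) \ (↑A ∪ ↑B)) A.card ∧
    ExLinkage R (↑B) (↑A) ((↑T : Set V) \ (↑A ∪ ↑B)) A.card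

/-- `S` is `k`-linked: for every vertex set `X` with `|X| < k`, there is a unique
strongly connected component of `G - X` containing more than half of the vertices
of `S`. -/
def KLinked (R : V → V → Prop) (S : Finset V) (k : ℕ) : Prop :=
  ∀ X : Finset V, X.card < k →
    ∃! C : Set V, IsSCCOf R ((↑X : Set V)ᶜ) C ∧ S.card < 2 * ((↑S : Set V) ∩ C).ncard

/-- A bramble: a family of (vertex sets of) strongly connected subgraphs which
pairwise either intersect or are joined by edges in both directions. -/
def IsBramble (R : V → V → Prop) (B : Set (Set V)) : Prop :=
  (∀ C ∈ B, C.Nonempty ∧ StrongIn R C C) ∧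
  ∀ C₁ ∈ B, ∀ C₂ ∈ B, (C₁ ∩ C₂).Nonempty ∨
    ((∃ u ∈ C₁, ∃ v ∈ C₂, R u v) ∧ (∃ u ∈ C₂, ∃ v ∈ C₁, R u v))

/-- A walk in the underlying undirected graph of the digraph with edge relation `R`. -/
def IsUWalkOn (R : V → V → Prop) (w : ℕ → V) (n : ℕ) : Prop :=
  ∀ i < n, R (w i) (w (i + 1)) ∨ R (w (i + 1)) (w i)

/-- A separation `(C, D)` of a digraph: `C ∪ D = V` and there is no edge from
`C \ D` to `D \ C`. -/
def IsSeparation (R : V → V → Prop) (C D : Set V) : Prop :=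
  C ∪ D = Set.univ ∧ ∀ u ∈ C \ D, ∀ v ∈ D \ C, ¬ R u v

section Basic
variable {α : Type}

lemma walkVerts_start (w : ℕ → α) (n : ℕ) : w 0 ∈ walkVerts w n := ⟨0, Nat.zero_le _, rfl⟩

lemma walkVerts_mem (w : ℕ → α) {i n : ℕ} (h : i ≤ n) : w i ∈ walkVerts w n := ⟨i, h, rfl⟩

/-- splice out the segment (i, i+d] from a walk -/
def splice (w : ℕ → α) (i d : ℕ) : ℕ → α := fun x => if x ≤ i then w x else w (x + d)

lemma splice_walk {R : α → α → Prop} {w : ℕ → α} {n i d : ℕ}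
    (hw : IsWalkOn R w n) (heq : w i = w (i + d)) (hid : i + d ≤ n) :
    IsWalkOn R (splice w i d) (n - d) := by
  intro m hm
  unfold splice
  split_ifs with h1 h2 h2
  · exact hw m (by omega)
  · -- m ≤ i, ¬ m + 1 ≤ i, so m = i
    have hmi : m = i := by omega
    subst hmi
    rw [heq]
    have := hw (m + d) (by omega)
    simpa [Nat.add_right_comm] using this
  · omega
  · have := hw (m + d) (by omega)
    simpa [Nat.add_right_comm] using this

lemma splice_verts (w : ℕ → α) (i d n : ℕ) :
    walkVerts (splice w i d) (n - d) ⊆ walkVerts w n := by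
  rintro v ⟨m, hm, rfl⟩
  unfold splice
  split
  · exact ⟨m, by omega, rfl⟩
  · exact ⟨m + d, by omega, rfl⟩

lemma splice_start (w : ℕ → α) (i d : ℕ) : splice w i d 0 = w 0 := by
  simp [splice]

lemma splice_end {w : ℕ → α} {i d n : ℕ} (hd : 0 < d) (hin : i + d ≤ n)
    (heq : w i = w (i + d)) : splice w i d (n - d) = w n := by
  unfold splice
  split
  · have h1 : n = i + d := by omega
    rw [show n - d = i by omega, heq, ← h1]
  · congr 1; omega

/-- every walk contains a path with the same endpoints -/
lemma exists_path_of_walk {R : α → α → Prop} :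
    ∀ n {w : ℕ → α}, IsWalkOn R w n →
    ∃ p m, IsPathOn R p m ∧ p 0 = w 0 ∧ p m = w n ∧ walkVerts p m ⊆ walkVerts w n := by
  intro n
  induction n using Nat.strong_induction_on with
  | _ n IH =>
    intro w hw
    by_cases hinj : ∀ i ≤ n, ∀ j ≤ n, w i = w j → i = j
    · exact ⟨w, n, ⟨hw, hinj⟩, rfl, rfl, le_refl _⟩
    · push_neg at hinj
      obtain ⟨i, hi, j, hj, hij, hne⟩ := hinj
      -- wlog i < j
      rcases Nat.lt_or_ge i j with hlt | hge
      case _ =>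
        set d := j - i
        have hd0 : 0 < d := by omega
        have hid : i + d ≤ n := by omega
        have heq : w i = w (i + d) := by rw [show i + d = j by omega]; exact hij
        obtain ⟨p, m, hp, h0, hend, hsub⟩ := IH (n - d) (by omega) (splice_walk hw heq hid)
        exact ⟨p, m, hp, by rw [h0, splice_start], by rw [hend, splice_end hd0 hid heq],
          hsub.trans (splice_verts w i d n)⟩
      case _ =>
        have hlt : j < i := by omega
        set d := i - j
        have hd0 : 0 < d := by omega
        have hid : j + d ≤ n := by omega
        have heq : w j = w (j + d) := by rw [show j + d = i by omega]; exact hij.symm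
        obtain ⟨p, m, hp, h0, hend, hsub⟩ := IH (n - d) (by omega) (splice_walk hw heq hid)
        exact ⟨p, m, hp, by rw [h0, splice_start], by rw [hend, splice_end hd0 hid heq],
          hsub.trans (splice_verts w j d n)⟩

/-- every closed odd walk contains an odd cycle -/
lemma odd_cycle_of_closed_odd_walk {R : α → α → Prop} :
    ∀ n {w : ℕ → α}, IsWalkOn R w n → w n = w 0 → Odd n →
    ∃ c m, IsCycleOn R c m ∧ Odd m ∧ walkVerts c m ⊆ walkVerts w n := by
  intro n
  induction n using Nat.strong_induction_on with
  | _ n IH =>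
    intro w hw hclosed hodd
    have hn0 : 0 < n := hodd.pos
    by_cases hinj : ∀ i < n, ∀ j < n, w i = w j → i = j
    · exact ⟨w, n, ⟨hn0, hw, hclosed, hinj⟩, hodd, le_refl _⟩
    · push_neg at hinj
      obtain ⟨i, hi, j, hj, hij, hne⟩ := hinj
      -- wlog i < j
      have main : ∀ i j, i < j → j < n → w i = w j →
          ∃ c m, IsCycleOn R c m ∧ Odd m ∧ walkVerts c m ⊆ walkVerts w n := by
        intro i j hlt hj hij
        set d := j - i
        have hd0 : 0 < d := by omega
        rcases Nat.even_or_odd d with hde | hdo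
        · -- outer walk is odd
          have hsw := splice_walk hw (by rw [show i + d = j by omega]; exact hij) (by omega)
          have hclosed' : splice w i d (n - d) = splice w i d 0 := by
            rw [splice_start, splice_end hd0 (by omega) (by rw [show i + d = j by omega]; exact hij), hclosed]
          have hodd' : Odd (n - d) := by
            rcases hodd with ⟨t, ht⟩; rcases hde with ⟨s, hs⟩
            exact ⟨t - s, by omega⟩
          obtain ⟨c, m, hc, hcm, hsub⟩ := IH (n - d) (by omega) hsw hclosed' hodd'
          exact ⟨c, m, hc, hcm, hsub.trans (splice_verts w i d n)⟩
        · -- inner walk is odd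
          have hsw : IsWalkOn R (fun m => w (i + m)) d := by
            intro m hm
            have := hw (i + m) (by omega)
            simpa [Nat.add_assoc] using this
          have hclosed' : (fun m => w (i + m)) d = (fun m => w (i + m)) 0 := by
            simp only [Nat.add_zero]
            rw [show i + d = j by omega]; exact hij.symm
          obtain ⟨c, m, hc, hcm, hsub⟩ := IH d (by omega) hsw hclosed' hdo
          refine ⟨c, m, hc, hcm, hsub.trans ?_⟩
          rintro v ⟨t, ht, rfl⟩
          exact ⟨i + t, by omega, rfl⟩
      rcases Nat.lt_or_ge i j with hlt | hge
      · exact main i j hlt hj hij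
      · exact main j i (by omega) hi hij.symm

end Basic

section Extract
variable {α : Type}

/-- every odd X-walk contains an odd cycle or an odd X-path with the same endpoints -/
lemma extract_from_odd_X_walk {R : α → α → Prop} {X : Set α} :
    ∀ n {w : ℕ → α}, IsXWalk R X w n → Odd n →
    (∃ c m, IsCycleOn R c m ∧ Odd m ∧ walkVerts c m ⊆ walkVerts w n) ∨
    (∃ p m, IsPathOn R p m ∧ IsXWalk R X p m ∧ Odd m ∧ walkVerts p m ⊆ walkVerts w n ∧
      p 0 = w 0 ∧ p m = w n) := by
  intro n
  induction n using Nat.strong_induction_on with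
  | _ n IH =>
    intro w hw hodd
    obtain ⟨hwalk, h0X, hnX, hint⟩ := hw
    by_cases hinj : ∀ i ≤ n, ∀ j ≤ n, w i = w j → i = j
    · exact Or.inr ⟨w, n, ⟨hwalk, hinj⟩, ⟨hwalk, h0X, hnX, hint⟩, hodd, le_refl _, rfl, rfl⟩
    push_neg at hinj
    obtain ⟨i₀, hi₀, j₀, hj₀, hij₀, hne₀⟩ := hinj
    have main : ∀ i j, i < j → j ≤ n → w i = w j →
        (∃ c m, IsCycleOn R c m ∧ Odd m ∧ walkVerts c m ⊆ walkVerts w n) ∨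
        (∃ p m, IsPathOn R p m ∧ IsXWalk R X p m ∧ Odd m ∧ walkVerts p m ⊆ walkVerts w n ∧
          p 0 = w 0 ∧ p m = w n) := by
      intro i j hlt hj hij
      by_cases hclosed : i = 0 ∧ j = n
      · -- the whole walk is closed and odd
        obtain ⟨rfl, rfl⟩ := hclosed
        exact Or.inl (odd_cycle_of_closed_odd_walk _ hwalk hij.symm hodd)
      · -- interior repeat: 0 < i and j < n
        have hi' : 0 < i ∧ j < n := by
          constructor
          · by_contra h
            push_neg at h
            interval_cases i
            rcases Nat.eq_or_lt_of_le hj with h' | h'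
            · exact hclosed ⟨rfl, h'⟩
            · exact hint j hlt h' (hij ▸ h0X)
          · by_contra h
            push_neg at h
            have hjn : j = n := by omega
            subst hjn
            exact hint i (by by_contra h'; push_neg at h'; omega) hlt (hij.symm ▸ hnX)
        obtain ⟨hi0, hjn⟩ := hi'
        set d := j - i with hdd
        have hd0 : 0 < d := by omega
        have heq : w i = w (i + d) := by rw [show i + d = j by omega]; exact hij
        rcases Nat.even_or_odd d with hde | hdo
        · -- splice out an even closed segment, recurse
          have hsw := splice_walk hwalk heq (by omega)
          have hodd' : Odd (n - d) := by
            rcases hodd with ⟨t, ht⟩; rcases hde with ⟨s, hs⟩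
            exact ⟨t - s, by omega⟩
          have hXw : IsXWalk R X (splice w i d) (n - d) := by
            refine ⟨hsw, ?_, ?_, ?_⟩
            · rw [splice_start]; exact h0X
            · rw [splice_end hd0 (by omega) heq]; exact hnX
            · intro m hm1 hm2
              unfold splice
              split
              · exact hint m hm1 (by omega)
              · exact hint (m + d) (by omega) (by omega)
          rcases IH (n - d) (by omega) hXw hodd' with h | ⟨p, m, hp1, hp2, hp3, hp4, hp5, hp6⟩
          · obtain ⟨c, m, hc1, hc2, hc3⟩ := h
            exact Or.inl ⟨c, m, hc1, hc2, hc3.trans (splice_verts w i d n)⟩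
          · refine Or.inr ⟨p, m, hp1, hp2, hp3, hp4.trans (splice_verts w i d n), ?_, ?_⟩
            · rw [hp5, splice_start]
            · rw [hp6, splice_end hd0 (by omega) heq]
        · -- the inner closed segment is odd: extract an odd cycle
          have hsw : IsWalkOn R (fun m => w (i + m)) d := by
            intro m hm
            have := hwalk (i + m) (by omega)
            simpa [Nat.add_assoc] using this
          have hclosed' : (fun m => w (i + m)) d = (fun m => w (i + m)) 0 := by
            simp only [Nat.add_zero]
            rw [show i + d = j by omega]; exact hij.symm
          obtain ⟨c, m, hc, hcm, hsub⟩ := odd_cycle_of_closed_odd_walk d hsw hclosed' hdo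
          refine Or.inl ⟨c, m, hc, hcm, hsub.trans ?_⟩
          rintro v ⟨t, ht, rfl⟩
          exact ⟨i + t, by omega, rfl⟩
    rcases Nat.lt_or_ge i₀ j₀ with hlt | hge
    · exact main i₀ j₀ hlt hj₀ hij₀
    · exact main j₀ i₀ (by omega) hi₀ hij₀.symm

end Extract

section Follow
open Classical in
/-- length of any path in the relation of a finite arc set is at most the number of arcs -/
lemma path_len_le_ncard {γ : Type} {E : Set (γ × γ)} (hfin : E.Finite) {q : ℕ → γ} {m : ℕ}
    (hq : IsPathOn (fun x y => (x, y) ∈ E) q m) : m ≤ E.ncard := by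
  have : Finite ↥E := hfin
  have hinj : Function.Injective (fun j : Fin m => (⟨(q j, q (j + 1)), hq.1 j j.isLt⟩ : ↥E)) := by
    intro j j' h
    simp only [Subtype.mk.injEq, Prod.mk.injEq] at h
    exact Fin.ext (hq.2 j (le_of_lt j.isLt) j' (le_of_lt j'.isLt) h.1)
  have := Nat.card_le_card_of_injective _ hinj
  simpa [Nat.card_coe_set_eq] using this

open Classical in
lemma follow_lemma {γ : Type} (E : Set (γ × γ)) (hfin : E.Finite) (B2 : Set γ)
    (dout : ∀ x y y', (x, y) ∈ E → (x, y') ∈ E → y = y')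
    (din : ∀ u u' x, (u, x) ∈ E → (u', x) ∈ E → u = u')
    (econ : ∀ x, (∃ u, (u, x) ∈ E) → (∃ y, (x, y) ∈ E) ∨ x ∈ B2)
    (s : γ) (hout : ∃ y, (s, y) ∈ E) (hin : ¬ ∃ u, (u, s) ∈ E) :
    ∃ q m, IsPathOn (fun x y => (x, y) ∈ E) q m ∧ q 0 = s ∧ q m ∈ B2 := by
  set Rel : γ → γ → Prop := fun x y => (x, y) ∈ E with hRel
  set Pm : ℕ → Prop := fun m => ∃ q, IsPathOn Rel q m ∧ q 0 = s with hPm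
  have hP0 : Pm 0 := ⟨fun _ => s, ⟨fun i hi => absurd hi (Nat.not_lt_zero i),
    fun i hi j hj _ => by omega⟩, rfl⟩
  set N := E.ncard with hN
  set m := Nat.findGreatest Pm N with hm
  have hPmm : Pm m := Nat.findGreatest_spec (Nat.zero_le N) hP0
  obtain ⟨q, hq, hq0⟩ := hPmm
  -- extension is impossible
  have hnoext : ¬ ∃ y, (q m, y) ∈ E := by
    rintro ⟨y, hy⟩
    set q' : ℕ → γ := fun j => if j ≤ m then q j else y with hq'
    have hq'path : IsPathOn Rel q' (m + 1) := by
      constructor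
      · intro i hi
        simp only [hq']
        rcases Nat.lt_or_ge i m with h | h
        · rw [if_pos (by omega), if_pos (by omega)]
          exact hq.1 i h
        · have : i = m := by omega
          subst this
          rw [if_pos le_rfl, if_neg (by omega)]
          exact hy
      · intro i hi j hj hij
        simp only [hq'] at hij
        by_cases h1 : i ≤ m <;> by_cases h2 : j ≤ m
        · rw [if_pos h1, if_pos h2] at hij
          exact hq.2 i h1 j h2 hij
        · rw [if_pos h1, if_neg h2] at hij
          -- q i = y, j = m + 1
          exfalso
          rcases Nat.eq_zero_or_pos i with rfl | hi0
          · rw [hq0] at hij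
            exact hin ⟨q m, hij ▸ hy⟩
          · have h3 : (q (i - 1), q i) ∈ E := by
              have := hq.1 (i - 1) (by omega)
              simpa [show i - 1 + 1 = i by omega] using this
            have h4 : (q m, q i) ∈ E := hij ▸ hy
            have := din _ _ _ h3 h4
            have := hq.2 (i - 1) (by omega) m le_rfl this
            omega
        · rw [if_neg h1, if_pos h2] at hij
          exfalso
          rcases Nat.eq_zero_or_pos j with rfl | hj0
          · rw [hq0] at hij
            exact hin ⟨q m, hij ▸ hy⟩
          · have h3 : (q (j - 1), q j) ∈ E := by
              have := hq.1 (j - 1) (by omega)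
              simpa [show j - 1 + 1 = j by omega] using this
            have h4 : (q m, q j) ∈ E := hij ▸ hy
            have := din _ _ _ h3 h4
            have := hq.2 (j - 1) (by omega) m le_rfl this
            omega
        · omega
    have hPm1 : Pm (m + 1) := ⟨q', hq'path, by simp [hq', hq0]⟩
    have hle : m + 1 ≤ N := path_len_le_ncard hfin hq'path
    have := Nat.findGreatest_is_greatest (show m < m + 1 by omega) hle
    exact this hPm1
  have hm0 : 0 < m := by
    rcases Nat.eq_zero_or_pos m with h | h
    · exfalso; apply hnoext; rw [h, hq0]; exact hout
    · exact h
  have hinarc : ∃ u, (u, q m) ∈ E := by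
    refine ⟨q (m - 1), ?_⟩
    have := hq.1 (m - 1) (by omega)
    simpa [show m - 1 + 1 = m by omega] using this
  rcases econ _ hinarc with h | h
  · exact absurd h hnoext
  · exact ⟨q, m, hq, hq0, h⟩

lemma follow_disjoint {γ : Type} {E : Set (γ × γ)}
    (din : ∀ u u' x, (u, x) ∈ E → (u', x) ∈ E → u = u')
    {q q' : ℕ → γ} {m m' : ℕ}
    (hq : IsPathOn (fun x y => (x, y) ∈ E) q m)
    (hq' : IsPathOn (fun x y => (x, y) ∈ E) q' m')
    (hins : ¬ ∃ u, (u, q 0) ∈ E) (hins' : ¬ ∃ u, (u, q' 0) ∈ E)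
    (hss : q 0 ≠ q' 0) :
    Disjoint (walkVerts q m) (walkVerts q' m') := by
  rw [Set.disjoint_left]
  rintro v ⟨i, hi, rfl⟩ ⟨j, hj, hij⟩
  -- q i = q' j is impossible; induct on i
  induction i using Nat.strong_induction_on generalizing j with
  | _ i IH =>
    rcases Nat.eq_zero_or_pos i with rfl | hi0
    · rcases Nat.eq_zero_or_pos j with rfl | hj0
      · exact hss hij.symm
      · refine hins ⟨q' (j - 1), ?_⟩
        have := hq'.1 (j - 1) (by omega)
        rw [show j - 1 + 1 = j by omega, hij] at this
        exact this
    · rcases Nat.eq_zero_or_pos j with rfl | hj0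
      · refine hins' ⟨q (i - 1), ?_⟩
        have := hq.1 (i - 1) (by omega)
        rw [show i - 1 + 1 = i by omega, ← hij] at this
        exact this
      · have h1 : (q (i - 1), q i) ∈ E := by
          have := hq.1 (i - 1) (by omega)
          simpa [show i - 1 + 1 = i by omega] using this
        have h2 : (q' (j - 1), q i) ∈ E := by
          have := hq'.1 (j - 1) (by omega)
          rw [show j - 1 + 1 = j by omega, hij] at this
          exact this
        have := din _ _ _ h1 h2
        exact IH (i - 1) (by omega) (by omega) (j - 1) (by omega) this.symm
end Follow

section Split
variable {β : Type}

/-- vertex-split of a digraph: `(v,false)` is "in", `(v,true)` is "out". -/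
def spl (Q : β → β → Prop) : β × Bool → β × Bool → Prop :=
  fun x y => (y.1 = x.1 ∧ x.2 = false ∧ y.2 = true) ∨ (Q x.1 y.1 ∧ x.2 = true ∧ y.2 = false)

def Aspl (A : Set β) : Set (β × Bool) := {x | x.1 ∈ A ∧ x.2 = false}
def Bspl (B : Set β) : Set (β × Bool) := {x | x.1 ∈ B ∧ x.2 = true}

def DisjPaths {γ : Type} (Q2 : γ → γ → Prop) (A2 B2 : Set γ) (t : ℕ) : Prop :=
  ∃ (P : Fin t → ℕ → γ) (len : Fin t → ℕ),
    (∀ i, IsPathOn Q2 (P i) (len i) ∧ P i 0 ∈ A2 ∧ P i (len i) ∈ B2) ∧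
    ∀ i j, i ≠ j → Disjoint (walkVerts (P i) (len i)) (walkVerts (P j) (len j))

lemma spl_out_false {Q : β → β → Prop} {x y : β × Bool} (h : spl Q x y) (hx : x.2 = false) :
    y = (x.1, true) := by
  rcases h with ⟨h1, _, h3⟩ | ⟨_, h2, _⟩
  · exact Prod.ext h1 h3
  · rw [hx] at h2; exact absurd h2 (by simp)

lemma spl_in_true {Q : β → β → Prop} {x y : β × Bool} (h : spl Q x y) (hy : y.2 = true) :
    x = (y.1, false) := by
  rcases h with ⟨h1, h2, _⟩ | ⟨_, _, h3⟩
  · exact Prod.ext h1.symm h2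
  · rw [hy] at h3; exact absurd h3 (by simp)

lemma spl_out_true {Q : β → β → Prop} {x y : β × Bool} (h : spl Q x y) (hx : x.2 = true) :
    Q x.1 y.1 ∧ y.2 = false := by
  rcases h with ⟨_, h2, _⟩ | ⟨h1, _, h3⟩
  · rw [hx] at h2; exact absurd h2 (by simp)
  · exact ⟨h1, h3⟩

lemma spl_in_false {Q : β → β → Prop} {x y : β × Bool} (h : spl Q x y) (hy : y.2 = false) :
    Q x.1 y.1 ∧ x.2 = true := by
  rcases h with ⟨_, _, h3⟩ | ⟨h1, h2, _⟩
  · rw [hy] at h3; exact absurd h3 (by simp)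
  · exact ⟨h1, h2⟩

lemma spl_flip {Q : β → β → Prop} {x y : β × Bool} (h : spl Q x y) : y.2 = !x.2 := by
  rcases h with ⟨_, h2, h3⟩ | ⟨_, h2, h3⟩ <;> rw [h2, h3] <;> rfl

lemma walkEdges_finite {γ : Type} (w : ℕ → γ) (n : ℕ) : (walkEdges w n).Finite := by
  apply Set.Finite.subset ((Set.finite_Iio n).image (fun m => (w m, w (m + 1))))
  rintro ⟨x, y⟩ ⟨i, hi, h1, h2⟩
  exact ⟨i, hi, by simp_all⟩

lemma walkVerts_finite {γ : Type} (w : ℕ → γ) (n : ℕ) : (walkVerts w n).Finite := by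
  apply Set.Finite.subset ((Set.finite_Iic n).image w)
  rintro v ⟨i, hi, h1⟩
  exact ⟨i, hi, h1⟩

lemma reach_refl {γ : Type} {Rel : γ → γ → Prop} (u : γ) : ReachIn Rel Set.univ u u :=
  ⟨fun _ => u, 0, fun i hi => absurd hi (Nat.not_lt_zero i), rfl, rfl, fun _ _ => trivial⟩

lemma reach_extend {γ : Type} {Rel : γ → γ → Prop} {u x y : γ}
    (h : ReachIn Rel Set.univ u x) (hxy : Rel x y) : ReachIn Rel Set.univ u y := by
  obtain ⟨w, n, hw, h0, hn, _⟩ := h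
  refine ⟨fun j => if j ≤ n then w j else y, n + 1, ?_, ?_, ?_, fun _ _ => trivial⟩
  · intro i hi
    dsimp only
    rcases Nat.lt_or_ge i n with h' | h'
    · rw [if_pos (by omega), if_pos (by omega)]
      exact hw i h'
    · have : i = n := by omega
      subst this
      rw [if_pos le_rfl, if_neg (by omega), hn]
      exact hxy
  · dsimp only; rw [if_pos (Nat.zero_le n)]; exact h0
  · dsimp only; rw [if_neg (by omega)]

end Split

section Augment
variable {β : Type}

lemma augment (Q : β → β → Prop) (A B : Set β)
    (hA : ∀ x y, Q x y → y ∉ A) (hB : ∀ x y, Q x y → x ∉ B) (t : ℕ)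
    (hfam : DisjPaths (spl Q) (Aspl A) (Bspl B) t) :
    DisjPaths (spl Q) (Aspl A) (Bspl B) (t + 1) ∨
    ∃ F : Set ((β × Bool) × (β × Bool)), F.Finite ∧ F.ncard ≤ t ∧
      ∀ w n, IsWalkOn (spl Q) w n → w 0 ∈ Aspl A → w n ∈ Bspl B →
        ∃ i < n, (w i, w (i + 1)) ∈ F := by
  classical
  obtain ⟨P, len, hP, hdisj⟩ := hfam
  set E : Set ((β × Bool) × (β × Bool)) := {e | ∃ i, e ∈ walkEdges (P i) (len i)} with hEdef
  have hEintro : ∀ (i : Fin t) (m : ℕ), m < len i → (P i m, P i (m + 1)) ∈ E :=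
    fun i m hm => ⟨i, m, hm, rfl, rfl⟩
  have hEmem : ∀ {x y : β × Bool}, (x, y) ∈ E →
      ∃ (i : Fin t) (m : ℕ), m < len i ∧ P i m = x ∧ P i (m + 1) = y := by
    rintro x y ⟨i, m, hm, h1, h2⟩
    exact ⟨i, m, hm, h1, h2⟩
  have hEfin : E.Finite := by
    have : E = ⋃ i, walkEdges (P i) (len i) := by
      ext e; simp [hEdef, Set.mem_iUnion]
    rw [this]
    exact Set.finite_iUnion (fun i => walkEdges_finite _ _)
  have hEQ : ∀ x y, (x, y) ∈ E → spl Q x y := by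
    intro x y h
    obtain ⟨i, m, hm, h1, h2⟩ := hEmem h
    rw [← h1, ← h2]
    exact (hP i).1.1 m hm
  have hvert : ∀ i j : Fin t, i ≠ j → ∀ m m', m ≤ len i → m' ≤ len j → P i m ≠ P j m' := by
    intro i j hij m m' hm hm' heq
    exact Set.disjoint_left.1 (hdisj i j hij) ⟨m, hm, rfl⟩ ⟨m', hm', heq.symm⟩
  have hPinj : ∀ i : Fin t, ∀ m ≤ len i, ∀ m' ≤ len i, P i m = P i m' → m = m' :=
    fun i => (hP i).1.2
  have hout_unique : ∀ x y y', (x, y) ∈ E → (x, y') ∈ E → y = y' := by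
    intro x y y' h1 h2
    obtain ⟨i, m, hm, hx, hy⟩ := hEmem h1
    obtain ⟨i', m', hm', hx', hy'⟩ := hEmem h2
    by_cases hii : i = i'
    · subst hii
      have := hPinj i m hm.le m' hm'.le (hx.trans hx'.symm)
      subst this
      exact hy.symm.trans hy'
    · exact absurd (hx.trans hx'.symm) (hvert i i' hii m m' hm.le hm'.le)
  have hin_unique : ∀ u u' x, (u, x) ∈ E → (u', x) ∈ E → u = u' := by
    intro u u' x h1 h2
    obtain ⟨i, m, hm, hu, hx⟩ := hEmem h1
    obtain ⟨i', m', hm', hu', hx'⟩ := hEmem h2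
    by_cases hii : i = i'
    · subst hii
      have := hPinj i (m + 1) hm (m' + 1) hm' (hx.trans hx'.symm)
      have : m = m' := by omega
      subst this
      exact hu.symm.trans hu'
    · exact absurd (hx.trans hx'.symm) (hvert i i' hii (m + 1) (m' + 1) hm hm')
  have hlenpos : ∀ i : Fin t, 0 < len i := by
    intro i
    rcases Nat.eq_zero_or_pos (len i) with h | h
    · have h1 := (hP i).2.1.2
      have h2 := (hP i).2.2.2
      rw [h] at h2
      rw [h1] at h2
      exact absurd h2 (by simp)
    · exact h
  have hstart1 : ∀ i : Fin t, P i 1 = ((P i 0).1, true) ∧ (P i 0, P i 1) ∈ E := by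
    intro i
    constructor
    · exact spl_out_false ((hP i).1.1 0 (hlenpos i)) (hP i).2.1.2
    · exact hEintro i 0 (hlenpos i)
  have hE_out_start : ∀ x y, (x, y) ∈ E → (∃ i, x = P i 0) ∨ (∃ u, (u, x) ∈ E) := by
    intro x y h
    obtain ⟨i, m, hm, hx, _⟩ := hEmem h
    rcases Nat.eq_zero_or_pos m with rfl | hm0
    · exact Or.inl ⟨i, hx.symm⟩
    · refine Or.inr ⟨P i (m - 1), ?_⟩
      rw [← hx]
      have := hEintro i (m - 1) (by omega)
      rwa [show m - 1 + 1 = m from by omega] at this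
  have hE_in_end : ∀ u x, (u, x) ∈ E → x ∈ Bspl B ∨ (∃ y, (x, y) ∈ E) := by
    intro u x h
    obtain ⟨i, m, hm, _, hx⟩ := hEmem h
    rcases Nat.eq_or_lt_of_le (Nat.succ_le_of_lt hm) with h' | h'
    · left
      rw [← hx, show m + 1 = len i from h']
      exact (hP i).2.2
    · exact Or.inr ⟨P i (m + 2), by rw [← hx]; exact hEintro i (m + 1) h'⟩
  -- residual digraph
  set Res : (β × Bool) → (β × Bool) → Prop :=
    fun x y => (spl Q x y ∧ (x, y) ∉ E) ∨ (y, x) ∈ E with hResdef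
  set S : Set (β × Bool) := {x | ∃ a ∈ Aspl A, ReachIn Res Set.univ a x} with hSdef
  have hS_A : ∀ a ∈ Aspl A, a ∈ S := fun a ha => ⟨a, ha, reach_refl a⟩
  have hS_ext : ∀ x ∈ S, ∀ y, Res x y → y ∈ S := by
    rintro x ⟨a, ha, hr⟩ y hxy
    exact ⟨a, ha, reach_extend hr hxy⟩
  by_cases hBS : ∃ b, b ∈ Bspl B ∧ b ∈ S
  · -- AUGMENTING CASE
    left
    obtain ⟨b, hbB, a, haA, hreach⟩ := hBS
    obtain ⟨w0, n0, hw0, h00, h0n, _⟩ := hreach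
    obtain ⟨p, np, hp, hp0', hpn', _⟩ := exists_path_of_walk (R := Res) n0 hw0
    have hp0 : p 0 = a := by rw [hp0', h00]
    have hpn : p np = b := by rw [hpn', h0n]
    have hpW : IsWalkOn Res p np := hp.1
    have hpinj : ∀ i ≤ np, ∀ j ≤ np, p i = p j → i = j := hp.2
    have ha2 : (p 0).2 = false := by rw [hp0]; exact haA.2
    have ha1 : (p 0).1 ∈ A := by rw [hp0]; exact haA.1
    have hb2 : (p np).2 = true := by rw [hpn]; exact hbB.2
    have hb1 : (p np).1 ∈ B := by rw [hpn]; exact hbB.1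
    have hnp0 : 0 < np := by
      rcases Nat.eq_zero_or_pos np with h | h
      · rw [h] at hb2; rw [hb2] at ha2; exact absurd ha2 (by simp)
      · exact h
    have hres : ∀ m, m < np →
        (spl Q (p m) (p (m + 1)) ∧ (p m, p (m + 1)) ∉ E) ∨ (p (m + 1), p m) ∈ E :=
      fun m hm => hpW m hm
    set Rem : Set ((β × Bool) × (β × Bool)) :=
      {e | ∃ m, m < np ∧ e.1 = p (m + 1) ∧ e.2 = p m ∧
        ¬(spl Q (p m) (p (m + 1)) ∧ (p m, p (m + 1)) ∉ E)} with hRemdef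
    set Add : Set ((β × Bool) × (β × Bool)) :=
      {e | ∃ m, m < np ∧ e.1 = p m ∧ e.2 = p (m + 1) ∧
        spl Q (p m) (p (m + 1)) ∧ (p m, p (m + 1)) ∉ E} with hAdddef
    set E' : Set ((β × Bool) × (β × Bool)) := (E \ Rem) ∪ Add with hE'def
    have pa1 : ∀ m, 0 < m → m ≤ np → p m ∉ Aspl A := by
      rintro m hm0 hmn ⟨hmem1, hmem2⟩
      have harc := hres (m - 1) (by omega)
      rw [show m - 1 + 1 = m from by omega] at harc
      rcases harc with ⟨hsp, _⟩ | hbw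
      · exact hA _ _ (spl_in_false hsp hmem2).1 hmem1
      · have h1 := spl_out_false (hEQ _ _ hbw) hmem2
        have hmne : m ≠ np := by
          intro h
          rw [h] at hmem2
          rw [hb2] at hmem2
          exact absurd hmem2 (by simp)
        have harc2 := hres m (by omega)
        rcases harc2 with ⟨hsp2, _⟩ | hbw2
        · have h2 := spl_out_false hsp2 hmem2
          have := hpinj (m + 1) (by omega) (m - 1) (by omega) (h2.trans h1.symm)
          omega
        · exact hA _ _ (spl_in_false (hEQ _ _ hbw2) hmem2).1 hmem1
    have pa2 : ∀ m, m < np → p m ∉ Bspl B := by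
      rintro m hm ⟨hmem1, hmem2⟩
      rcases hres m hm with ⟨hsp, _⟩ | hbw
      · exact hB _ _ (spl_out_true hsp hmem2).1 hmem1
      · have h1 := spl_in_true (hEQ _ _ hbw) hmem2
        have hm0 : m ≠ 0 := by
          intro h
          rw [h] at hmem2
          rw [ha2] at hmem2
          exact absurd hmem2 (by simp)
        have harc2 := hres (m - 1) (by omega)
        rw [show m - 1 + 1 = m from by omega] at harc2
        rcases harc2 with ⟨hsp2, _⟩ | hbw2
        · have h2 := spl_in_true hsp2 hmem2
          have := hpinj (m - 1) (by omega) (m + 1) (by omega) (h2.trans h1.symm)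
          omega
        · exact hB _ _ (spl_out_true (hEQ _ _ hbw2) hmem2).1 hmem1
    have mixout : ∀ m, m < np → spl Q (p m) (p (m + 1)) → (p m, p (m + 1)) ∉ E →
        ∀ y', (p m, y') ∈ E → (p m, y') ∉ Rem → y' = p (m + 1) := by
      intro m hm hsp hnE y' hyE hyR
      by_cases hx2 : (p m).2 = false
      · exact (spl_out_false (hEQ _ _ hyE) hx2).trans (spl_out_false hsp hx2).symm
      · have hx2' : (p m).2 = true := by revert hx2; cases (p m).2 <;> simp
        rcases hE_out_start _ _ hyE with ⟨i, hxi⟩ | ⟨u, huE⟩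
        · have hfa := (hP i).2.1.2
          rw [← hxi] at hfa
          rw [hfa] at hx2'
          exact absurd hx2' (by simp)
        · have hu : u = ((p m).1, false) := spl_in_true (hEQ _ _ huE) hx2'
          have hm0 : m ≠ 0 := by
            intro h
            rw [h] at hx2'
            rw [ha2] at hx2'
            exact absurd hx2' (by simp)
          have hnfwd : ¬(spl Q (p (m - 1)) (p m) ∧ (p (m - 1), p m) ∉ E) := by
            rintro ⟨hsp3, hnE3⟩
            have h4 := spl_in_true hsp3 hx2'
            rw [h4, ← hu] at hnE3
            exact hnE3 huE
          have harc := hres (m - 1) (by omega)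
          rw [show m - 1 + 1 = m from by omega] at harc
          rcases harc with hf | hbw3
          · exact absurd hf hnfwd
          · have h5 : p (m - 1) = y' := hout_unique _ _ _ hbw3 hyE
            exfalso
            apply hyR
            refine ⟨m - 1, by omega, ?_, ?_, ?_⟩
            · show p m = p (m - 1 + 1)
              rw [show m - 1 + 1 = m from by omega]
            · exact h5.symm
            · rw [show m - 1 + 1 = m from by omega]
              exact hnfwd
    have mixin : ∀ m, m < np → spl Q (p m) (p (m + 1)) → (p m, p (m + 1)) ∉ E →
        ∀ u', (u', p (m + 1)) ∈ E → (u', p (m + 1)) ∉ Rem → u' = p m := by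
      intro m hm hsp hnE u' huE huR
      by_cases hx2 : (p (m + 1)).2 = true
      · exact (spl_in_true (hEQ _ _ huE) hx2).trans (spl_in_true hsp hx2).symm
      · have hx2' : (p (m + 1)).2 = false := by revert hx2; cases (p (m + 1)).2 <;> simp
        rcases hE_in_end _ _ huE with hxB | ⟨v, hvE⟩
        · rw [hxB.2] at hx2'
          exact absurd hx2' (by simp)
        · have hv : v = ((p (m + 1)).1, true) := spl_out_false (hEQ _ _ hvE) hx2'
          have hmend : m + 1 ≠ np := by
            intro h
            rw [h] at hx2'
            rw [hb2] at hx2'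
            exact absurd hx2' (by simp)
          have hnfwd : ¬(spl Q (p (m + 1)) (p (m + 1 + 1)) ∧ (p (m + 1), p (m + 1 + 1)) ∉ E) := by
            rintro ⟨hsp3, hnE3⟩
            have h4 := spl_out_false hsp3 hx2'
            rw [h4, ← hv] at hnE3
            exact hnE3 hvE
          have hbw3 : (p (m + 1 + 1), p (m + 1)) ∈ E := (hres (m + 1) (by omega)).resolve_left hnfwd
          have h5 : p (m + 1 + 1) = u' := hin_unique _ _ _ hbw3 huE
          exfalso
          apply huR
          exact ⟨m + 1, by omega, h5.symm, rfl, hnfwd⟩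
    have dout' : ∀ x y y', (x, y) ∈ E' → (x, y') ∈ E' → y = y' := by
      rintro x y y' (⟨h1E, h1R⟩ | h1A) (⟨h2E, h2R⟩ | h2A)
      · exact hout_unique _ _ _ h1E h2E
      · obtain ⟨m, hm, he1, he2, hsp, hnE⟩ := h2A
        dsimp only at he1 he2
        rw [he1] at h1E h1R
        rw [he2]
        exact mixout m hm hsp hnE y h1E h1R
      · obtain ⟨m, hm, he1, he2, hsp, hnE⟩ := h1A
        dsimp only at he1 he2
        rw [he1] at h2E h2R
        rw [he2]
        exact (mixout m hm hsp hnE y' h2E h2R).symm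
      · obtain ⟨m, hm, he1, he2, _, _⟩ := h1A
        obtain ⟨m', hm', he1', he2', _, _⟩ := h2A
        dsimp only at he1 he2 he1' he2'
        have : m = m' := hpinj m (by omega) m' (by omega) (he1.symm.trans he1')
        rw [he2, he2', this]
    have din' : ∀ u u' x, (u, x) ∈ E' → (u', x) ∈ E' → u = u' := by
      rintro u u' x (⟨h1E, h1R⟩ | h1A) (⟨h2E, h2R⟩ | h2A)
      · exact hin_unique _ _ _ h1E h2E
      · obtain ⟨m, hm, he1, he2, hsp, hnE⟩ := h2A
        dsimp only at he1 he2
        rw [he2] at h1E h1R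
        rw [he1]
        exact mixin m hm hsp hnE u h1E h1R
      · obtain ⟨m, hm, he1, he2, hsp, hnE⟩ := h1A
        dsimp only at he1 he2
        rw [he2] at h2E h2R
        rw [he1]
        exact (mixin m hm hsp hnE u' h2E h2R).symm
      · obtain ⟨m, hm, he1, he2, _, _⟩ := h1A
        obtain ⟨m', hm', he1', he2', _, _⟩ := h2A
        dsimp only at he1 he2 he1' he2'
        have : m + 1 = m' + 1 := hpinj (m + 1) (by omega) (m' + 1) (by omega) (he2.symm.trans he2')
        have : m = m' := by omega
        rw [he1, he1', this]
    have econ' : ∀ x, (∃ u, (u, x) ∈ E') → (∃ y, (x, y) ∈ E') ∨ x ∈ Bspl B := by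
      rintro x ⟨u, (⟨huE, huR⟩ | hAdd)⟩
      · rcases hE_in_end _ _ huE with hxB | ⟨v, hvE⟩
        · exact Or.inr hxB
        · by_cases hvR : (x, v) ∈ Rem
          · obtain ⟨m, hm, he1, he2, hnfwd⟩ := hvR
            dsimp only at he1 he2
            by_cases hend : m + 1 = np
            · right
              rw [he1, hend, hpn]
              exact hbB
            · by_cases hf : spl Q (p (m + 1)) (p (m + 1 + 1)) ∧ (p (m + 1), p (m + 1 + 1)) ∉ E
              · left
                exact ⟨p (m + 1 + 1), Or.inr ⟨m + 1, by omega, he1, rfl, hf.1, hf.2⟩⟩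
              · have hbw2 : (p (m + 1 + 1), p (m + 1)) ∈ E :=
                  (hres (m + 1) (by omega)).resolve_left hf
                exfalso
                apply huR
                rw [he1] at huE
                have h5 : p (m + 1 + 1) = u := hin_unique _ _ _ hbw2 huE
                exact ⟨m + 1, by omega, h5.symm, he1, hf⟩
          · exact Or.inl ⟨v, Or.inl ⟨hvE, hvR⟩⟩
      · obtain ⟨m, hm, he1, he2, hsp, hnE⟩ := hAdd
        dsimp only at he1 he2
        by_cases hend : m + 1 = np
        · right
          rw [he2, hend, hpn]
          exact hbB
        · by_cases hf : spl Q (p (m + 1)) (p (m + 1 + 1)) ∧ (p (m + 1), p (m + 1 + 1)) ∉ E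
          · left
            exact ⟨p (m + 1 + 1), Or.inr ⟨m + 1, by omega, he2, rfl, hf.1, hf.2⟩⟩
          · have hbw2 : (p (m + 1 + 1), p (m + 1)) ∈ E :=
              (hres (m + 1) (by omega)).resolve_left hf
            rcases hE_in_end _ _ hbw2 with hxB | ⟨v, hvE⟩
            · right
              rw [he2]
              exact hxB
            · left
              refine ⟨v, Or.inl ⟨by rw [he2]; exact hvE, ?_⟩⟩
              rintro ⟨m', hm', he1', he2', hnf'⟩
              dsimp only at he1' he2'
              have hmm : m' + 1 = m + 1 :=
                hpinj (m' + 1) (by omega) (m + 1) (by omega) (by rw [← he1', he2])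
              have hmm' : m' = m := by omega
              rw [hmm'] at hnf'
              exact hnf' ⟨hsp, hnE⟩
    have hE'Q : ∀ x y, (x, y) ∈ E' → spl Q x y := by
      rintro x y (⟨hE1, _⟩ | ⟨m, hm, he1, he2, hsp, _⟩)
      · exact hEQ _ _ hE1
      · dsimp only at he1 he2
        rw [he1, he2]
        exact hsp
    have hE'fin : E'.Finite := by
      apply Set.Finite.union hEfin.diff
      apply Set.Finite.subset (walkEdges_finite p np)
      rintro ⟨x, y⟩ ⟨m, hm, he1, he2, _, _⟩
      exact ⟨m, hm, he1.symm, he2.symm⟩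
    have hAnoin : ∀ x ∈ Aspl A, ∀ u, (u, x) ∈ E' → False := by
      rintro x hxA u hu
      exact hA _ _ (spl_in_false (hE'Q u x hu) hxA.2).1 hxA.1
    have hstartE' : ∀ i : Fin t, (P i 0, P i 1) ∈ E' := by
      intro i
      refine Or.inl ⟨(hstart1 i).2, ?_⟩
      rintro ⟨m, hm, he1, he2, _⟩
      dsimp only at he1
      have : p (m + 1) ∈ Aspl A := by rw [← he1]; exact (hP i).2.1
      exact pa1 (m + 1) (by omega) (by omega) this
    have hp0fwd : spl Q (p 0) (p 1) ∧ (p 0, p 1) ∉ E := by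
      rcases hres 0 hnp0 with h | hbw
      · exact h
      · exact absurd ha1 (hA _ _ (spl_in_false (hEQ _ _ hbw) ha2).1)
    have hp0notP : ∀ i : Fin t, p 0 ≠ P i 0 := by
      intro i h
      have h1 : p 1 = ((p 0).1, true) := spl_out_false hp0fwd.1 ha2
      have h2 : p 1 = P i 1 := by rw [h1, (hstart1 i).1, h]
      exact hp0fwd.2 (by rw [h, h2]; exact (hstart1 i).2)
    set src : Fin (t + 1) → β × Bool :=
      fun i => if h : (i : ℕ) < t then P ⟨i, h⟩ 0 else p 0 with hsrc
    have srcA : ∀ i, src i ∈ Aspl A := by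
      intro i
      rw [hsrc]
      dsimp only
      split
      · exact (hP _).2.1
      · rw [hp0]; exact haA
    have srcout : ∀ i, ∃ y, (src i, y) ∈ E' := by
      intro i
      rw [hsrc]
      dsimp only
      split
      · exact ⟨P _ 1, hstartE' _⟩
      · exact ⟨p 1, Or.inr ⟨0, hnp0, rfl, rfl, hp0fwd.1, hp0fwd.2⟩⟩
    have srcnotin : ∀ i, ¬ ∃ u, (u, src i) ∈ E' := by
      rintro i ⟨u, hu⟩
      exact hAnoin _ (srcA i) u hu
    have srcdist : ∀ i j : Fin (t + 1), i ≠ j → src i ≠ src j := by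
      intro i j hij
      rw [hsrc]
      dsimp only
      split <;> split
      · intro h
        refine hvert _ _ ?_ 0 0 (Nat.zero_le _) (Nat.zero_le _) h
        intro hc
        have : (i : ℕ) = (j : ℕ) := by simpa using hc
        exact hij (Fin.ext this)
      · intro h
        exact hp0notP _ h.symm
      · intro h
        exact hp0notP _ h
      · exfalso
        apply hij
        apply Fin.ext
        omega
    have hfol : ∀ i : Fin (t + 1), ∃ q m, IsPathOn (fun x y => (x, y) ∈ E') q m ∧
        q 0 = src i ∧ q m ∈ Bspl B :=
      fun i => follow_lemma E' hE'fin (Bspl B) dout' din' econ' (src i) (srcout i) (srcnotin i)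
    choose q mf hq hq0 hqB using hfol
    refine ⟨q, mf, fun i => ⟨⟨fun j hj => hE'Q _ _ ((hq i).1 j hj), (hq i).2⟩, ?_, hqB i⟩, ?_⟩
    · rw [hq0 i]; exact srcA i
    · intro i j hij
      apply follow_disjoint din' (hq i) (hq j)
      · rw [hq0 i]; exact srcnotin i
      · rw [hq0 j]; exact srcnotin j
      · rw [hq0 i, hq0 j]; exact srcdist i j hij
  · -- CUT CASE
    right
    push_neg at hBS
    refine ⟨{e | e ∈ E ∧ e.1 ∈ S ∧ e.2 ∉ S}, hEfin.subset (fun e he => he.1), ?_, ?_⟩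
    · -- cardinality
      have hback : ∀ (i : Fin t) m, m < len i → P i (m + 1) ∈ S → P i m ∈ S :=
        fun i m hm h => hS_ext _ h _ (Or.inr (hEintro i m hm))
      have hdown : ∀ (i : Fin t) (d m : ℕ), m + d ≤ len i → P i (m + d) ∈ S → P i m ∈ S := by
        intro i d
        induction d with
        | zero => intro m _ h; exact h
        | succ d IH =>
          intro m hmd h
          have := hback i (m + d) (by omega) (by rwa [show m + d + 1 = m + (d+1) from by omega])
          exact IH m (by omega) this
      have hcrossuniq : ∀ (i : Fin t) m m', m < len i → m' < len i →
          P i m ∈ S → P i (m + 1) ∉ S → P i m' ∈ S → P i (m' + 1) ∉ S → m = m' := by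
        intro i m m' hm hm' h1 h2 h3 h4
        by_contra hne
        rcases Nat.lt_or_ge m m' with h | h
        · have := hdown i (m' - (m + 1)) (m + 1)
            (by omega) (by rwa [show m + 1 + (m' - (m+1)) = m' from by omega])
          exact h2 this
        · have hlt : m' < m := by omega
          have := hdown i (m - (m' + 1)) (m' + 1)
            (by omega) (by rwa [show m' + 1 + (m - (m'+1)) = m from by omega])
          exact h4 this
      set F : Set ((β × Bool) × (β × Bool)) := {e | e ∈ E ∧ e.1 ∈ S ∧ e.2 ∉ S} with hFdef
      have hFfin : F.Finite := hEfin.subset (fun e he => he.1)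
      have : Finite ↥F := hFfin
      have hchoice : ∀ e : ↥F, ∃ i : Fin t, (e : (β × Bool) × (β × Bool)) ∈ walkEdges (P i) (len i) :=
        fun e => e.2.1
      have hfinj : Function.Injective (fun e : ↥F => Classical.choose (hchoice e)) := by
        intro e e' hff
        simp only at hff
        have hsp := Classical.choose_spec (hchoice e)
        have hsp' := Classical.choose_spec (hchoice e')
        rw [← hff] at hsp'
        obtain ⟨m, hm, he1, he2⟩ := hsp
        obtain ⟨m', hm', he1', he2'⟩ := hsp'
        have hmm : m = m' := by
          apply hcrossuniq _ m m' hm hm'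
          · rw [he1]; exact e.2.2.1
          · rw [he2]; exact e.2.2.2
          · rw [he1']; exact e'.2.2.1
          · rw [he2']; exact e'.2.2.2
        apply Subtype.ext
        have hfst : (↑e : (β × Bool) × (β × Bool)).1 = (↑e' : (β × Bool) × (β × Bool)).1 := by
          rw [← he1, ← he1', hmm]
        have hsnd : (↑e : (β × Bool) × (β × Bool)).2 = (↑e' : (β × Bool) × (β × Bool)).2 := by
          rw [← he2, ← he2', hmm]
        exact Prod.ext hfst hsnd
      calc F.ncard = Nat.card ↥F := (Nat.card_coe_set_eq F).symm
        _ ≤ Nat.card (Fin t) := Nat.card_le_card_of_injective _ hfinj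
        _ = t := by simp
    · -- cut property
      intro w n hw h0 hn
      have hw0S : w 0 ∈ S := hS_A _ h0
      have hwnS : w n ∉ S := hBS _ hn
      have hcross : ∀ (nn : ℕ) (w : ℕ → β × Bool), w 0 ∈ S → w nn ∉ S →
          ∃ i < nn, w i ∈ S ∧ w (i + 1) ∉ S := by
        intro nn
        induction nn with
        | zero => intro w h1 h2; exact absurd h1 h2
        | succ n' IH =>
          intro w h1 h2
          by_cases h3 : w n' ∈ S
          · exact ⟨n', Nat.lt_succ_self n', h3, h2⟩
          · obtain ⟨i, hi, h4, h5⟩ := IH w h1 h3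
            exact ⟨i, by omega, h4, h5⟩
      obtain ⟨i, hi, h4, h5⟩ := hcross n w hw0S hwnS
      refine ⟨i, hi, ?_, h4, h5⟩
      by_contra hne
      exact h5 (hS_ext _ h4 _ (Or.inl ⟨hw i hi, hne⟩))

end Augment

section MengerMain
variable {β : Type}

lemma pair_eq_of_snd {γ : Type} {x : γ × Bool} {b : Bool} (h : x.2 = b) : x = (x.1, b) := by
  obtain ⟨x1, x2⟩ := x
  cases h
  rfl

lemma menger_split (Q : β → β → Prop) (A B : Set β)
    (hA : ∀ x y, Q x y → y ∉ A) (hB : ∀ x y, Q x y → x ∉ B) :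
    ∀ s : ℕ, DisjPaths (spl Q) (Aspl A) (Bspl B) s ∨
      ∃ F : Set ((β × Bool) × (β × Bool)), F.Finite ∧ F.ncard < s ∧
        ∀ w n, IsWalkOn (spl Q) w n → w 0 ∈ Aspl A → w n ∈ Bspl B →
          ∃ i < n, (w i, w (i + 1)) ∈ F := by
  intro s
  induction s with
  | zero =>
    left
    exact ⟨fun i => i.elim0, fun i => i.elim0, fun i => i.elim0, fun i => i.elim0⟩
  | succ t IH =>
    rcases IH with hfam | ⟨F, h1, h2, h3⟩
    · rcases augment Q A B hA hB t hfam with h | ⟨F, h1, h2, h3⟩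
      · exact Or.inl h
      · exact Or.inr ⟨F, h1, by omega, h3⟩
    · exact Or.inr ⟨F, h1, by omega, h3⟩

lemma spl_parity {Q : β → β → Prop} {p : ℕ → β × Bool} {n : ℕ}
    (hw : IsWalkOn (spl Q) p n) (h0 : (p 0).2 = false) :
    ∀ j ≤ n, (p j).2 = decide (j % 2 = 1) := by
  intro j
  induction j with
  | zero => intro _; simpa using h0
  | succ j IH =>
    intro hj
    have h1 := spl_flip (hw j (by omega))
    rw [h1, IH (by omega)]
    rcases Nat.even_or_odd j with ⟨c, hc⟩ | ⟨c, hc⟩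
    · rw [decide_eq_false (by omega : ¬ j % 2 = 1), decide_eq_true (by omega : (j+1) % 2 = 1)]
      rfl
    · rw [decide_eq_true (by omega : j % 2 = 1), decide_eq_false (by omega : ¬ (j+1) % 2 = 1)]
      rfl

theorem menger (Q : β → β → Prop) (A B : Set β)
    (hA : ∀ x y, Q x y → y ∉ A) (hB : ∀ x y, Q x y → x ∉ B) (s : ℕ) :
    (∃ (P : Fin s → ℕ → β) (len : Fin s → ℕ),
      (∀ i, IsPathOn Q (P i) (len i) ∧ P i 0 ∈ A ∧ P i (len i) ∈ B) ∧
      ∀ i j, i ≠ j → Disjoint (walkVerts (P i) (len i)) (walkVerts (P j) (len j))) ∨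
    (∃ Y : Set β, Y.Finite ∧ Y.ncard < s ∧
      ∀ w n, IsWalkOn Q w n → w 0 ∈ A → w n ∈ B → ∃ i ≤ n, w i ∈ Y) := by
  rcases menger_split Q A B hA hB s with ⟨P', len', hP', hdisj'⟩ | ⟨F, hF1, hF2, hF3⟩
  · -- collapse the split paths
    left
    have hpar : ∀ i : Fin s, ∀ j ≤ len' i, (P' i j).2 = decide (j % 2 = 1) :=
      fun i => spl_parity (hP' i).1.1 (hP' i).2.1.2
    have hodd : ∀ i : Fin s, len' i % 2 = 1 := by
      intro i
      have h1 := (hP' i).2.2.2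
      rw [hpar i (len' i) le_rfl] at h1
      by_contra h
      rw [decide_eq_false (by omega : ¬ len' i % 2 = 1)] at h1
      exact absurd h1 (by simp)
    have heven : ∀ i : Fin s, ∀ j, j % 2 = 0 → j < len' i → P' i (j + 1) = ((P' i j).1, true) := by
      intro i j hj hjn
      apply spl_out_false ((hP' i).1.1 j hjn)
      rw [hpar i j (by omega), decide_eq_false (by omega : ¬ j % 2 = 1)]
    refine ⟨fun i j => (P' i (2 * j)).1, fun i => len' i / 2, fun i => ⟨⟨?_, ?_⟩, ?_, ?_⟩, ?_⟩
    · -- walk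
      intro j hj
      dsimp only at hj ⊢
      have h2j : 2 * j + 1 < len' i := by omega
      have h1 := heven i (2 * j) (by omega) (by omega)
      have h2 := spl_out_true ((hP' i).1.1 (2 * j + 1) h2j)
        (by rw [hpar i (2 * j + 1) (by omega), decide_eq_true (by omega : (2*j+1) % 2 = 1)])
      have h3 : (P' i (2 * j + 1)).1 = (P' i (2 * j)).1 := by rw [h1]
      rw [← h3]
      have h4 : 2 * (j + 1) = 2 * j + 1 + 1 := by omega
      rw [h4]
      exact h2.1
    · -- injective
      intro j hj j' hj' hjj
      dsimp only at hj hj' hjj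
      have e1 : P' i (2 * j) = ((P' i (2 * j)).1, false) :=
        pair_eq_of_snd (by rw [hpar i (2 * j) (by omega)]; exact decide_eq_false (by omega))
      have e2 : P' i (2 * j') = ((P' i (2 * j')).1, false) :=
        pair_eq_of_snd (by rw [hpar i (2 * j') (by omega)]; exact decide_eq_false (by omega))
      have h5 : P' i (2 * j) = P' i (2 * j') := by rw [e1, e2, hjj]
      have := (hP' i).1.2 (2 * j) (by omega) (2 * j') (by omega) h5
      omega
    · -- start
      dsimp only
      exact (hP' i).2.1.1
    · -- end in B
      dsimp only
      have h1 : len' i = 2 * (len' i / 2) + 1 := by have := hodd i; omega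
      have h2 := heven i (2 * (len' i / 2)) (by omega) (by omega)
      have h3 := (hP' i).2.2.1
      rw [h1] at h3
      rw [h2] at h3
      exact h3
    · -- disjoint
      intro i j hij
      rw [Set.disjoint_left]
      rintro v ⟨m, hm, hv⟩ ⟨m', hm', hmm⟩
      dsimp only at hv hmm hm hm'
      have h1 : P' i (2 * m) ∈ walkVerts (P' i) (len' i) := ⟨2 * m, by omega, rfl⟩
      have e1 : P' i (2 * m) = ((P' i (2 * m)).1, false) :=
        pair_eq_of_snd (by rw [hpar i (2 * m) (by omega)]; exact decide_eq_false (by omega))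
      have e2 : P' j (2 * m') = ((P' j (2 * m')).1, false) :=
        pair_eq_of_snd (by rw [hpar j (2 * m') (by omega)]; exact decide_eq_false (by omega))
      apply Set.disjoint_left.1 (hdisj' i j hij) h1
      have h6 : P' i (2 * m) = P' j (2 * m') := by rw [e1, e2, hv, hmm]
      rw [h6]
      exact ⟨2 * m', by omega, rfl⟩
  · -- convert arc cut to vertex cut
    right
    refine ⟨(fun e => e.2.1) '' F, hF1.image _, lt_of_le_of_lt (Set.ncard_image_le hF1) hF2, ?_⟩
    intro w n hw h0 hn
    set wq : ℕ → β × Bool := fun j => (w (j / 2), decide (j % 2 = 1)) with hwq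
    have hwqwalk : IsWalkOn (spl Q) wq (2 * n + 1) := by
      intro j hj
      rcases Nat.even_or_odd j with ⟨c, hc⟩ | ⟨c, hc⟩
      · left
        refine ⟨?_, ?_, ?_⟩
        · show w ((j + 1) / 2) = w (j / 2)
          congr 1
          omega
        · show decide (j % 2 = 1) = false
          exact decide_eq_false (by omega)
        · show decide ((j + 1) % 2 = 1) = true
          exact decide_eq_true (by omega)
      · right
        refine ⟨?_, ?_, ?_⟩
        · show Q (w (j / 2)) (w ((j + 1) / 2))
          have : (j + 1) / 2 = j / 2 + 1 := by omega
          rw [this]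
          exact hw (j / 2) (by omega)
        · show decide (j % 2 = 1) = true
          exact decide_eq_true (by omega)
        · show decide ((j + 1) % 2 = 1) = false
          exact decide_eq_false (by omega)
    have h0' : wq 0 ∈ Aspl A := by
      refine ⟨?_, ?_⟩
      · show w (0 / 2) ∈ A
        simpa using h0
      · show decide (0 % 2 = 1) = false
        exact decide_eq_false (by omega)
    have hn' : wq (2 * n + 1) ∈ Bspl B := by
      refine ⟨?_, ?_⟩
      · show w ((2 * n + 1) / 2) ∈ B
        have : (2 * n + 1) / 2 = n := by omega
        rw [this]
        exact hn
      · show decide ((2 * n + 1) % 2 = 1) = true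
        exact decide_eq_true (by omega)
    obtain ⟨j, hj, hjF⟩ := hF3 wq (2 * n + 1) hwqwalk h0' hn'
    exact ⟨(j + 1) / 2, by omega, ⟨(wq j, wq (j + 1)), hjF, rfl⟩⟩

end MengerMain

section Greedy
open Classical in
lemma greedy_indep {ι : Type} (Conf : ι → ι → Prop) (hsym : ∀ i j, Conf i j → Conf j i) :
    ∀ (N : ℕ) (I : Finset ι), I.card ≤ N →
    (∀ i ∈ I, ∀ T ⊆ I, (∀ j ∈ T, Conf i j ∧ j ≠ i) → T.card ≤ 2) →
    ∃ J ⊆ I, I.card ≤ 3 * J.card ∧ ∀ i ∈ J, ∀ j ∈ J, i ≠ j → ¬ Conf i j := by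
  intro N
  induction N with
  | zero =>
    intro I hI _
    refine ⟨∅, Finset.empty_subset I, ?_, ?_⟩
    · simpa using hI
    · intro i hi
      exact absurd hi (Finset.notMem_empty i)
  | succ N IH =>
    intro I hI hdeg
    rcases I.eq_empty_or_nonempty with rfl | ⟨i, hi⟩
    · exact ⟨∅, by simp, by simp, fun i hi => absurd hi (Finset.notMem_empty i)⟩
    · set I' := (I.erase i).filter (fun j => ¬ Conf i j) with hI'def
      have hsub : I' ⊆ I := (Finset.filter_subset _ _).trans (Finset.erase_subset _ _)
      have hcard1 : I.card ≤ I'.card + 3 := by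
        have h1 : (I.erase i).card = I.card - 1 := Finset.card_erase_of_mem hi
        have h2 := Finset.card_filter_add_card_filter_not
          (s := I.erase i) (p := fun j => Conf i j)
        have h5 : ((I.erase i).filter (fun j => Conf i j)).card ≤ 2 := by
          apply hdeg i hi _ ((Finset.filter_subset _ _).trans (Finset.erase_subset _ _))
          intro j hj
          rw [Finset.mem_filter, Finset.mem_erase] at hj
          exact ⟨hj.2, hj.1.1⟩
        have h6 : ((I.erase i).filter (fun j => ¬ Conf i j)).card = I'.card := rfl
        have h7 : 1 ≤ I.card := Finset.card_pos.2 ⟨i, hi⟩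
        omega
      have hc : I'.card ≤ N := by
        have h1 : I' ⊆ I.erase i := Finset.filter_subset _ _
        have h2 : (I.erase i).card = I.card - 1 := Finset.card_erase_of_mem hi
        have h7 : 1 ≤ I.card := Finset.card_pos.2 ⟨i, hi⟩
        have h8 := Finset.card_le_card h1
        omega
      have hdeg' : ∀ a ∈ I', ∀ T ⊆ I', (∀ j ∈ T, Conf a j ∧ j ≠ a) → T.card ≤ 2 :=
        fun a ha T hT hTp => hdeg a (hsub ha) T (hT.trans hsub) hTp
      obtain ⟨J', hJ'sub, hJ'card, hJ'good⟩ := IH I' hc hdeg'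
      have hnotmem : i ∉ J' := by
        intro h
        have := hJ'sub h
        rw [hI'def, Finset.mem_filter, Finset.mem_erase] at this
        exact this.1.1 rfl
      refine ⟨insert i J', ?_, ?_, ?_⟩
      · intro x hx
        rcases Finset.mem_insert.1 hx with rfl | hx
        · exact hi
        · exact hsub (hJ'sub hx)
      · rw [Finset.card_insert_of_notMem hnotmem]
        omega
      · intro a ha b hb hab
        rcases Finset.mem_insert.1 ha with ha1 | ha2
        · rcases Finset.mem_insert.1 hb with hb1 | hb2
          · exact absurd (ha1.trans hb1.symm) hab
          · rw [ha1]
            have := hJ'sub hb2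
            rw [hI'def, Finset.mem_filter] at this
            exact this.2
        · rcases Finset.mem_insert.1 hb with hb1 | hb2
          · intro hc'
            have := hJ'sub ha2
            rw [hI'def, Finset.mem_filter] at this
            exact this.2 (hsym a i (hb1 ▸ hc'))
          · exact hJ'good a ha2 b hb2 hab
end Greedy


/-- Either a half-integral packing of k directed odd cycles, or a
half-integral packing of k directed odd X-paths with pairwise distinct endpoints,
or a set of at most 4k−1 vertices meeting all directed odd X-walks. -/
theorem odd_X_walk_trichotomy (R : V → V → Prop) (X : Set V) (k : ℕ) (hk : 0 < k) :
    (∃ (c : Fin k → ℕ → V) (len : Fin k → ℕ),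
       (∀ i, IsCycleOn R (c i) (len i) ∧ Odd (len i)) ∧
       ∀ v, {i | v ∈ walkVerts (c i) (len i)}.ncard ≤ 2) ∨
    (∃ (p : Fin k → ℕ → V) (len : Fin k → ℕ),
       (∀ i, IsPathOn R (p i) (len i) ∧ IsXWalk R X (p i) (len i) ∧ Odd (len i)) ∧
       (∀ v, {i | v ∈ walkVerts (p i) (len i)}.ncard ≤ 2) ∧
       (∀ i j, i ≠ j →
         ({p i 0, p i (len i)} ∩ {p j 0, p j (len j)} : Set V) = ∅)) ∨
    (∃ Y : Set V, Y.Finite ∧ Y.ncard ≤ 4 * k - 1 ∧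
       ∀ (w : ℕ → V) (n : ℕ), IsXWalk R X w n → Odd n → ∃ i ≤ n, w i ∈ Y) := by
  classical
  set Q : (V × Bool) → (V × Bool) → Prop := fun x y =>
    R x.1 y.1 ∧ y.2 = !x.2 ∧ ¬(y.1 ∈ X ∧ y.2 = false) ∧ ¬(x.1 ∈ X ∧ x.2 = true) with hQdef
  set A : Set (V × Bool) := {x | x.1 ∈ X ∧ x.2 = false} with hAdef
  set B : Set (V × Bool) := {x | x.1 ∈ X ∧ x.2 = true} with hBdef
  have hAcond : ∀ x y, Q x y → y ∉ A := fun x y hq hy => hq.2.2.1 hy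
  have hBcond : ∀ x y, Q x y → x ∉ B := fun x y hq hx => hq.2.2.2 hx
  rcases menger Q A B hAcond hBcond (4 * k) with ⟨P', len', hP', hdisj'⟩ | ⟨Y0, hY1, hY2, hY3⟩
  · -- a family of 4k disjoint paths in the parity digraph
    set q : Fin (4 * k) → ℕ → V := fun i j => (P' i j).1 with hqdef
    have hpar : ∀ i : Fin (4 * k), ∀ j ≤ len' i, (P' i j).2 = decide (j % 2 = 1) := by
      intro i j
      induction j with
      | zero =>
        intro _
        rw [decide_eq_false (by omega : ¬ (0 % 2 = 1))]
        exact (hP' i).2.1.2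
      | succ j IH =>
        intro hj
        have h1 := ((hP' i).1.1 j (by omega)).2.1
        rw [h1, IH (by omega)]
        rcases Nat.even_or_odd j with ⟨c, hc⟩ | ⟨c, hc⟩
        · rw [decide_eq_false (by omega : ¬ j % 2 = 1),
            decide_eq_true (by omega : (j + 1) % 2 = 1)]
          rfl
        · rw [decide_eq_true (by omega : j % 2 = 1),
            decide_eq_false (by omega : ¬ (j + 1) % 2 = 1)]
          rfl
    have hoddn : ∀ i : Fin (4 * k), Odd (len' i) := by
      intro i
      have h1 := (hP' i).2.2.2
      rw [hpar i (len' i) le_rfl] at h1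
      rcases Nat.even_or_odd (len' i) with ⟨c, hc⟩ | ho
      · rw [decide_eq_false (by omega : ¬ len' i % 2 = 1)] at h1
        exact absurd h1 (by simp)
      · exact ho
    have hXwalk : ∀ i, IsXWalk R X (q i) (len' i) := by
      intro i
      refine ⟨fun j hj => ((hP' i).1.1 j hj).1, (hP' i).2.1.1, (hP' i).2.2.1, ?_⟩
      intro j hj0 hjn hjX
      rcases Bool.eq_false_or_eq_true (P' i j).2 with hb | hb
      · exact ((hP' i).1.1 j hjn).2.2.2 ⟨hjX, hb⟩
      · have harc := (hP' i).1.1 (j - 1) (by omega)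
        rw [show j - 1 + 1 = j from by omega] at harc
        exact harc.2.2.1 ⟨hjX, hb⟩
    have hvertuse : ∀ (v : V) (i : Fin (4 * k)), v ∈ walkVerts (q i) (len' i) →
        ∃ b, (v, b) ∈ walkVerts (P' i) (len' i) := by
      rintro v i ⟨j, hj, hv⟩
      refine ⟨(P' i j).2, j, hj, ?_⟩
      rw [← hv]
    have hHI : ∀ v : V, ({i : Fin (4 * k) | v ∈ walkVerts (q i) (len' i)}).ncard ≤ 2 := by
      intro v
      have hmap : ∀ i ∈ {i : Fin (4 * k) | v ∈ walkVerts (q i) (len' i)},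
          (fun i => if h : v ∈ walkVerts (q i) (len' i)
            then Classical.choose (hvertuse v i h) else true) i ∈ (Set.univ : Set Bool) :=
        fun _ _ => trivial
      have hinj : Set.InjOn (fun i => if h : v ∈ walkVerts (q i) (len' i)
          then Classical.choose (hvertuse v i h) else true)
          {i : Fin (4 * k) | v ∈ walkVerts (q i) (len' i)} := by
        intro i hi i' hi' hff
        dsimp only at hff
        have hi2 : v ∈ walkVerts (q i) (len' i) := hi
        have hi2' : v ∈ walkVerts (q i') (len' i') := hi'
        rw [dif_pos hi2, dif_pos hi2'] at hff
        by_contra hne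
        have h1 := Classical.choose_spec (hvertuse v i hi)
        have h2 := Classical.choose_spec (hvertuse v i' hi')
        rw [hff] at h1
        exact Set.disjoint_left.1 (hdisj' i i' hne) h1 h2
      have := Set.ncard_le_ncard_of_injOn _ hmap hinj Set.finite_univ
      simpa [Set.ncard_univ] using this
    have hstartdist : ∀ i i' : Fin (4 * k), i ≠ i' → q i 0 ≠ q i' 0 := by
      intro i i' hne h
      have h1 : P' i 0 ∈ walkVerts (P' i) (len' i) := ⟨0, Nat.zero_le _, rfl⟩
      apply Set.disjoint_left.1 (hdisj' i i' hne) h1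
      refine ⟨0, Nat.zero_le _, ?_⟩
      have e1 : P' i 0 = (q i 0, false) := pair_eq_of_snd (hP' i).2.1.2
      have e2 : P' i' 0 = (q i' 0, false) := pair_eq_of_snd (hP' i').2.1.2
      rw [e1, e2, h]
    have henddist : ∀ i i' : Fin (4 * k), i ≠ i' → q i (len' i) ≠ q i' (len' i') := by
      intro i i' hne h
      have h1 : P' i (len' i) ∈ walkVerts (P' i) (len' i) := ⟨len' i, le_rfl, rfl⟩
      apply Set.disjoint_left.1 (hdisj' i i' hne) h1
      refine ⟨len' i', le_rfl, ?_⟩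
      have e1 : P' i (len' i) = (q i (len' i), true) := pair_eq_of_snd (hP' i).2.2.2
      have e2 : P' i' (len' i') = (q i' (len' i'), true) := pair_eq_of_snd (hP' i').2.2.2
      rw [e1, e2, h]
    have hext : ∀ i : Fin (4 * k),
        (∃ c m, IsCycleOn R c m ∧ Odd m ∧ walkVerts c m ⊆ walkVerts (q i) (len' i)) ∨
        (∃ p m, IsPathOn R p m ∧ IsXWalk R X p m ∧ Odd m ∧
          walkVerts p m ⊆ walkVerts (q i) (len' i) ∧ p 0 = q i 0 ∧ p m = q i (len' i)) :=
      fun i => extract_from_odd_X_walk (len' i) (hXwalk i) (hoddn i)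
    set Ic : Finset (Fin (4 * k)) := Finset.univ.filter (fun i =>
      ∃ c m, IsCycleOn R c m ∧ Odd m ∧ walkVerts c m ⊆ walkVerts (q i) (len' i)) with hIcdef
    by_cases hkc : k ≤ Ic.card
    · -- k half-integrally packed odd cycles
      left
      obtain ⟨J, hJsub, hJcard⟩ := Finset.exists_subset_card_eq (s := Ic) (n := k) hkc
      set σ : Fin k → Fin (4 * k) :=
        fun j => (J.equivFin.symm (Fin.cast hJcard.symm j) : ↥J) with hσdef
      have hσinj : Function.Injective σ := by
        intro a b hab
        rw [hσdef] at hab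
        dsimp only at hab
        have := Subtype.val_injective hab
        have := J.equivFin.symm.injective this
        exact Fin.ext (by simpa using congrArg Fin.val this)
      have hσmem : ∀ j, σ j ∈ Ic := fun j => hJsub (J.equivFin.symm (Fin.cast hJcard.symm j)).2
      have hcyc : ∀ j : Fin k, ∃ c m, IsCycleOn R c m ∧ Odd m ∧
          walkVerts c m ⊆ walkVerts (q (σ j)) (len' (σ j)) := by
        intro j
        have := hσmem j
        rw [hIcdef, Finset.mem_filter] at this
        exact this.2
      choose c m hc1 hc2 hc3 using hcyc
      refine ⟨c, m, fun j => ⟨hc1 j, hc2 j⟩, ?_⟩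
      intro v
      have hsub2 : σ '' {j | v ∈ walkVerts (c j) (m j)} ⊆
          {i | v ∈ walkVerts (q i) (len' i)} := by
        rintro _ ⟨j, hj, rfl⟩
        exact hc3 j hj
      calc {j | v ∈ walkVerts (c j) (m j)}.ncard
          = (σ '' {j | v ∈ walkVerts (c j) (m j)}).ncard :=
            (Set.ncard_image_of_injective _ hσinj).symm
        _ ≤ ({i : Fin (4 * k) | v ∈ walkVerts (q i) (len' i)}).ncard :=
            Set.ncard_le_ncard hsub2 (Set.toFinite _)
        _ ≤ 2 := hHI v
    · -- k half-integrally packed odd X-paths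
      right; left
      set Ip : Finset (Fin (4 * k)) := Finset.univ.filter (fun i =>
        ¬ ∃ c m, IsCycleOn R c m ∧ Odd m ∧ walkVerts c m ⊆ walkVerts (q i) (len' i)) with hIpdef
      have hIpcard : 3 * k + 1 ≤ Ip.card := by
        have h1 := Finset.card_filter_add_card_filter_not
          (s := (Finset.univ : Finset (Fin (4 * k)))) (p := fun i =>
            ∃ c m, IsCycleOn R c m ∧ Odd m ∧ walkVerts c m ⊆ walkVerts (q i) (len' i))
        have h2 : (Finset.univ : Finset (Fin (4 * k))).card = 4 * k := by simp
        have h3 : (Finset.univ.filter (fun i : Fin (4 * k) =>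
          ¬ ∃ c m, IsCycleOn R c m ∧ Odd m ∧ walkVerts c m ⊆ walkVerts (q i) (len' i))).card
            = Ip.card := rfl
        have h4 : (Finset.univ.filter (fun i : Fin (4 * k) =>
          ∃ c m, IsCycleOn R c m ∧ Odd m ∧ walkVerts c m ⊆ walkVerts (q i) (len' i))).card
            = Ic.card := rfl
        omega
      have hpath : ∀ i ∈ Ip, ∃ p mm, IsPathOn R p mm ∧ IsXWalk R X p mm ∧ Odd mm ∧
          walkVerts p mm ⊆ walkVerts (q i) (len' i) ∧ p 0 = q i 0 ∧ p mm = q i (len' i) := by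
        intro i hi
        rw [hIpdef, Finset.mem_filter] at hi
        exact (hext i).resolve_left hi.2
      have hpath' : ∀ i : Fin (4 * k), ∃ p mm,
          (i ∈ Ip → IsPathOn R p mm ∧ IsXWalk R X p mm ∧ Odd mm ∧
            walkVerts p mm ⊆ walkVerts (q i) (len' i) ∧ p 0 = q i 0 ∧ p mm = q i (len' i)) := by
        intro i
        by_cases h : i ∈ Ip
        · obtain ⟨p, mm, hp⟩ := hpath i h
          exact ⟨p, mm, fun _ => hp⟩
        · exact ⟨fun _ => q i 0, 0, fun hmem => absurd hmem h⟩
      choose pth plen hpth using hpath'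
      set Conf : Fin (4 * k) → Fin (4 * k) → Prop :=
        fun i j => q i 0 = q j (len' j) ∨ q i (len' i) = q j 0 with hConfdef
      have hsym : ∀ i j, Conf i j → Conf j i := by
        intro i j h
        rcases h with h | h
        · exact Or.inr h.symm
        · exact Or.inl h.symm
      have hdeg : ∀ i ∈ Ip, ∀ T ⊆ Ip, (∀ j ∈ T, Conf i j ∧ j ≠ i) → T.card ≤ 2 := by
        intro i _ T hTsub hTp
        have hsub : T ⊆
            Ip.filter (fun j => q i 0 = q j (len' j) ∧ j ≠ i) ∪
            Ip.filter (fun j => q i (len' i) = q j 0 ∧ j ≠ i) := by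
          intro j hj
          obtain ⟨hc, hne⟩ := hTp j hj
          rcases hc with h | h
          · exact Finset.mem_union_left _ (Finset.mem_filter.2 ⟨hTsub hj, h, hne⟩)
          · exact Finset.mem_union_right _ (Finset.mem_filter.2 ⟨hTsub hj, h, hne⟩)
        have h1 : (Ip.filter (fun j => q i 0 = q j (len' j) ∧ j ≠ i)).card ≤ 1 := by
          rw [Finset.card_le_one]
          intro a ha b hb
          rw [Finset.mem_filter] at ha hb
          by_contra hab
          exact henddist a b hab (ha.2.1.symm.trans hb.2.1)
        have h2 : (Ip.filter (fun j => q i (len' i) = q j 0 ∧ j ≠ i)).card ≤ 1 := by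
          rw [Finset.card_le_one]
          intro a ha b hb
          rw [Finset.mem_filter] at ha hb
          by_contra hab
          exact hstartdist a b hab (ha.2.1.symm.trans hb.2.1)
        calc T.card
            ≤ _ := Finset.card_le_card hsub
          _ ≤ _ := Finset.card_union_le _ _
          _ ≤ 2 := by omega
      obtain ⟨J, hJsub, hJcard, hJgood⟩ := greedy_indep Conf hsym Ip.card Ip le_rfl hdeg
      have hJk : k ≤ J.card := by omega
      obtain ⟨J2, hJ2sub, hJ2card⟩ := Finset.exists_subset_card_eq (s := J) (n := k) hJk
      set σ : Fin k → Fin (4 * k) :=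
        fun j => (J2.equivFin.symm (Fin.cast hJ2card.symm j) : ↥J2) with hσdef
      have hσinj : Function.Injective σ := by
        intro a b hab
        rw [hσdef] at hab
        dsimp only at hab
        have := Subtype.val_injective hab
        have := J2.equivFin.symm.injective this
        exact Fin.ext (by simpa using congrArg Fin.val this)
      have hσJ : ∀ j, σ j ∈ J2 := fun j => (J2.equivFin.symm (Fin.cast hJ2card.symm j)).2
      have hσIp : ∀ j, σ j ∈ Ip := fun j => hJsub (hJ2sub (hσJ j))
      have hprops := fun j : Fin k => hpth (σ j) (hσIp j)
      refine ⟨fun j => pth (σ j), fun j => plen (σ j),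
        fun j => ⟨(hprops j).1, (hprops j).2.1, (hprops j).2.2.1⟩, ?_, ?_⟩
      · intro v
        dsimp only
        have hsub2 : σ '' {j | v ∈ walkVerts (pth (σ j)) (plen (σ j))} ⊆
            {i | v ∈ walkVerts (q i) (len' i)} := by
          rintro _ ⟨j, hj, rfl⟩
          exact (hprops j).2.2.2.1 hj
        calc {j | v ∈ walkVerts (pth (σ j)) (plen (σ j))}.ncard
            = (σ '' {j | v ∈ walkVerts (pth (σ j)) (plen (σ j))}).ncard :=
              (Set.ncard_image_of_injective _ hσinj).symm
          _ ≤ ({i : Fin (4 * k) | v ∈ walkVerts (q i) (len' i)}).ncard :=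
              Set.ncard_le_ncard hsub2 (Set.toFinite _)
          _ ≤ 2 := hHI v
      · intro i j hij
        have hσne : σ i ≠ σ j := fun h => hij (hσinj h)
        have ei0 := (hprops i).2.2.2.2.1
        have ei1 := (hprops i).2.2.2.2.2
        have ej0 := (hprops j).2.2.2.2.1
        have ej1 := (hprops j).2.2.2.2.2
        have hnc : ¬ Conf (σ i) (σ j) :=
          hJgood (σ i) (hJ2sub (hσJ i)) (σ j) (hJ2sub (hσJ j)) hσne
        have hnc1 : ¬ (q (σ i) 0 = q (σ j) (len' (σ j))) := fun h => hnc (Or.inl h)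
        have hnc2 : ¬ (q (σ i) (len' (σ i)) = q (σ j) 0) := fun h => hnc (Or.inr h)
        apply Set.eq_empty_iff_forall_notMem.2
        rintro v ⟨hv1, hv2⟩
        dsimp only at hv1 hv2
        rw [Set.mem_insert_iff, Set.mem_singleton_iff] at hv1 hv2
        rcases hv1 with hv1 | hv1 <;> rcases hv2 with hv2 | hv2
        · apply hstartdist (σ i) (σ j) hσne
          rw [← ei0, ← ej0]
          exact hv1.symm.trans hv2
        · apply hnc1
          rw [← ei0, ← ej1]
          exact hv1.symm.trans hv2
        · apply hnc2
          rw [← ei1, ← ej0]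
          exact hv1.symm.trans hv2
        · apply henddist (σ i) (σ j) hσne
          rw [← ei1, ← ej1]
          exact hv1.symm.trans hv2
  · -- the cut case
    right; right
    refine ⟨Prod.fst '' Y0, hY1.image _, ?_, ?_⟩
    · have := Set.ncard_image_le (f := Prod.fst) hY1
      omega
    · intro w n hw hodd
      obtain ⟨hwalk, h0X, hnX, hint⟩ := hw
      set wl : ℕ → V × Bool := fun j => (w j, decide (j % 2 = 1)) with hwldef
      have hwlwalk : IsWalkOn Q wl n := by
        intro j hj
        refine ⟨hwalk j hj, ?_, ?_, ?_⟩
        · show decide ((j + 1) % 2 = 1) = !decide (j % 2 = 1)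
          rcases Nat.even_or_odd j with ⟨c, hc⟩ | ⟨c, hc⟩
          · rw [decide_eq_true (by omega : (j + 1) % 2 = 1),
              decide_eq_false (by omega : ¬ j % 2 = 1)]
            rfl
          · rw [decide_eq_false (by omega : ¬ (j + 1) % 2 = 1),
              decide_eq_true (by omega : j % 2 = 1)]
            rfl
        · rintro ⟨hX1, hX2⟩
          simp only [hwldef] at hX2
          rcases Nat.lt_or_ge (j + 1) n with hlt | hge
          · exact hint (j + 1) (by omega) hlt hX1
          · have hjn : j + 1 = n := by omega
            rw [hjn] at hX2
            obtain ⟨c, hc⟩ := hodd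
            rw [decide_eq_true (by omega : n % 2 = 1)] at hX2
            exact absurd hX2 (by simp)
        · rintro ⟨hX1, hX2⟩
          simp only [hwldef] at hX2
          rcases Nat.eq_zero_or_pos j with rfl | hj0
          · rw [show decide (0 % 2 = 1) = false from decide_eq_false (by omega)] at hX2
            exact absurd hX2 (by simp)
          · exact hint j hj0 (by omega) hX1
      have h0' : wl 0 ∈ A :=
        ⟨h0X, show decide (0 % 2 = 1) = false from decide_eq_false (by omega)⟩
      have hn' : wl n ∈ B := by
        refine ⟨hnX, ?_⟩
        obtain ⟨c, hc⟩ := hodd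
        exact show decide (n % 2 = 1) = true from decide_eq_true (by omega)
      obtain ⟨i, hi, hiY⟩ := hY3 wl n hwlwalk h0' hn'
      exact ⟨i, hi, ⟨wl i, hiY, rfl⟩⟩
end

section
/- Let k ≥ 2 and suppose t is an integer such that every digraph H with no half-integral packing of k−1 directed odd cycles has a set of at most t vertices meeting all directed odd cycles. Let G be a digraph with no half-integral packing of k directed odd cycles, and let T be a minimum-size set of vertices meeting all directed odd cycles of G. Then T is 2t-well-linked in G. -/
variable {V : Type}

/-! ### Auxiliary walk and path lemmas -/

section WalkAux

attribute [local instance] Classical.propDecidable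

variable {R : V → V → Prop} {w : ℕ → V} {n : ℕ}

theorem mem_walkVerts {v : V} : v ∈ walkVerts w n ↔ ∃ i ≤ n, w i = v := Iff.rfl

theorem self_mem_walkVerts {i : ℕ} (hi : i ≤ n) : w i ∈ walkVerts w n := ⟨i, hi, rfl⟩

theorem exists_first (P : ℕ → Prop) (n : ℕ) (h : ∃ i, i ≤ n ∧ P i) :
    ∃ i, i ≤ n ∧ P i ∧ ∀ j < i, ¬ P j := by
  obtain ⟨i, hi, hP⟩ := h
  have hex : ∃ j, P j := ⟨i, hP⟩
  refine ⟨Nat.find hex, le_trans (Nat.find_min' hex hP) hi, Nat.find_spec hex, ?_⟩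
  exact fun j hj => Nat.find_min hex hj

theorem exists_last (P : ℕ → Prop) (n : ℕ) (h : ∃ i, i ≤ n ∧ P i) :
    ∃ i, i ≤ n ∧ P i ∧ ∀ j, i < j → j ≤ n → ¬ P j := by
  obtain ⟨j, hj, hPj, hmin⟩ := exists_first (fun j => P (n - j)) n
    (by obtain ⟨i, hi, hP⟩ := h
        exact ⟨n - i, by omega, by show P (n - (n - i)); rw [show n - (n - i) = i by omega]; exact hP⟩)
  refine ⟨n - j, by omega, hPj, fun l hl1 hl2 hPl => ?_⟩
  exact hmin (n - l) (by omega) (by show P (n - (n - l)); rw [show n - (n - l) = l by omega]; exact hPl)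

theorem IsPathOn.prefix (h : IsPathOn R w n) {m : ℕ} (hm : m ≤ n) : IsPathOn R w m :=
  ⟨fun i hi => h.1 i (lt_of_lt_of_le hi hm),
   fun i hi j hj => h.2 i (le_trans hi hm) j (le_trans hj hm)⟩

theorem walkVerts_mono {m : ℕ} (hm : m ≤ n) : walkVerts w m ⊆ walkVerts w n :=
  fun _ ⟨i, hi, hv⟩ => ⟨i, le_trans hi hm, hv⟩

/-- Shifted walk, dropping the first `m` steps. -/
def shiftW (w : ℕ → V) (m : ℕ) : ℕ → V := fun i => w (i + m)

theorem shiftW_zero (w : ℕ → V) (m : ℕ) : shiftW w m 0 = w m := by simp [shiftW]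

theorem shiftW_end {w : ℕ → V} {n m : ℕ} (hm : m ≤ n) : shiftW w m (n - m) = w n := by
  simp only [shiftW]; congr 1; omega

theorem IsPathOn.suffix (h : IsPathOn R w n) {m : ℕ} (hm : m ≤ n) :
    IsPathOn R (shiftW w m) (n - m) := by
  constructor
  · intro i hi
    have := h.1 (i + m) (by omega)
    simpa [shiftW, Nat.add_right_comm] using this
  · intro i hi j hj hij
    have := h.2 (i + m) (by omega) (j + m) (by omega) hij
    omega

theorem shiftW_verts {m : ℕ} (hm : m ≤ n) : walkVerts (shiftW w m) (n - m) ⊆ walkVerts w n := by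
  rintro v ⟨i, hi, rfl⟩; exact ⟨i + m, by omega, rfl⟩

/-- Every walk contains a path with the same endpoints. -/
theorem walk_to_path (R : V → V → Prop) :
    ∀ (n : ℕ) (w : ℕ → V), IsWalkOn R w n →
      ∃ w' n', IsPathOn R w' n' ∧ w' 0 = w 0 ∧ w' n' = w n ∧
        walkVerts w' n' ⊆ walkVerts w n := by
  intro n
  induction n using Nat.strong_induction_on with
  | _ n IH =>
    intro w hw
    by_cases hinj : ∀ i ≤ n, ∀ j ≤ n, w i = w j → i = j
    · exact ⟨w, n, ⟨hw, hinj⟩, rfl, rfl, fun v hv => hv⟩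
    · push_neg at hinj
      obtain ⟨i, hi, j, hj, heq, hne⟩ := hinj
      have key : ∀ i j : ℕ, i ≤ n → j ≤ n → w i = w j → i < j →
          ∃ w' n', IsPathOn R w' n' ∧ w' 0 = w 0 ∧ w' n' = w n ∧
            walkVerts w' n' ⊆ walkVerts w n := by
        clear hi hj heq hne i j
        intro i j hi hj heq hij
        set w' : ℕ → V := fun l => if l ≤ i then w l else w (l + (j - i)) with hw'def
        have hwl : ∀ l, l ≤ i → w' l = w l := fun l hl => if_pos hl
        have hwg : ∀ l, ¬ l ≤ i → w' l = w (l + (j - i)) := fun l hl => if_neg hl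
        have hn'n : n - (j - i) < n := by omega
        have hwalk' : IsWalkOn R w' (n - (j - i)) := by
          intro l hl
          rcases lt_trichotomy l i with h1 | h1 | h1
          · rw [hwl l h1.le, hwl (l + 1) (by omega)]; exact hw l (by omega)
          · rw [h1, hwl i le_rfl, hwg (i + 1) (by omega), heq,
              show i + 1 + (j - i) = j + 1 by omega]
            exact hw j (by omega)
          · rw [hwg l (by omega), hwg (l + 1) (by omega),
              show l + 1 + (j - i) = l + (j - i) + 1 by omega]
            exact hw (l + (j - i)) (by omega)
        have h0 : w' 0 = w 0 := hwl 0 (by omega)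
        have hend : w' (n - (j - i)) = w n := by
          rcases eq_or_lt_of_le hj with h1 | h1
          · rw [show n - (j - i) = i by omega, hwl i le_rfl, heq, h1]
          · rw [hwg _ (by omega), show n - (j - i) + (j - i) = n by omega]
        have hsub : walkVerts w' (n - (j - i)) ⊆ walkVerts w n := by
          rintro v ⟨l, hl, rfl⟩
          by_cases h2 : l ≤ i
          · exact ⟨l, by omega, (hwl l h2).symm⟩
          · exact ⟨l + (j - i), by omega, (hwg l h2).symm⟩
        obtain ⟨w'', n'', hp, h0', hend', hsub'⟩ := IH _ hn'n w' hwalk'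
        exact ⟨w'', n'', hp, by rw [h0', h0], by rw [hend', hend],
          fun v hv => hsub (hsub' hv)⟩
      rcases lt_or_gt_of_ne hne with h | h
      · exact key i j hi hj heq h
      · exact key j i hj hi heq.symm h

/-- Concatenation of two walks. -/
def cat (w1 : ℕ → V) (n1 : ℕ) (w2 : ℕ → V) : ℕ → V :=
  fun i => if i ≤ n1 then w1 i else w2 (i - n1)

theorem cat_le {w1 : ℕ → V} {n1 : ℕ} {w2 : ℕ → V} {i : ℕ} (h : i ≤ n1) :
    cat w1 n1 w2 i = w1 i := if_pos h

theorem cat_gt {w1 : ℕ → V} {n1 : ℕ} {w2 : ℕ → V} {i : ℕ} (h : ¬ i ≤ n1) :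
    cat w1 n1 w2 i = w2 (i - n1) := if_neg h

theorem cat_zero {w1 : ℕ → V} {n1 : ℕ} {w2 : ℕ → V} : cat w1 n1 w2 0 = w1 0 :=
  cat_le (Nat.zero_le n1)

theorem cat_end {w1 : ℕ → V} {n1 : ℕ} {w2 : ℕ → V} {n2 : ℕ} (hj : w1 n1 = w2 0) :
    cat w1 n1 w2 (n1 + n2) = w2 n2 := by
  rcases Nat.eq_zero_or_pos n2 with h | h
  · rw [h, Nat.add_zero, cat_le le_rfl, hj]
  · rw [cat_gt (by omega), Nat.add_sub_cancel_left]

theorem cat_walk {w1 : ℕ → V} {n1 : ℕ} {w2 : ℕ → V} {n2 : ℕ}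
    (h1 : IsWalkOn R w1 n1) (h2 : IsWalkOn R w2 n2) (hj : w1 n1 = w2 0) :
    IsWalkOn R (cat w1 n1 w2) (n1 + n2) := by
  intro i hi
  rcases lt_trichotomy i n1 with h | h | h
  · rw [cat_le h.le, cat_le (by omega)]; exact h1 i h
  · rw [h, cat_le le_rfl, cat_gt (by omega), Nat.add_sub_cancel_left, hj]
    exact h2 0 (by omega)
  · rw [cat_gt (by omega), cat_gt (by omega), show i + 1 - n1 = i - n1 + 1 by omega]
    exact h2 (i - n1) (by omega)

theorem cat_verts {w1 : ℕ → V} {n1 : ℕ} {w2 : ℕ → V} {n2 : ℕ} :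
    walkVerts (cat w1 n1 w2) (n1 + n2) ⊆ walkVerts w1 n1 ∪ walkVerts w2 n2 := by
  rintro v ⟨i, hi, rfl⟩
  by_cases h : i ≤ n1
  · exact Or.inl ⟨i, h, (cat_le h).symm⟩
  · exact Or.inr ⟨i - n1, by omega, (cat_gt h).symm⟩

theorem cat_path {w1 : ℕ → V} {n1 : ℕ} {w2 : ℕ → V} {n2 : ℕ}
    (h1 : IsPathOn R w1 n1) (h2 : IsPathOn R w2 n2) (hj : w1 n1 = w2 0)
    (hmeet : ∀ v, v ∈ walkVerts w1 n1 → v ∈ walkVerts w2 n2 → v = w1 n1) :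
    IsPathOn R (cat w1 n1 w2) (n1 + n2) := by
  refine ⟨cat_walk h1.1 h2.1 hj, ?_⟩
  have key : ∀ i j, i ≤ n1 + n2 → j ≤ n1 + n2 → i ≤ n1 → ¬ j ≤ n1 →
      cat w1 n1 w2 i = cat w1 n1 w2 j → False := by
    intro i j hi hj' hi1 hj1 heq
    rw [cat_le hi1, cat_gt hj1] at heq
    have hv1 : w1 i ∈ walkVerts w1 n1 := ⟨i, hi1, rfl⟩
    have hv2 : w1 i ∈ walkVerts w2 n2 := ⟨j - n1, by omega, heq.symm⟩
    have he := hmeet _ hv1 hv2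
    have hi' : i = n1 := h1.2 i hi1 n1 le_rfl he
    have : w2 (j - n1) = w2 0 := by rw [← heq, he, hj]
    have := h2.2 (j - n1) (by omega) 0 (by omega) this
    omega
  intro i hi j hj' heq
  by_cases hi1 : i ≤ n1 <;> by_cases hj1 : j ≤ n1
  · rw [cat_le hi1, cat_le hj1] at heq; exact h1.2 i hi1 j hj1 heq
  · exact absurd heq (fun h => key i j hi hj' hi1 hj1 h)
  · exact absurd heq.symm (fun h => key j i hj' hi hj1 hi1 h)
  · rw [cat_gt hi1, cat_gt hj1] at heq
    have := h2.2 (i - n1) (by omega) (j - n1) (by omega) heq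
    omega

/-- Prepending a vertex to a walk. -/
def consw (u : V) (w : ℕ → V) : ℕ → V := fun i => if i = 0 then u else w (i - 1)

theorem consw_zero {u : V} {w : ℕ → V} : consw u w 0 = u := rfl

theorem consw_succ {u : V} {w : ℕ → V} {i : ℕ} (h : 0 < i) : consw u w i = w (i - 1) :=
  if_neg (by omega)

theorem consw_verts {u : V} {w : ℕ → V} {n : ℕ} :
    walkVerts (consw u w) (n + 1) ⊆ {u} ∪ walkVerts w n := by
  rintro v ⟨i, hi, rfl⟩
  rcases Nat.eq_zero_or_pos i with h | h
  · rw [h]; exact Or.inl rfl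
  · exact Or.inr ⟨i - 1, by omega, (consw_succ h).symm⟩

theorem consw_path {u : V} {w : ℕ → V} {n : ℕ} (h : IsPathOn R w n)
    (he : R u (w 0)) (hu : u ∉ walkVerts w n) : IsPathOn R (consw u w) (n + 1) := by
  constructor
  · intro i hi
    rcases Nat.eq_zero_or_pos i with h0 | h0
    · rw [h0, consw_zero, consw_succ (by omega)]; simpa using he
    · rw [consw_succ h0, consw_succ (by omega), show i + 1 - 1 = i - 1 + 1 by omega]
      exact h.1 (i - 1) (by omega)
  · intro i hi j hj heq
    rcases Nat.eq_zero_or_pos i with h0 | h0 <;> rcases Nat.eq_zero_or_pos j with h0' | h0'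
    · omega
    · rw [h0, consw_zero, consw_succ h0'] at heq
      exact absurd ⟨j - 1, by omega, heq.symm⟩ hu
    · rw [h0', consw_zero, consw_succ h0] at heq
      exact absurd ⟨i - 1, by omega, heq⟩ hu
    · rw [consw_succ h0, consw_succ h0'] at heq
      have := h.2 (i - 1) (by omega) (j - 1) (by omega) heq
      omega

end WalkAux

/-! ### Compactness for bounded transversals of hypergraphs with finite edges -/

section Compactness

attribute [local instance] Classical.propDecidable

theorem transversal_compactness :
    ∀ (c : ℕ) (F : Set (Finset V)),
    (∀ Gs : Finset (Finset V), ↑Gs ⊆ F →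
      ∃ X : Finset V, X.card ≤ c ∧ ∀ e ∈ Gs, (e ∩ X).Nonempty) →
    ∃ X : Finset V, X.card ≤ c ∧ ∀ e ∈ F, (e ∩ X).Nonempty := by
  intro c
  induction c with
  | zero =>
    intro F h
    refine ⟨∅, le_rfl, fun e he => ?_⟩
    obtain ⟨X, hX0, hX⟩ := h {e} (by simpa using he)
    have : X = ∅ := Finset.card_eq_zero.mp (Nat.le_zero.mp hX0)
    rw [← this]
    exact hX e (Finset.mem_singleton_self e)
  | succ c IH =>
    intro F h
    rcases Set.eq_empty_or_nonempty F with hF | ⟨e₀, he₀⟩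
    · exact ⟨∅, by simp, fun e he => absurd (hF ▸ he) (Set.notMem_empty e)⟩
    have claim : ∃ v ∈ e₀,
        ∀ Gs : Finset (Finset V), ↑Gs ⊆ {e ∈ F | v ∉ e} →
          ∃ X : Finset V, X.card ≤ c ∧ ∀ e ∈ Gs, (e ∩ X).Nonempty := by
      by_contra hcl
      push_neg at hcl
      choose Gv hGv1 hGv2 using hcl
      classical
      set G₀ : Finset (Finset V) :=
        insert e₀ (e₀.attach.biUnion (fun v => Gv v.1 v.2)) with hG₀
      have hG₀F : ↑G₀ ⊆ F := by
        intro e he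
        simp only [hG₀, Finset.coe_insert, Set.mem_insert_iff, Finset.coe_biUnion,
          Set.mem_iUnion, Finset.mem_coe] at he
        rcases he with rfl | he
        · exact he₀
        · obtain ⟨v, _, hv⟩ := he
          exact (hGv1 v.1 v.2 hv).1
      obtain ⟨X, hXc, hX⟩ := h G₀ hG₀F
      obtain ⟨v₀, hv₀⟩ := hX e₀ (by simp [hG₀])
      rw [Finset.mem_inter] at hv₀
      obtain ⟨e, he, hne⟩ := hGv2 v₀ hv₀.1 (X.erase v₀) (by
        rw [Finset.card_erase_of_mem hv₀.2]; omega)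
      refine Finset.nonempty_iff_ne_empty.mp ?_ hne
      have heG : e ∈ G₀ := by
        simp only [hG₀, Finset.mem_insert, Finset.mem_biUnion, Finset.mem_attach]
        exact Or.inr ⟨⟨v₀, hv₀.1⟩, True.intro, he⟩
      obtain ⟨u, hu⟩ := hX e heG
      rw [Finset.mem_inter] at hu
      have hune : u ≠ v₀ := by
        intro huv
        exact (hGv1 v₀ hv₀.1 he).2 (huv ▸ hu.1)
      exact ⟨u, Finset.mem_inter.mpr ⟨hu.1, Finset.mem_erase.mpr ⟨hune, hu.2⟩⟩⟩
    obtain ⟨v, hv, hvp⟩ := claim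
    obtain ⟨X', hX'c, hX'⟩ := IH {e ∈ F | v ∉ e} hvp
    refine ⟨insert v X', by
      calc (insert v X').card ≤ X'.card + 1 := Finset.card_insert_le v X'
      _ ≤ c + 1 := by omega, ?_⟩
    intro e he
    by_cases hve : v ∈ e
    · exact ⟨v, Finset.mem_inter.mpr ⟨hve, Finset.mem_insert_self v X'⟩⟩
    · obtain ⟨u, hu⟩ := hX' e ⟨he, hve⟩
      rw [Finset.mem_inter] at hu
      exact ⟨u, Finset.mem_inter.mpr ⟨hu.1, Finset.mem_insert_of_mem hu.2⟩⟩

end Compactness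

/-! ### Menger's theorem for finite edge sets -/

section Menger

attribute [local instance] Classical.propDecidable

/-- The edge relation of a finite digraph given by an edge list. -/
def RE (E : Finset (V × V)) : V → V → Prop := fun u v => (u, v) ∈ E

/-- `X` separates `A` from `B` in the digraph `E`. -/
def MSep (E : Finset (V × V)) (A B X : Finset V) : Prop :=
  ∀ w n, IsPathOn (RE E) w n → w 0 ∈ A → w n ∈ B → ∃ i ≤ n, w i ∈ X

/-- There are `s` pairwise disjoint directed `A`–`B` paths in the digraph `E`. -/
def MLink (E : Finset (V × V)) (A B : Finset V) (s : ℕ) : Prop :=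
  ∃ (P : Fin s → ℕ → V) (len : Fin s → ℕ),
    (∀ i, IsPathOn (RE E) (P i) (len i) ∧ P i 0 ∈ A ∧ P i (len i) ∈ B) ∧
    ∀ i j, i ≠ j → Disjoint (walkVerts (P i) (len i)) (walkVerts (P j) (len j))

theorem IsPathOn.mono {R R' : V → V → Prop} {w : ℕ → V} {n : ℕ}
    (h : ∀ u v, R u v → R' u v) (hp : IsPathOn R w n) : IsPathOn R' w n :=
  ⟨fun i hi => h _ _ (hp.1 i hi), hp.2⟩

theorem MLink.mono {E E' : Finset (V × V)} {A B : Finset V} {s : ℕ}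
    (hE : E ⊆ E') (h : MLink E A B s) : MLink E' A B s := by
  obtain ⟨P, len, h1, h2⟩ := h
  exact ⟨P, len, fun i => ⟨(h1 i).1.mono (fun u v huv => hE huv), (h1 i).2⟩, h2⟩

theorem walkVerts_zero {w : ℕ → V} : walkVerts w 0 = {w 0} := by
  ext v; constructor
  · rintro ⟨i, hi, rfl⟩; interval_cases i; rfl
  · rintro rfl; exact ⟨0, le_rfl, rfl⟩

theorem menger_base (A B : Finset V) (s : ℕ)
    (hsep : ∀ X : Finset V, MSep (∅ : Finset (V × V)) A B X → s ≤ X.card) :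
    MLink (∅ : Finset (V × V)) A B s := by
  have hAB : s ≤ (A ∩ B).card := by
    apply hsep
    intro w n hp h0 hn
    have hn0 : n = 0 := by
      by_contra h
      have := hp.1 0 (by omega)
      simp [RE] at this
    exact ⟨0, Nat.zero_le n, Finset.mem_inter.mpr ⟨h0, by rw [← hn0]; exact hn⟩⟩
  set L := (A ∩ B).toList with hL
  have hlen : s ≤ L.length := by rwa [hL, Finset.length_toList]
  have hnodup : L.Nodup := Finset.nodup_toList _
  refine ⟨fun i => fun _ => L.get ⟨i.1, by omega⟩, fun _ => 0, ?_, ?_⟩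
  · intro i
    have hmem : L.get ⟨i.1, by omega⟩ ∈ A ∩ B := by
      rw [← Finset.mem_toList]; exact List.get_mem _ _
    rw [Finset.mem_inter] at hmem
    refine ⟨⟨fun j hj => absurd hj (by change ¬ j < 0; omega), fun a ha b hb _ => ?_⟩, hmem.1, hmem.2⟩
    change a ≤ 0 at ha; change b ≤ 0 at hb; omega
  · intro i j hij
    rw [walkVerts_zero, walkVerts_zero, Set.disjoint_singleton]
    intro h
    have := (List.Nodup.get_inj_iff hnodup).mp h
    exact hij (by ext; exact congrArg (·.1) this)

theorem finite_menger : ∀ (N : ℕ) (E : Finset (V × V)) (A B : Finset V) (s : ℕ),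
    E.card ≤ N → (∀ X : Finset V, MSep E A B X → s ≤ X.card) → MLink E A B s := by
  intro N
  induction N with
  | zero =>
    intro E A B s hcard hsep
    have hE : E = ∅ := Finset.card_eq_zero.mp (Nat.le_zero.mp hcard)
    subst hE
    exact menger_base A B s hsep
  | succ N IH =>
    intro E A B s hcard hsep
    rcases Finset.eq_empty_or_nonempty E with hE | ⟨e, he⟩
    · subst hE; exact menger_base A B s hsep
    set E' := E.erase e with hE'def
    have hE'sub : E' ⊆ E := Finset.erase_subset e E
    have hE'card : E'.card ≤ N := by
      rw [hE'def, Finset.card_erase_of_mem he]; omega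
    by_cases hsepE' : ∀ X : Finset V, MSep E' A B X → s ≤ X.card
    · exact (IH E' A B s hE'card hsepE').mono hE'sub
    push_neg at hsepE'
    obtain ⟨S, hSsep, hScard⟩ := hsepE'
    -- every A–B path of E either uses e, or lives in E'
    have huse_or : ∀ w n, IsPathOn (RE E) w n →
        (∃ l < n, w l = e.1 ∧ w (l + 1) = e.2) ∨ IsPathOn (RE E') w n := by
      intro w n hp
      by_cases h : ∃ l < n, (w l, w (l + 1)) = e
      · obtain ⟨l, hl, hle⟩ := h
        exact Or.inl ⟨l, hl, congrArg Prod.fst hle, congrArg Prod.snd hle⟩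
      · push_neg at h
        exact Or.inr ⟨fun i hi => Finset.mem_erase.mpr ⟨h i hi, hp.1 i hi⟩, hp.2⟩
    have hXsep : MSep E A B (insert e.1 S) := by
      intro w n hp h0 hn
      rcases huse_or w n hp with ⟨l, hl, hx, _⟩ | hp'
      · exact ⟨l, by omega, by rw [hx]; exact Finset.mem_insert_self _ _⟩
      · obtain ⟨i, hi, hiS⟩ := hSsep w n hp' h0 hn
        exact ⟨i, hi, Finset.mem_insert_of_mem hiS⟩
    have hYsep : MSep E A B (insert e.2 S) := by
      intro w n hp h0 hn
      rcases huse_or w n hp with ⟨l, hl, _, hy⟩ | hp'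
      · exact ⟨l + 1, by omega, by rw [hy]; exact Finset.mem_insert_self _ _⟩
      · obtain ⟨i, hi, hiS⟩ := hSsep w n hp' h0 hn
        exact ⟨i, hi, Finset.mem_insert_of_mem hiS⟩
    have hXcard : s ≤ (insert e.1 S).card := hsep _ hXsep
    have hYcard : s ≤ (insert e.2 S).card := hsep _ hYsep
    have hxS : e.1 ∉ S := by
      intro h; rw [Finset.insert_eq_self.mpr h] at hXcard; omega
    have hyS : e.2 ∉ S := by
      intro h; rw [Finset.insert_eq_self.mpr h] at hYcard; omega
    have hXc : (insert e.1 S).card = s := by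
      have h1 := Finset.card_insert_le e.1 S; omega
    have hYc : (insert e.2 S).card = s := by
      have h1 := Finset.card_insert_le e.2 S; omega
    -- transfer of separators, A-side
    have hsepAX : ∀ T : Finset V, MSep E' A (insert e.1 S) T → s ≤ T.card := by
      intro T hT
      apply hsep
      intro w n hp h0 hn
      have hhit : ∃ l, l ≤ n ∧ w l ∈ insert e.1 S := by
        rcases huse_or w n hp with ⟨l, hl, hx, _⟩ | hp'
        · exact ⟨l, by omega, by rw [hx]; exact Finset.mem_insert_self _ _⟩
        · obtain ⟨i, hi, hiS⟩ := hSsep w n hp' h0 hn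
          exact ⟨i, hi, Finset.mem_insert_of_mem hiS⟩
      obtain ⟨l, hl, hlX, hlfirst⟩ := exists_first _ n hhit
      have hpre : IsPathOn (RE E') w l := by
        refine ⟨fun i hi => Finset.mem_erase.mpr ⟨?_, hp.1 i (by omega)⟩,
          fun a ha b hb hab => hp.2 a (by omega) b (by omega) hab⟩
        intro hcon
        have hx : w i = e.1 := congrArg Prod.fst hcon
        exact hlfirst i (by omega) (by rw [hx]; exact Finset.mem_insert_self _ _)
      obtain ⟨i, hi, hiT⟩ := hT w l hpre h0 hlX
      exact ⟨i, by omega, hiT⟩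
    -- transfer of separators, B-side
    have hsepYB : ∀ T : Finset V, MSep E' (insert e.2 S) B T → s ≤ T.card := by
      intro T hT
      apply hsep
      intro w n hp h0 hn
      have hhit : ∃ l, l ≤ n ∧ w l ∈ insert e.2 S := by
        rcases huse_or w n hp with ⟨l, hl, _, hy⟩ | hp'
        · exact ⟨l + 1, by omega, by rw [hy]; exact Finset.mem_insert_self _ _⟩
        · obtain ⟨i, hi, hiS⟩ := hSsep w n hp' h0 hn
          exact ⟨i, hi, Finset.mem_insert_of_mem hiS⟩
      obtain ⟨l, hl, hlY, hllast⟩ := exists_last _ n hhit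
      have hsuf : IsPathOn (RE E') (shiftW w l) (n - l) := by
        refine ⟨fun i hi => Finset.mem_erase.mpr ⟨?_, (hp.suffix hl).1 i hi⟩, (hp.suffix hl).2⟩
        intro hcon
        have h2 : w (i + 1 + l) = e.2 := congrArg Prod.snd hcon
        exact hllast (i + 1 + l) (by omega) (by omega)
          (by rw [h2]; exact Finset.mem_insert_self _ _)
      obtain ⟨i, hi, hiT⟩ := hT (shiftW w l) (n - l) hsuf
        (by rw [shiftW_zero]; exact hlY) (by rw [shiftW_end hl]; exact hn)
      exact ⟨i + l, by omega, hiT⟩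
    obtain ⟨P, lp, hP, hPdis⟩ := IH E' A (insert e.1 S) s hE'card hsepAX
    obtain ⟨Q, lq, hQ, hQdis⟩ := IH E' (insert e.2 S) B s hE'card hsepYB
    -- truncate the A-side paths at their first visit to X
    choose lp' hlp'le hlp'X hlp'first using
      fun i : Fin s => exists_first (fun l => P i l ∈ insert e.1 S) (lp i)
        ⟨lp i, le_rfl, (hP i).2.2⟩
    -- truncate the B-side paths at their last visit to Y
    choose m0 hm0le hm0Y hm0last using
      fun j : Fin s => exists_last (fun l => Q j l ∈ insert e.2 S) (lq j)
        ⟨0, Nat.zero_le _, (hQ j).2.1⟩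
    set Q' : Fin s → ℕ → V := fun j => shiftW (Q j) (m0 j) with hQ'def
    set lq' : Fin s → ℕ := fun j => lq j - m0 j with hlq'def
    have hP'path : ∀ i, IsPathOn (RE E') (P i) (lp' i) := fun i => (hP i).1.prefix (hlp'le i)
    have hQ'path : ∀ j, IsPathOn (RE E') (Q' j) (lq' j) := fun j => (hQ j).1.suffix (hm0le j)
    have hQ'0 : ∀ j, Q' j 0 ∈ insert e.2 S := fun j => by
      show shiftW (Q j) (m0 j) 0 ∈ _; rw [shiftW_zero]; exact hm0Y j
    have hQ'end : ∀ j, Q' j (lq' j) ∈ B := fun j => by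
      show shiftW (Q j) (m0 j) (lq j - m0 j) ∈ _; rw [shiftW_end (hm0le j)]; exact (hQ j).2.2
    have hQ'Y : ∀ j l, 0 < l → l ≤ lq' j → Q' j l ∉ insert e.2 S := by
      intro j l h1 h2
      have h2' : l ≤ lq j - m0 j := h2
      exact hm0last j (l + m0 j) (by omega) (by omega)
    have hPdis' : ∀ i j, i ≠ j →
        Disjoint (walkVerts (P i) (lp' i)) (walkVerts (P j) (lp' j)) := fun i j h =>
      Set.disjoint_of_subset (walkVerts_mono (hlp'le i)) (walkVerts_mono (hlp'le j)) (hPdis i j h)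
    have hQdis' : ∀ i j, i ≠ j →
        Disjoint (walkVerts (Q' i) (lq' i)) (walkVerts (Q' j) (lq' j)) := fun i j h =>
      Set.disjoint_of_subset (shiftW_verts (hm0le i)) (shiftW_verts (hm0le j)) (hQdis i j h)
    -- the key claim: a common vertex of an A-side and a B-side path must be the
    -- endpoint of the former, the start of the latter, and lie in S
    have claim : ∀ (i j : Fin s) (v : V), v ∈ walkVerts (P i) (lp' i) →
        v ∈ walkVerts (Q' j) (lq' j) →
        v = P i (lp' i) ∧ v = Q' j 0 ∧ v ∈ S := by
      intro i j v hvP hvQ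
      obtain ⟨p, hp, hvp⟩ := hvP
      obtain ⟨q, hq, hvq⟩ := hvQ
      have hvS : v ∈ S := by
        by_contra hvS
        set W : ℕ → V := cat (P i) p (shiftW (Q' j) q) with hWdef
        set nW : ℕ := p + (lq' j - q) with hnWdef
        have hjunction : P i p = shiftW (Q' j) q 0 := by
          rw [shiftW_zero, hvp, hvq]
        have hWwalk : IsWalkOn (RE E') W nW :=
          cat_walk (fun l hl => (hP'path i).1 l (by omega))
            ((hQ'path j).suffix hq).1 hjunction
        have hW0 : W 0 = P i 0 := cat_zero
        have hWend : W nW = Q' j (lq' j) := by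
          rw [hWdef, hnWdef, cat_end hjunction, shiftW_end hq]
        have havoid : ∀ u, u ∈ walkVerts W nW → u ∉ S := by
          intro u hu huS
          rcases cat_verts hu with ⟨l, hl, rfl⟩ | ⟨l, hl, rfl⟩
          · by_cases h1 : l < lp' i
            · exact hlp'first i l h1 (Finset.mem_insert_of_mem huS)
            · have hpp : l = p := by omega
              apply hvS
              rw [← hvp, ← hpp]
              exact huS
          · have h2 : Q' j (l + q) ∈ S := huS
            by_cases h1 : 0 < l + q
            · exact hQ'Y j (l + q) h1 (by omega) (Finset.mem_insert_of_mem h2)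
            · have hq0 : q = 0 := by omega
              apply hvS
              rw [← hvq, hq0]
              rw [show l + q = 0 by omega] at h2
              exact h2
        obtain ⟨w', n', hw'path, hw'0, hw'end, hw'sub⟩ := walk_to_path (RE E') nW W hWwalk
        obtain ⟨i', hi', hi'S⟩ := hSsep w' n' hw'path
          (by rw [hw'0, hW0]; exact (hP i).2.1)
          (by rw [hw'end, hWend]; exact hQ'end j)
        exact havoid (w' i') (hw'sub ⟨i', hi', rfl⟩) hi'S
      have hpend : p = lp' i := by
        rcases lt_or_eq_of_le (le_trans hp le_rfl) with h1 | h1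
        · exact absurd (by rw [hvp]; exact Finset.mem_insert_of_mem hvS : P i p ∈ insert e.1 S)
            (hlp'first i p (by omega))
        · exact h1
      have hqzero : q = 0 := by
        by_contra hq0
        exact hQ'Y j q (by omega) hq (by rw [hvq]; exact Finset.mem_insert_of_mem hvS)
      exact ⟨by rw [← hpend, hvp], by rw [← hqzero, hvq], hvS⟩
    -- endpoints of truncated paths are injective and exhaust X resp. Y
    have hends_inj : ∀ i j : Fin s, P i (lp' i) = P j (lp' j) → i = j := by
      intro i j hij
      by_contra hne
      exact Set.disjoint_left.mp (hPdis' i j hne) ⟨lp' i, le_rfl, rfl⟩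
        ⟨lp' j, le_rfl, hij.symm⟩
    have hstarts_inj : ∀ i j : Fin s, Q' i 0 = Q' j 0 → i = j := by
      intro i j hij
      by_contra hne
      exact Set.disjoint_left.mp (hQdis' i j hne) ⟨0, Nat.zero_le _, rfl⟩
        ⟨0, Nat.zero_le _, hij.symm⟩
    have hstarts_surj : ∀ v ∈ insert e.2 S, ∃ j : Fin s, Q' j 0 = v := by
      have himg : Finset.image (fun j : Fin s => Q' j 0) Finset.univ = insert e.2 S := by
        apply Finset.eq_of_subset_of_card_le
        · intro v hv
          obtain ⟨j, _, rfl⟩ := Finset.mem_image.mp hv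
          exact hQ'0 j
        · rw [Finset.card_image_of_injective _
            (fun i j (h : Q' i 0 = Q' j 0) => hstarts_inj i j h),
            Finset.card_univ, Fintype.card_fin, hYc]
      intro v hv
      rw [← himg] at hv
      obtain ⟨j, _, h⟩ := Finset.mem_image.mp hv
      exact ⟨j, h⟩
    -- the matching between A-side path ends and B-side path starts
    have hm_ex : ∀ i : Fin s, ∃ j : Fin s,
        Q' j 0 = if P i (lp' i) = e.1 then e.2 else P i (lp' i) := by
      intro i
      apply hstarts_surj
      rcases Finset.mem_insert.mp (hlp'X i) with h | h
      · rw [if_pos h]; exact Finset.mem_insert_self _ _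
      · rw [if_neg (show ¬ P i (lp' i) = e.1 from fun hc => hxS (hc ▸ h))]
        exact Finset.mem_insert_of_mem h
    choose m hm using hm_ex
    have hm_inj : ∀ i j : Fin s, m i = m j → i = j := by
      intro i j hij
      have h3 : (if P i (lp' i) = e.1 then e.2 else P i (lp' i)) =
          (if P j (lp' j) = e.1 then e.2 else P j (lp' j)) := by
        rw [← hm i, ← hm j, hij]
      apply hends_inj
      by_cases ha : P i (lp' i) = e.1 <;> by_cases hb : P j (lp' j) = e.1
      · rw [ha, hb]
      · rw [if_pos ha, if_neg hb] at h3
        exfalso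
        apply hyS
        rw [h3]
        rcases Finset.mem_insert.mp (hlp'X j) with h | h
        · exact absurd h hb
        · exact h
      · rw [if_neg ha, if_pos hb] at h3
        exfalso
        apply hyS
        rw [← h3]
        rcases Finset.mem_insert.mp (hlp'X i) with h | h
        · exact absurd h ha
        · exact h
      · rw [if_neg ha, if_neg hb] at h3
        exact h3
    -- build the glued paths
    have hbundle : ∀ i : Fin s, ∃ (w : ℕ → V) (nw : ℕ),
        IsPathOn (RE E) w nw ∧ w 0 ∈ A ∧ w nw ∈ B ∧
        walkVerts w nw ⊆ walkVerts (P i) (lp' i) ∪ walkVerts (Q' (m i)) (lq' (m i)) := by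
      intro i
      have hPiE : IsPathOn (RE E) (P i) (lp' i) :=
        (hP'path i).mono (fun u v h => hE'sub h)
      have hQ'E : IsPathOn (RE E) (Q' (m i)) (lq' (m i)) :=
        (hQ'path (m i)).mono (fun u v h => hE'sub h)
      by_cases hx : P i (lp' i) = e.1
      · -- glue through the edge e
        have hy' : Q' (m i) 0 = e.2 := by rw [hm i, if_pos hx]
        have hxQ : e.1 ∉ walkVerts (Q' (m i)) (lq' (m i)) := by
          intro hmem
          exact hxS (claim i (m i) e.1 ⟨lp' i, le_rfl, hx⟩ hmem).2.2
        have hcons : IsPathOn (RE E) (consw e.1 (Q' (m i))) (lq' (m i) + 1) := by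
          apply consw_path hQ'E _ hxQ
          rw [hy']
          exact he
        have hjun : P i (lp' i) = consw e.1 (Q' (m i)) 0 := by rw [consw_zero, hx]
        refine ⟨cat (P i) (lp' i) (consw e.1 (Q' (m i))), lp' i + (lq' (m i) + 1),
          cat_path hPiE hcons hjun ?_, ?_, ?_, ?_⟩
        · intro v hv1 hv2
          rcases consw_verts hv2 with h | h
          · rw [Set.mem_singleton_iff] at h
            rw [h, hx]
          · exact (claim i (m i) v hv1 h).1
        · rw [cat_zero]; exact (hP i).2.1
        · rw [cat_end hjun, consw_succ (by omega), Nat.add_sub_cancel]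
          exact hQ'end (m i)
        · intro v hv
          rcases cat_verts hv with h | h
          · exact Or.inl h
          · rcases consw_verts h with h' | h'
            · rw [Set.mem_singleton_iff] at h'
              exact Or.inl ⟨lp' i, le_rfl, by rw [hx, h']⟩
            · exact Or.inr h'
      · -- direct gluing at a vertex of S
        have hjun : P i (lp' i) = Q' (m i) 0 := by rw [hm i, if_neg hx]
        refine ⟨cat (P i) (lp' i) (Q' (m i)), lp' i + lq' (m i),
          cat_path hPiE hQ'E hjun ?_, ?_, ?_, ?_⟩
        · exact fun v hv1 hv2 => (claim i (m i) v hv1 hv2).1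
        · rw [cat_zero]; exact (hP i).2.1
        · rw [cat_end hjun]; exact hQ'end (m i)
        · exact fun v hv => cat_verts hv
    choose PP lenPP hPP1 hPP2 hPP3 hPP4 using hbundle
    refine ⟨PP, lenPP, fun i => ⟨hPP1 i, hPP2 i, hPP3 i⟩, ?_⟩
    intro i j hij
    rw [Set.disjoint_left]
    intro v hvi hvj
    have hxcase : ∀ a b : Fin s, a ≠ b → v ∈ walkVerts (P a) (lp' a) →
        v ∈ walkVerts (Q' (m b)) (lq' (m b)) → False := by
      intro a b hab hva hvb
      obtain ⟨c1, c2, c3⟩ := claim a (m b) v hva hvb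
      rw [hm b] at c2
      by_cases hb : P b (lp' b) = e.1
      · rw [if_pos hb] at c2
        exact hyS (c2 ▸ c3)
      · rw [if_neg hb] at c2
        exact hab (hends_inj a b (by rw [← c1, ← c2]))
    rcases hPP4 i hvi with hPi | hQi <;> rcases hPP4 j hvj with hPj | hQj
    · exact Set.disjoint_left.mp (hPdis' i j hij) hPi hPj
    · exact hxcase i j hij hPi hQj
    · exact hxcase j i (Ne.symm hij) hPj hQi
    · exact Set.disjoint_left.mp
        (hQdis' (m i) (m j) (fun hc => hij (hm_inj i j hc))) hQi hQj

end Menger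

/-! ### From failure of a linkage to a small separator (possibly infinite graphs) -/

section Separator

attribute [local instance] Classical.propDecidable

/-- The vertices of a walk, as a finset. -/
noncomputable def vertsF (w : ℕ → V) (n : ℕ) : Finset V := (Finset.range (n + 1)).image w

theorem mem_vertsF {w : ℕ → V} {n : ℕ} {v : V} : v ∈ vertsF w n ↔ ∃ i ≤ n, w i = v := by
  simp only [vertsF, Finset.mem_image, Finset.mem_range]
  constructor
  · rintro ⟨i, hi, rfl⟩; exact ⟨i, by omega, rfl⟩
  · rintro ⟨i, hi, rfl⟩; exact ⟨i, by omega, rfl⟩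

/-- The edges of a walk, as a finset. -/
noncomputable def edgesF (w : ℕ → V) (n : ℕ) : Finset (V × V) :=
  (Finset.range n).image (fun i => (w i, w (i + 1)))

theorem exists_separator (R : V → V → Prop) (A B : Finset V) (Z : Set V) (s : ℕ)
    (hs : 1 ≤ s) (hAB : Disjoint A B)
    (hno : ¬ ExLinkage R (↑A) (↑B) Z s) :
    ∃ X : Finset V, X.card < s ∧
      ∀ w n, IsPathOn R w n → w 0 ∈ (↑A : Set V) → w n ∈ (↑B : Set V) →
        Disjoint (walkVerts w n) Z → ∃ i ≤ n, w i ∈ X := by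
  set F : Set (Finset V) := {f | ∃ w n, IsPathOn R w n ∧ w 0 ∈ (↑A : Set V) ∧
    w n ∈ (↑B : Set V) ∧ Disjoint (walkVerts w n) Z ∧ f = vertsF w n} with hFdef
  have hsub : ∀ Gs : Finset (Finset V), ↑Gs ⊆ F →
      ∃ X : Finset V, X.card ≤ s - 1 ∧ ∀ f ∈ Gs, (f ∩ X).Nonempty := by
    intro Gs hGs
    choose wit nit h1 h2 h3 h4 h5 using fun f : {f // f ∈ Gs} => hGs f.2
    set EE : Finset (V × V) :=
      Gs.attach.biUnion (fun f => edgesF (wit f) (nit f)) with hEEdef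
    have hEmono : ∀ u v, RE EE u v → R u v := by
      intro u v huv
      obtain ⟨f, _, hf⟩ := Finset.mem_biUnion.mp huv
      obtain ⟨i, hi, heq⟩ := Finset.mem_image.mp hf
      rw [Finset.mem_range] at hi
      have hu : wit f i = u := congrArg Prod.fst heq
      have hv : wit f (i + 1) = v := congrArg Prod.snd heq
      rw [← hu, ← hv]
      exact (h1 f).1 i hi
    have hEverts : ∀ u v, (u, v) ∈ EE → u ∉ Z ∧ v ∉ Z := by
      intro u v huv
      obtain ⟨f, _, hf⟩ := Finset.mem_biUnion.mp huv
      obtain ⟨i, hi, heq⟩ := Finset.mem_image.mp hf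
      rw [Finset.mem_range] at hi
      have hu : wit f i = u := congrArg Prod.fst heq
      have hv : wit f (i + 1) = v := congrArg Prod.snd heq
      constructor
      · exact fun hZ => Set.disjoint_left.mp (h4 f) ⟨i, by omega, hu⟩ hZ
      · exact fun hZ => Set.disjoint_left.mp (h4 f) ⟨i + 1, by omega, hv⟩ hZ
    have hnolink : ¬ MLink EE A B s := by
      intro ⟨P, len, hP, hPdis⟩
      apply hno
      refine ⟨P, len, fun i => ⟨(hP i).1.mono hEmono, (hP i).2.1, (hP i).2.2, ?_⟩, hPdis⟩
      have hlen : 1 ≤ len i := by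
        by_contra hl
        have h0 : len i = 0 := by omega
        have hb := (hP i).2.2
        rw [h0] at hb
        exact Finset.disjoint_left.mp hAB (hP i).2.1 hb
      rw [Set.disjoint_left]
      rintro v ⟨l, hl, rfl⟩ hvZ
      rcases lt_or_eq_of_le hl with h | h
      · exact (hEverts _ _ ((hP i).1.1 l h)).1 hvZ
      · have := (hP i).1.1 (len i - 1) (by omega)
        rw [show len i - 1 + 1 = len i by omega] at this
        rw [h] at hvZ
        exact (hEverts _ _ this).2 hvZ
    have hmensep : ∃ X : Finset V, MSep EE A B X ∧ X.card < s := by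
      by_contra hcon
      push_neg at hcon
      exact hnolink (finite_menger EE.card EE A B s le_rfl
        (fun X hX => by have := hcon X hX; omega))
    obtain ⟨X, hXsep, hXcard⟩ := hmensep
    refine ⟨X, by omega, ?_⟩
    intro f hf
    have hfpath : IsPathOn (RE EE) (wit ⟨f, hf⟩) (nit ⟨f, hf⟩) := by
      refine ⟨fun i hi => ?_, (h1 ⟨f, hf⟩).2⟩
      apply Finset.mem_biUnion.mpr
      exact ⟨⟨f, hf⟩, Finset.mem_attach _ _,
        Finset.mem_image.mpr ⟨i, Finset.mem_range.mpr hi, rfl⟩⟩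
    obtain ⟨i, hi, hiX⟩ := hXsep (wit ⟨f, hf⟩) (nit ⟨f, hf⟩) hfpath
      (by exact_mod_cast h2 ⟨f, hf⟩) (by exact_mod_cast h3 ⟨f, hf⟩)
    refine ⟨wit ⟨f, hf⟩ i, Finset.mem_inter.mpr ⟨?_, hiX⟩⟩
    have h5' : f = vertsF (wit ⟨f, hf⟩) (nit ⟨f, hf⟩) := h5 ⟨f, hf⟩
    have hm : wit ⟨f, hf⟩ i ∈ vertsF (wit ⟨f, hf⟩) (nit ⟨f, hf⟩) :=
      mem_vertsF.mpr ⟨i, hi, rfl⟩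
    rw [← h5'] at hm
    exact hm
  obtain ⟨X, hXcard, hX⟩ := transversal_compactness (s - 1) F hsub
  refine ⟨X, by omega, ?_⟩
  intro w n hp h0 hn hZ
  have hwF : vertsF w n ∈ F := ⟨w, n, hp, h0, hn, hZ, rfl⟩
  obtain ⟨v, hv⟩ := hX _ hwF
  rw [Finset.mem_inter, mem_vertsF] at hv
  obtain ⟨⟨i, hi, rfl⟩, hvX⟩ := hv
  exact ⟨i, hi, hvX⟩

end Separator

/-! ### Half-integral packings restricted to a vertex set -/

section Pack

attribute [local instance] Classical.propDecidable

/-- A half-integral packing of `m` directed odd cycles inside the vertex set `W`. -/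
def PackIn (R : V → V → Prop) (W : Set V) (m : ℕ) : Prop :=
  ∃ (c : Fin m → ℕ → V) (len : Fin m → ℕ),
    (∀ i, IsCycleOn R (c i) (len i) ∧ Odd (len i) ∧ walkVerts (c i) (len i) ⊆ W) ∧
    ∀ v, {i | v ∈ walkVerts (c i) (len i)}.ncard ≤ 2

theorem PackIn.single {R : V → V → Prop} {W : Set V} {c : ℕ → V} {m : ℕ}
    (hc : IsCycleOn R c m) (ho : Odd m) (hW : walkVerts c m ⊆ W) : PackIn R W 1 := by
  refine ⟨fun _ => c, fun _ => m, fun i => ⟨hc, ho, hW⟩, fun v => ?_⟩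
  have h1 : {i : Fin 1 | v ∈ walkVerts c m} ⊆ {(0 : Fin 1)} := by
    intro i _; exact Fin.fin_one_eq_zero i
  calc {i : Fin 1 | v ∈ walkVerts c m}.ncard ≤ ({(0 : Fin 1)} : Set (Fin 1)).ncard :=
        Set.ncard_le_ncard h1 (Set.finite_singleton _)
    _ = 1 := Set.ncard_singleton _
    _ ≤ 2 := by omega

theorem PackIn.combine {R : V → V → Prop} {C D : Set V} {m₁ m₂ k : ℕ}
    (h1 : PackIn R C m₁) (h2 : PackIn R D m₂)
    (hdis : ∀ v, v ∈ C → v ∈ D → False) (hk : k ≤ m₁ + m₂) :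
    HalfPackOdd R k := by
  obtain ⟨c1, l1, hc1, hn1⟩ := h1
  obtain ⟨c2, l2, hc2, hn2⟩ := h2
  refine ⟨fun i => if h : (i : ℕ) < m₁ then c1 ⟨i, h⟩
      else c2 ⟨(i : ℕ) - m₁, by have := i.2; omega⟩,
    fun i => if h : (i : ℕ) < m₁ then l1 ⟨i, h⟩
      else l2 ⟨(i : ℕ) - m₁, by have := i.2; omega⟩, ?_, ?_⟩
  · intro i
    by_cases h : (i : ℕ) < m₁
    · simp only [dif_pos h]
      exact ⟨(hc1 ⟨i, h⟩).1, (hc1 ⟨i, h⟩).2.1⟩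
    · simp only [dif_neg h]
      exact ⟨(hc2 _).1, (hc2 _).2.1⟩
  · intro v
    by_cases hvC : v ∈ C
    · have hvD : v ∉ D := fun h => hdis v hvC h
      have hmem : ∀ i : Fin k, v ∈ walkVerts
          (if h : (i : ℕ) < m₁ then c1 ⟨i, h⟩ else c2 ⟨(i : ℕ) - m₁, by have := i.2; omega⟩)
          (if h : (i : ℕ) < m₁ then l1 ⟨i, h⟩ else l2 ⟨(i : ℕ) - m₁, by have := i.2; omega⟩) →
          (i : ℕ) < m₁ := by
        intro i hv
        by_contra h
        rw [dif_neg h, dif_neg h] at hv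
        exact hvD ((hc2 _).2.2 hv)
      rcases Set.eq_empty_or_nonempty {i : Fin k | v ∈ walkVerts
          (if h : (i : ℕ) < m₁ then c1 ⟨i, h⟩ else c2 ⟨(i : ℕ) - m₁, by have := i.2; omega⟩)
          (if h : (i : ℕ) < m₁ then l1 ⟨i, h⟩ else l2 ⟨(i : ℕ) - m₁, by have := i.2; omega⟩)}
        with hemp | ⟨i₀, hi₀⟩
      · rw [hemp, Set.ncard_empty]; omega
      · have hm₁pos : 0 < m₁ := by have := hmem i₀ hi₀; omega
        refine le_trans (Set.ncard_le_ncard_of_injOn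
          (fun i => if h : (i : ℕ) < m₁ then (⟨i, h⟩ : Fin m₁) else ⟨0, hm₁pos⟩)
          ?_ ?_ (Set.toFinite _)) (hn1 v)
        · intro i hi
          have h := hmem i hi
          simp only [Set.mem_setOf_eq, dif_pos h] at hi ⊢
          exact hi
        · intro i hi j hj hij
          have h1 := hmem i hi
          have h2 := hmem j hj
          simp only [dif_pos h1, dif_pos h2] at hij
          have hval := congrArg Fin.val hij
          exact Fin.ext (show (i : ℕ) = (j : ℕ) from hval)
    · by_cases hvD : v ∈ D
      · have hmem : ∀ i : Fin k, v ∈ walkVerts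
            (if h : (i : ℕ) < m₁ then c1 ⟨i, h⟩ else c2 ⟨(i : ℕ) - m₁, by have := i.2; omega⟩)
            (if h : (i : ℕ) < m₁ then l1 ⟨i, h⟩ else l2 ⟨(i : ℕ) - m₁, by have := i.2; omega⟩) →
            ¬ (i : ℕ) < m₁ := by
          intro i hv h
          rw [dif_pos h, dif_pos h] at hv
          exact hvC ((hc1 _).2.2 hv)
        rcases Set.eq_empty_or_nonempty {i : Fin k | v ∈ walkVerts
            (if h : (i : ℕ) < m₁ then c1 ⟨i, h⟩ else c2 ⟨(i : ℕ) - m₁, by have := i.2; omega⟩)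
            (if h : (i : ℕ) < m₁ then l1 ⟨i, h⟩ else l2 ⟨(i : ℕ) - m₁, by have := i.2; omega⟩)}
          with hemp | ⟨i₀, hi₀⟩
        · rw [hemp, Set.ncard_empty]; omega
        · have hm₂pos : 0 < m₂ := by
            have h := hmem i₀ hi₀
            have := i₀.2
            omega
          refine le_trans (Set.ncard_le_ncard_of_injOn
            (fun i => if h : (i : ℕ) < m₁ then (⟨0, hm₂pos⟩ : Fin m₂)
              else ⟨(i : ℕ) - m₁, by have := i.2; omega⟩)
            ?_ ?_ (Set.toFinite _)) (hn2 v)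
          · intro i hi
            have h := hmem i hi
            simp only [Set.mem_setOf_eq, dif_neg h] at hi ⊢
            exact hi
          · intro i hi j hj hij
            have h1 := hmem i hi
            have h2 := hmem j hj
            simp only [dif_neg h1, dif_neg h2] at hij
            have hval := congrArg Fin.val hij
            have h3 : (i : ℕ) - m₁ = (j : ℕ) - m₁ := hval
            exact Fin.ext (by omega)
      · have hemp : {i : Fin k | v ∈ walkVerts
            (if h : (i : ℕ) < m₁ then c1 ⟨i, h⟩ else c2 ⟨(i : ℕ) - m₁, by have := i.2; omega⟩)
            (if h : (i : ℕ) < m₁ then l1 ⟨i, h⟩ else l2 ⟨(i : ℕ) - m₁, by have := i.2; omega⟩)}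
            = ∅ := by
          rw [Set.eq_empty_iff_forall_notMem]
          intro i hi
          simp only [Set.mem_setOf_eq] at hi
          by_cases h : (i : ℕ) < m₁
          · rw [dif_pos h, dif_pos h] at hi
            exact hvC ((hc1 _).2.2 hi)
          · rw [dif_neg h, dif_neg h] at hi
            exact hvD ((hc2 _).2.2 hi)
        rw [hemp, Set.ncard_empty]; omega

end Pack

section SideHit

attribute [local instance] Classical.propDecidable

theorem side_hit (R : V → V → Prop) (k t : ℕ)
    (ht : ∀ (W : Type) (R' : W → W → Prop), ¬ HalfPackOdd R' (k - 1) →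
        ∃ S : Set W, S.Finite ∧ S.ncard ≤ t ∧ HitsOdd R' S)
    (W : Set V) (hW : ¬ PackIn R W (k - 1)) :
    ∃ Sf : Finset V, Sf.card ≤ t ∧
      ∀ c m, IsCycleOn R c m → Odd m → (∀ i, i ≤ m → c i ∈ W) → ∃ i < m, c i ∈ Sf := by
  have hpack : ¬ HalfPackOdd (fun u v : {v // v ∈ W} => R u.1 v.1) (k - 1) := by
    intro ⟨c, len, h1, h2⟩
    apply hW
    refine ⟨fun i n => (c i n).1, len, fun i => ⟨?_, (h1 i).2, ?_⟩, ?_⟩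
    · obtain ⟨hpos, hwalk, hclose, hinj⟩ := (h1 i).1
      exact ⟨hpos, fun a ha => hwalk a ha, congrArg Subtype.val hclose,
        fun a ha b hb hab => hinj a ha b hb (Subtype.ext hab)⟩
    · rintro v ⟨a, ha, rfl⟩
      exact (c i a).2
    · intro v
      by_cases hv : v ∈ W
      · have heq : {i | v ∈ walkVerts (fun n => (c i n).1) (len i)}
            = {i | (⟨v, hv⟩ : {v // v ∈ W}) ∈ walkVerts (c i) (len i)} := by
          ext i
          simp only [Set.mem_setOf_eq]
          constructor
          · rintro ⟨a, ha, hav⟩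
            exact ⟨a, ha, Subtype.ext hav⟩
          · rintro ⟨a, ha, hav⟩
            exact ⟨a, ha, congrArg Subtype.val hav⟩
        rw [heq]
        exact h2 _
      · have heq : {i | v ∈ walkVerts (fun n => (c i n).1) (len i)} = ∅ := by
          rw [Set.eq_empty_iff_forall_notMem]
          rintro i ⟨a, ha, hav⟩
          exact hv (hav ▸ (c i a).2)
        rw [heq, Set.ncard_empty]; omega
  obtain ⟨S, hSfin, hScard, hShits⟩ := ht {v // v ∈ W} (fun u v => R u.1 v.1) hpack
  refine ⟨(hSfin.image Subtype.val).toFinset, ?_, ?_⟩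
  · have hc1 : (((hSfin.image Subtype.val).toFinset : Finset V) : Set V)
        = Subtype.val '' S := Set.Finite.coe_toFinset _
    have hc2 := Set.ncard_coe_finset (hSfin.image Subtype.val).toFinset
    rw [hc1, Set.ncard_image_of_injective S Subtype.val_injective] at hc2
    omega
  · intro c m hc ho hmem
    have hcyc : IsCycleOn (fun u v : {v // v ∈ W} => R u.1 v.1)
        (fun n => (⟨c (min n m), hmem _ (min_le_right n m)⟩ : {v // v ∈ W})) m := by
      obtain ⟨hpos, hwalk, hclose, hinj⟩ := hc
      refine ⟨hpos, ?_, ?_, ?_⟩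
      · intro i hi
        show R (c (min i m)) (c (min (i + 1) m))
        rw [Nat.min_eq_left (by omega), Nat.min_eq_left (by omega)]
        exact hwalk i hi
      · apply Subtype.ext
        show c (min m m) = c (min 0 m)
        rw [Nat.min_self, Nat.min_eq_left (by omega)]
        exact hclose
      · intro i hi j hj hij
        have hval : c (min i m) = c (min j m) := congrArg Subtype.val hij
        rw [Nat.min_eq_left (by omega), Nat.min_eq_left (by omega)] at hval
        exact hinj i hi j hj hval
    obtain ⟨i, hi, hiS⟩ := hShits _ m hcyc ho
    refine ⟨i, hi, ?_⟩
    rw [Set.Finite.mem_toFinset]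
    refine ⟨_, hiS, ?_⟩
    show c (min i m) = c i
    rw [Nat.min_eq_left (by omega)]

end SideHit

section Core

attribute [local instance] Classical.propDecidable

theorem core_linkage (R : V → V → Prop) (k t : ℕ) (hk : 2 ≤ k)
    (ht : ∀ (W : Type) (R' : W → W → Prop), ¬ HalfPackOdd R' (k - 1) →
        ∃ S : Set W, S.Finite ∧ S.ncard ≤ t ∧ HitsOdd R' S)
    (hG : ¬ HalfPackOdd R k)
    (T : Finset V) (hT : HitsOdd R (↑T : Set V))
    (hmin : ∀ T' : Finset V, HitsOdd R (↑T' : Set V) → T.card ≤ T'.card)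
    (A B : Finset V) (hA : A ⊆ T) (hB : B ⊆ T) (hAB : Disjoint A B)
    (hcard : A.card = B.card) (hts : 2 * t ≤ A.card) :
    ExLinkage R (↑A) (↑B) ((↑T : Set V) \ (↑A ∪ ↑B)) A.card := by
  rcases Nat.eq_zero_or_pos A.card with hs0 | hs
  · rw [hs0]
    exact ⟨fun i => Fin.elim0 i, fun i => Fin.elim0 i,
      fun i => Fin.elim0 i, fun i j _ => Fin.elim0 i⟩
  by_contra hno
  obtain ⟨X, hXcard, hXsep⟩ := exists_separator R A B _ A.card hs hAB hno
  set s := A.card with hsdef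
  set Z : Set V := (↑T : Set V) \ (↑A ∪ ↑B) with hZdef
  set S₀ : Set V := {v | v ∉ Z ∧ v ∉ (↑X : Set V)} with hS₀def
  set Cs : Set V := {v | v ∈ S₀ ∧ ∃ a ∈ (↑A : Set V), ReachIn R S₀ a v} with hCsdef
  set Ds : Set V := S₀ \ Cs with hDsdef
  have hclosed : ∀ u v, u ∈ Cs → R u v → v ∈ S₀ → v ∈ Cs := by
    rintro u v ⟨huS₀, a, ha, w, n, hwalk, h0, hend, hin⟩ hR hvS₀
    refine ⟨hvS₀, a, ha, (fun i => if i ≤ n then w i else v), n + 1, ?_, ?_, ?_, ?_⟩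
    · intro i hi
      show R (if i ≤ n then w i else v) (if i + 1 ≤ n then w (i + 1) else v)
      by_cases h : i + 1 ≤ n
      · rw [if_pos (show i ≤ n by omega), if_pos h]
        exact hwalk i (by omega)
      · have hieq : i = n := by omega
        rw [if_pos (show i ≤ n by omega), if_neg h, hieq, hend]
        exact hR
    · show (if 0 ≤ n then w 0 else v) = a
      rw [if_pos (show 0 ≤ n by omega)]; exact h0
    · show (if n + 1 ≤ n then w (n + 1) else v) = v
      rw [if_neg (show ¬ n + 1 ≤ n by omega)]
    · intro i hi
      show (if i ≤ n then w i else v) ∈ S₀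
      by_cases h : i ≤ n
      · rw [if_pos h]; exact hin i h
      · rw [if_neg h]; exact hvS₀
  have hBnotCs : ∀ b, b ∈ (↑B : Set V) → b ∉ Cs := by
    rintro b hb ⟨hbS₀, a, ha, w, n, hwalk, h0, hend, hin⟩
    obtain ⟨w', n', hp', h0', hend', hsub'⟩ := walk_to_path R n w hwalk
    have hZdisj : Disjoint (walkVerts w' n') Z := by
      rw [Set.disjoint_left]
      intro v hv hvZ
      obtain ⟨j, hj, hw⟩ := hsub' hv
      exact (hin j hj).1 (hw ▸ hvZ)
    obtain ⟨i, hi, hiX⟩ := hXsep w' n' hp' (by rw [h0', h0]; exact ha)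
      (by rw [hend', hend]; exact hb) hZdisj
    obtain ⟨j, hj, hw⟩ := hsub' (self_mem_walkVerts hi)
    exact (hin j hj).2 (by rw [hw]; exact hiX)
  have hACs : ∀ a, a ∈ (↑A : Set V) → a ∉ (↑X : Set V) → a ∈ Cs := by
    intro a ha haX
    have haS₀ : a ∈ S₀ := ⟨fun hZ => hZ.2 (Or.inl ha), haX⟩
    exact ⟨haS₀, a, ha, fun _ => a, 0, fun i hi => absurd hi (by omega), rfl, rfl,
      fun i _ => haS₀⟩
  have hCsDsdisj : ∀ v, v ∈ Cs → v ∈ Ds → False := fun v h1 h2 => h2.2 h1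
  have honeside : ∀ c m, IsCycleOn R c m → (∀ i, i ≤ m → c i ∈ S₀) →
      (∀ i, i ≤ m → c i ∈ Cs) ∨ (∀ i, i ≤ m → c i ∈ Ds) := by
    intro c m hc hS
    by_cases hex : ∃ i, i ≤ m ∧ c i ∈ Cs
    · left
      obtain ⟨i₀, hi₀m, hi₀⟩ := hex
      have step : ∀ i, i < m → c i ∈ Cs → c (i + 1) ∈ Cs := fun i hi h =>
        hclosed _ _ h (hc.2.1 i hi) (hS (i + 1) (by omega))
      have upFrom : ∀ b d, b ≤ m → c b ∈ Cs → b + d ≤ m → c (b + d) ∈ Cs := by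
        intro b d
        induction d with
        | zero => intro _ h _; exact h
        | succ d ihd =>
          intro hb h hd
          have := step (b + d) (by omega) (ihd hb h (by omega))
          rwa [show b + (d + 1) = b + d + 1 by omega]
      have hcm : c m ∈ Cs := by
        have := upFrom i₀ (m - i₀) hi₀m hi₀ (by omega)
        rwa [show i₀ + (m - i₀) = m by omega] at this
      have h00 : c 0 ∈ Cs := by rw [← hc.2.2.1]; exact hcm
      intro i hi
      have := upFrom 0 i (by omega) h00 (by omega)
      simpa using this
    · push_neg at hex
      exact Or.inr (fun i hi => ⟨hS i hi, hex i hi⟩)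
  have hcontr : ∀ T' : Finset V, HitsOdd R ↑T' → T'.card < T.card → False :=
    fun T' h1 h2 => absurd (hmin T' h1) (by omega)
  have hABT : A ∪ B ⊆ T := Finset.union_subset hA hB
  have hABcard : (A ∪ B).card = 2 * s := by
    rw [Finset.card_union_of_disjoint hAB]; omega
  have h2sT : 2 * s ≤ T.card := by rw [← hABcard]; exact Finset.card_le_card hABT
  have hBc : B.card = s := hcard.symm
  -- a cycle avoiding a superset of Z and X has all its vertices in S₀
  have hS₀mem : ∀ (T' : Finset V), (∀ v, v ∈ Z → v ∈ T') → X ⊆ T' →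
      ∀ c m, IsCycleOn R c m → (∀ i, i ≤ m → c i ∉ (↑T' : Set V)) →
      ∀ i, i ≤ m → c i ∈ S₀ := by
    intro T' hZT' hXT' c m hc hall i hi
    constructor
    · intro hZ
      exact hall i hi (hZT' _ hZ)
    · intro hX
      exact hall i hi (hXT' (by exact_mod_cast hX))
  have hextend : ∀ (T' : Finset V) c m, IsCycleOn R c m →
      (∀ i, i < m → c i ∉ (↑T' : Set V)) → ∀ i, i ≤ m → c i ∉ (↑T' : Set V) := by
    intro T' c m hc hmiss i hi
    rcases lt_or_eq_of_le hi with h | h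
    · exact hmiss i h
    · rw [h, hc.2.2.1]; exact hmiss 0 hc.1
  by_cases hpC : PackIn R Cs (k - 1)
  · -- Ds contains no odd cycle; take T' = (T \ B) ∪ X
    have hDsfree : ∀ c m, IsCycleOn R c m → Odd m → ¬ (∀ i, i ≤ m → c i ∈ Ds) := by
      intro c m hc ho hall
      apply hG
      exact hpC.combine
        (PackIn.single hc ho (fun v hv => by obtain ⟨i, hi, hw⟩ := hv; exact hw ▸ hall i hi))
        hCsDsdisj (by omega)
    apply hcontr ((T \ B) ∪ X)
    · intro c m hc ho
      by_contra hmiss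
      push_neg at hmiss
      have hall := hextend _ c m hc hmiss
      have hS₀all : ∀ i, i ≤ m → c i ∈ S₀ := by
        refine hS₀mem _ ?_ ?_ c m hc hall
        · intro v hv
          refine Finset.mem_union_left _ (Finset.mem_sdiff.mpr ⟨?_, ?_⟩)
          · exact_mod_cast hv.1
          · intro hvB
            exact hv.2 (Or.inr (by exact_mod_cast hvB))
        · exact Finset.subset_union_right
      obtain ⟨i₀, hi₀, hi₀T⟩ := hT c m hc ho
      have hi₀B : c i₀ ∈ (↑B : Set V) := by
        by_contra hB'
        refine hall i₀ (le_of_lt hi₀) ?_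
        refine Finset.mem_coe.mpr (Finset.mem_union_left _ (Finset.mem_sdiff.mpr
          ⟨by exact_mod_cast hi₀T, fun h => hB' (by exact_mod_cast h)⟩))
      have hi₀Ds : c i₀ ∈ Ds := ⟨hS₀all i₀ (by omega), hBnotCs _ hi₀B⟩
      rcases honeside c m hc hS₀all with hCs | hDs
      · exact absurd (hCs i₀ (by omega)) (fun h => hCsDsdisj _ h hi₀Ds)
      · exact hDsfree c m hc ho hDs
    · calc ((T \ B) ∪ X).card ≤ (T \ B).card + X.card := Finset.card_union_le _ _
        _ = T.card - B.card + X.card := by rw [Finset.card_sdiff_of_subset hB]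
        _ < T.card := by omega
  by_cases hpD : PackIn R Ds (k - 1)
  · -- Cs contains no odd cycle; take T' = (T \ A) ∪ X
    have hCsfree : ∀ c m, IsCycleOn R c m → Odd m → ¬ (∀ i, i ≤ m → c i ∈ Cs) := by
      intro c m hc ho hall
      apply hG
      exact (PackIn.single hc ho
          (fun v hv => by obtain ⟨i, hi, hw⟩ := hv; exact hw ▸ hall i hi)).combine
        hpD hCsDsdisj (by omega)
    apply hcontr ((T \ A) ∪ X)
    · intro c m hc ho
      by_contra hmiss
      push_neg at hmiss
      have hall := hextend _ c m hc hmiss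
      have hS₀all : ∀ i, i ≤ m → c i ∈ S₀ := by
        refine hS₀mem _ ?_ ?_ c m hc hall
        · intro v hv
          refine Finset.mem_union_left _ (Finset.mem_sdiff.mpr ⟨?_, ?_⟩)
          · exact_mod_cast hv.1
          · intro hvA
            exact hv.2 (Or.inl (by exact_mod_cast hvA))
        · exact Finset.subset_union_right
      obtain ⟨i₀, hi₀, hi₀T⟩ := hT c m hc ho
      have hi₀A : c i₀ ∈ (↑A : Set V) := by
        by_contra hA'
        refine hall i₀ (le_of_lt hi₀) ?_
        refine Finset.mem_coe.mpr (Finset.mem_union_left _ (Finset.mem_sdiff.mpr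
          ⟨by exact_mod_cast hi₀T, fun h => hA' (by exact_mod_cast h)⟩))
      have hi₀X : c i₀ ∉ (↑X : Set V) := fun h =>
        hall i₀ (le_of_lt hi₀) (Finset.mem_union_right _ (by exact_mod_cast h))
      have hi₀Cs : c i₀ ∈ Cs := hACs _ hi₀A hi₀X
      rcases honeside c m hc hS₀all with hCs | hDs
      · exact hCsfree c m hc ho hCs
      · exact absurd hi₀Cs (fun h => hCsDsdisj _ h (hDs i₀ (by omega)))
    · calc ((T \ A) ∪ X).card ≤ (T \ A).card + X.card := Finset.card_union_le _ _
        _ = T.card - A.card + X.card := by rw [Finset.card_sdiff_of_subset hA]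
        _ < T.card := by omega
  · -- both sides fail to pack; take T' = (T \ (A ∪ B)) ∪ X ∪ S_C ∪ S_D
    obtain ⟨SC, hSCcard, hSChits⟩ := side_hit R k t ht Cs hpC
    obtain ⟨SD, hSDcard, hSDhits⟩ := side_hit R k t ht Ds hpD
    apply hcontr (((T \ (A ∪ B)) ∪ X) ∪ (SC ∪ SD))
    · intro c m hc ho
      by_contra hmiss
      push_neg at hmiss
      have hall := hextend _ c m hc hmiss
      have hS₀all : ∀ i, i ≤ m → c i ∈ S₀ := by
        refine hS₀mem _ ?_ ?_ c m hc hall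
        · intro v hv
          refine Finset.mem_union_left _ (Finset.mem_union_left _
            (Finset.mem_sdiff.mpr ⟨by exact_mod_cast hv.1, ?_⟩))
          intro hvAB
          rcases Finset.mem_union.mp hvAB with h | h
          · exact hv.2 (Or.inl (by exact_mod_cast h))
          · exact hv.2 (Or.inr (by exact_mod_cast h))
        · exact Finset.Subset.trans Finset.subset_union_right Finset.subset_union_left
      rcases honeside c m hc hS₀all with hCs | hDs
      · obtain ⟨i, hi, hiSC⟩ := hSChits c m hc ho hCs
        exact hmiss i hi (Finset.mem_union_right _ (Finset.mem_union_left _ hiSC))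
      · obtain ⟨i, hi, hiSD⟩ := hSDhits c m hc ho hDs
        exact hmiss i hi (Finset.mem_union_right _ (Finset.mem_union_right _ hiSD))
    · have hc1 : (((T \ (A ∪ B)) ∪ X) ∪ (SC ∪ SD)).card
          ≤ ((T \ (A ∪ B)).card + X.card) + (SC.card + SD.card) := by
        calc (((T \ (A ∪ B)) ∪ X) ∪ (SC ∪ SD)).card
            ≤ ((T \ (A ∪ B)) ∪ X).card + (SC ∪ SD).card := Finset.card_union_le _ _
          _ ≤ ((T \ (A ∪ B)).card + X.card) + (SC.card + SD.card) :=
            Nat.add_le_add (Finset.card_union_le _ _) (Finset.card_union_le _ _)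
      have hc2 : (T \ (A ∪ B)).card = T.card - 2 * s := by
        rw [Finset.card_sdiff_of_subset hABT, hABcard]
      omega

end Core
/-- If every digraph with no half-integral packing of k−1 directed odd
cycles has a hitting set of size at most t, then in a digraph with no half-integral
packing of k directed odd cycles, every minimum-size hitting set of the directed
odd cycles is 2t-well-linked. -/
theorem minimum_hitting_set_well_linked (R : V → V → Prop) (k t : ℕ) (hk : 2 ≤ k)
    (ht : ∀ (W : Type) (R' : W → W → Prop), ¬ HalfPackOdd R' (k - 1) →
        ∃ S : Set W, S.Finite ∧ S.ncard ≤ t ∧ HitsOdd R' S)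
    (hG : ¬ HalfPackOdd R k)
    (T : Finset V) (hT : HitsOdd R (↑T : Set V))
    (hmin : ∀ T' : Finset V, HitsOdd R (↑T' : Set V) → T.card ≤ T'.card) :
    WellLinked R T (2 * t) := by
  intro A B hA hB hAB hcard hts
  constructor
  · exact core_linkage R k t hk ht hG T hT hmin A B hA hB hAB hcard hts
  · have h2 := core_linkage R k t hk ht hG T hT hmin B A hB hA hAB.symm hcard.symm
      (by rw [← hcard]; exact hts)
    rw [Set.union_comm] at h2
    rw [← hcard] at h2
    exact h2
end

section
/- Let k and r be positive integers with k ≥ r, and let G be a digraph. Every r-well-linked set of size 4k+1 in G is a k-linked set. -/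
variable {V : Type}

lemma reachIn_refl (R : V → V → Prop) {S : Set V} {u : V} (hu : u ∈ S) : ReachIn R S u u :=
  ⟨fun _ => u, 0, fun i hi => absurd hi (Nat.not_lt_zero i), rfl, rfl, fun _ _ => hu⟩

lemma reachIn_trans (R : V → V → Prop) {S : Set V} {u v w : V}
    (h1 : ReachIn R S u v) (h2 : ReachIn R S v w) : ReachIn R S u w := by
  obtain ⟨w1, n1, hw1, h10, h1n, h1m⟩ := h1
  obtain ⟨w2, n2, hw2, h20, h2n, h2m⟩ := h2
  refine ⟨fun i => if i ≤ n1 then w1 i else w2 (i - n1), n1 + n2, ?_, ?_, ?_, ?_⟩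
  · intro i hi
    show R (if i ≤ n1 then w1 i else w2 (i-n1)) (if i+1 ≤ n1 then w1 (i+1) else w2 (i+1-n1))
    by_cases h : i + 1 ≤ n1
    · rw [if_pos (by omega : i ≤ n1), if_pos h]
      exact hw1 i (by omega)
    · rw [if_neg h]
      by_cases h' : i ≤ n1
      · have hi1 : i = n1 := by omega
        subst hi1
        rw [if_pos h', h1n, ← h20]
        have e : i + 1 - i = 0 + 1 := by omega
        rw [e]
        exact hw2 0 (by omega)
      · rw [if_neg h']
        have e : i + 1 - n1 = (i - n1) + 1 := by omega
        rw [e]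
        exact hw2 (i - n1) (by omega)
  · show (if 0 ≤ n1 then w1 0 else w2 (0 - n1)) = u
    rw [if_pos (Nat.zero_le n1)]; exact h10
  · show (if n1 + n2 ≤ n1 then w1 (n1+n2) else w2 (n1+n2-n1)) = w
    by_cases h : n1 + n2 ≤ n1
    · have hn2 : n2 = 0 := by omega
      rw [if_pos h]
      have e : n1 + n2 = n1 := by omega
      rw [e, h1n, ← h20]
      rw [hn2] at h2n
      exact h2n
    · rw [if_neg h]
      have e : n1 + n2 - n1 = n2 := by omega
      rw [e]; exact h2n
  · intro i hi
    show (if i ≤ n1 then w1 i else w2 (i - n1)) ∈ S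
    split_ifs with h
    · exact h1m i h
    · exact h2m (i - n1) (by omega)

lemma reachIn_mem_left {R : V → V → Prop} {S : Set V} {u v : V} (h : ReachIn R S u v) : u ∈ S := by
  obtain ⟨w, n, _, h0, _, hm⟩ := h
  rw [← h0]; exact hm 0 (Nat.zero_le n)

def MutIn (R : V → V → Prop) (S : Set V) (u v : V) : Prop :=
  ReachIn R S u v ∧ ReachIn R S v u

lemma isSCCOf_class (R : V → V → Prop) {S : Set V} {s : V} (hs : s ∈ S) :
    IsSCCOf R S {v | MutIn R S v s} := by
  refine ⟨⟨s, reachIn_refl R hs, reachIn_refl R hs⟩, ?_, ?_, ?_⟩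
  · intro v hv; exact reachIn_mem_left hv.1
  · intro u hu v hv; exact reachIn_trans R hu.1 hv.2
  · intro C' hsub hS hstrong
    apply Set.Subset.antisymm _ hsub
    intro v hv
    have hsC : s ∈ C' := hsub ⟨reachIn_refl R hs, reachIn_refl R hs⟩
    exact ⟨hstrong v hv s hsC, hstrong s hsC v hv⟩

lemma isSCCOf_eq_of_mem {R : V → V → Prop} {S C₁ C₂ : Set V} (h1 : IsSCCOf R S C₁)
    (h2 : IsSCCOf R S C₂) {v : V} (hv1 : v ∈ C₁) (hv2 : v ∈ C₂) : C₁ = C₂ := by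
  obtain ⟨hne1, hS1, hst1, hmax1⟩ := h1
  obtain ⟨hne2, hS2, hst2, hmax2⟩ := h2
  have hstrong : StrongIn R S (C₁ ∪ C₂) := by
    intro a ha b hb
    have hav : ReachIn R S a v := by
      rcases ha with h | h
      · exact hst1 a h v hv1
      · exact hst2 a h v hv2
    have hvb : ReachIn R S v b := by
      rcases hb with h | h
      · exact hst1 v hv1 b h
      · exact hst2 v hv2 b h
    exact reachIn_trans R hav hvb
  have e1 : C₁ ∪ C₂ = C₁ := hmax1 _ Set.subset_union_left (Set.union_subset hS1 hS2) hstrong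
  have e2 : C₁ ∪ C₂ = C₂ := hmax2 _ Set.subset_union_right (Set.union_subset hS1 hS2) hstrong
  exact e1.symm.trans e2

lemma mutIn_refl (R : V → V → Prop) {W : Set V} {u : V} (hu : u ∈ W) : MutIn R W u u :=
  ⟨reachIn_refl R hu, reachIn_refl R hu⟩

lemma mutIn_symm {R : V → V → Prop} {W : Set V} {u v : V} (h : MutIn R W u v) :
    MutIn R W v u := ⟨h.2, h.1⟩

lemma mutIn_trans {R : V → V → Prop} {W : Set V} {u v w : V} (h1 : MutIn R W u v)
    (h2 : MutIn R W v w) : MutIn R W u w :=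
  ⟨reachIn_trans R h1.1 h2.1, reachIn_trans R h2.2 h1.2⟩

open Classical in
noncomputable def fIdx (R : V → V → Prop) (W : Set V) (S : Finset V) (v : V) : ℕ :=
  (S.filter (fun u => ReachIn R W u v)).card

open Classical in
lemma fIdx_mono (R : V → V → Prop) (W : Set V) (S : Finset V) {u v : V}
    (h : ReachIn R W u v) : fIdx R W S u ≤ fIdx R W S v := by
  classical
  apply Finset.card_le_card
  intro p hp
  simp only [Finset.mem_filter] at hp ⊢
  exact ⟨hp.1, reachIn_trans R hp.2 h⟩

open Classical in
lemma reach_of_fIdx_le (R : V → V → Prop) (W : Set V) (S : Finset V) {u v : V}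
    (hu : u ∈ S) (hv : v ∈ S) (hvW : v ∈ W) (h : ReachIn R W u v)
    (hle : fIdx R W S v ≤ fIdx R W S u) : ReachIn R W v u := by
  classical
  have hsub : S.filter (fun p => ReachIn R W p u) ⊆ S.filter (fun p => ReachIn R W p v) := by
    intro p hp
    simp only [Finset.mem_filter] at hp ⊢
    exact ⟨hp.1, reachIn_trans R hp.2 h⟩
  have heq := Finset.eq_of_subset_of_card_le hsub hle
  have : v ∈ S.filter (fun p => ReachIn R W p v) := by
    simp only [Finset.mem_filter]
    exact ⟨hv, reachIn_refl R hvW⟩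
  rw [← heq] at this
  simp only [Finset.mem_filter] at this
  exact this.2

open Classical in
noncomputable def hIdx (R : V → V → Prop) (W : Set V) (l₀ : List V) (v : V) : ℕ :=
  l₀.findIdx (fun u => decide (MutIn R W u v))

open Classical in
lemma hIdx_lt (R : V → V → Prop) (W : Set V) (l₀ : List V) {v : V} (hv : v ∈ l₀)
    (hvW : v ∈ W) : hIdx R W l₀ v < l₀.length :=
  List.findIdx_lt_length_of_exists ⟨v, hv, decide_eq_true (mutIn_refl R hvW)⟩

open Classical in
lemma mutIn_of_hIdx_eq (R : V → V → Prop) (W : Set V) (l₀ : List V) {u v : V}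
    (hu : u ∈ l₀) (hv : v ∈ l₀) (huW : u ∈ W) (hvW : v ∈ W)
    (he : hIdx R W l₀ u = hIdx R W l₀ v) : MutIn R W u v := by
  have h1 : hIdx R W l₀ u < l₀.length := hIdx_lt R W l₀ hu huW
  have h2 : hIdx R W l₀ v < l₀.length := hIdx_lt R W l₀ hv hvW
  have p1 : MutIn R W (l₀[hIdx R W l₀ u]'h1) u :=
    of_decide_eq_true (List.findIdx_getElem (w := h1))
  have p2 : MutIn R W (l₀[hIdx R W l₀ v]'h2) v :=
    of_decide_eq_true (List.findIdx_getElem (w := h2))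
  have emem : l₀[hIdx R W l₀ u]'h1 = l₀[hIdx R W l₀ v]'h2 := by
    congr 1
  rw [← emem] at p2
  exact mutIn_trans (mutIn_symm p1) p2

open Classical in
lemma hIdx_eq_of_mutIn (R : V → V → Prop) (W : Set V) (l₀ : List V) {u v : V}
    (h : MutIn R W u v) : hIdx R W l₀ u = hIdx R W l₀ v := by
  unfold hIdx
  congr 1
  funext w
  rw [decide_eq_decide]
  exact ⟨fun hw => mutIn_trans hw h, fun hw => mutIn_trans hw (mutIn_symm h)⟩

/-- Every r-well-linked set of size 4k+1 is k-linked (for k ≥ r ≥ 1). -/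
theorem well_linked_is_linked (R : V → V → Prop) (k r : ℕ) (hr : 0 < r)
    (hkr : r ≤ k) (T : Finset V) (hcard : T.card = 4 * k + 1)
    (hwl : WellLinked R T r) :
    KLinked R T k := by
  classical
  intro X hX
  set W : Set V := ((↑X : Set V))ᶜ with hWdef
  set S : Finset V := T \ X with hSdef
  have hSsubT : S ⊆ T := Finset.sdiff_subset
  have hSW : ∀ v ∈ S, v ∈ W := by
    intro v hv
    rw [hSdef, Finset.mem_sdiff] at hv
    rw [hWdef, Set.mem_compl_iff, Finset.mem_coe]
    exact hv.2
  have hk1 : 1 ≤ k := hr.trans_le hkr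
  set m := S.card with hm
  have hmval : m + (T ∩ X).card = 4 * k + 1 := by
    rw [hm, hSdef, Finset.card_sdiff_add_card_inter, hcard]
  have hTXle : (T ∩ X).card ≤ X.card := Finset.card_le_card Finset.inter_subset_right
  have hkm : 2 * k + 1 ≤ m := by omega
  -- the base list and keys
  set l₀ := S.toList with hl₀def
  have hl₀len : l₀.length = m := Finset.length_toList S
  have hl₀mem : ∀ v, v ∈ l₀ ↔ v ∈ S := fun v => Finset.mem_toList
  have hhlt : ∀ v ∈ S, hIdx R W l₀ v < m := by
    intro v hv
    rw [← hl₀len]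
    exact hIdx_lt R W l₀ ((hl₀mem v).mpr hv) (hSW v hv)
  set key : V → ℕ := fun v => hIdx R W l₀ v + (m + 1) * fIdx R W S v with hkeydef
  have hdec_h : ∀ v ∈ S, key v % (m + 1) = hIdx R W l₀ v := by
    intro v hv
    rw [hkeydef]
    simp only []
    rw [Nat.add_mul_mod_self_left, Nat.mod_eq_of_lt (by have := hhlt v hv; omega)]
  have hdec_f : ∀ v ∈ S, key v / (m + 1) = fIdx R W S v := by
    intro v hv
    rw [hkeydef]
    simp only []
    rw [Nat.add_mul_div_left _ _ (Nat.succ_pos m),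
      Nat.div_eq_of_lt (by have := hhlt v hv; omega), Nat.zero_add]
  have hmut_of_key : ∀ u ∈ S, ∀ v ∈ S, key u = key v → MutIn R W u v := by
    intro u hu v hv he
    have h1 : hIdx R W l₀ u = hIdx R W l₀ v := by
      rw [← hdec_h u hu, ← hdec_h v hv, he]
    exact mutIn_of_hIdx_eq R W l₀ ((hl₀mem u).mpr hu) ((hl₀mem v).mpr hv)
      (hSW u hu) (hSW v hv) h1
  -- sorted list
  set l := l₀.mergeSort (fun a b => decide (key a ≤ key b)) with hldef
  have hperm : l.Perm l₀ := List.mergeSort_perm l₀ _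
  have hllen : l.length = m := by rw [hperm.length_eq, hl₀len]
  have hlnodup : l.Nodup := hperm.nodup_iff.mpr (Finset.nodup_toList S)
  have hlmem : ∀ v, v ∈ l ↔ v ∈ S := fun v => (hperm.mem_iff).trans (hl₀mem v)
  have hsorted : ∀ (i j : ℕ) (_ : i < l.length) (hj : j < l.length), i < j →
      key (l[i]'(by omega)) ≤ key (l[j]'hj) := by
    have hs := List.pairwise_mergeSort (le := fun a b => decide (key a ≤ key b))
      (fun a b c hab hbc =>
        decide_eq_true (le_trans (of_decide_eq_true hab) (of_decide_eq_true hbc)))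
      (fun a b => by
        simp only [Bool.or_eq_true, decide_eq_true_eq]
        exact le_total (key a) (key b)) l₀
    rw [← hldef] at hs
    have hp := List.pairwise_iff_getElem.mp hs
    intro i j hi hj hij
    exact of_decide_eq_true (hp i j (by omega) hj hij)
  -- the sets A and B
  set Bf := (l.take k).toFinset with hBfdef
  set Af := (l.drop (m - k)).toFinset with hAfdef
  have hBcard : Bf.card = k := by
    rw [hBfdef, List.toFinset_card_of_nodup ((List.take_sublist k l).nodup hlnodup),
      List.length_take, hllen, inf_eq_left.mpr (by omega : k ≤ m)]
  have hAcard : Af.card = k := by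
    rw [hAfdef, List.toFinset_card_of_nodup ((List.drop_sublist (m - k) l).nodup hlnodup),
      List.length_drop, hllen]
    omega
  have hBsubS : Bf ⊆ S := by
    intro v hv
    rw [hBfdef, List.mem_toFinset] at hv
    exact (hlmem v).mp (List.mem_of_mem_take hv)
  have hAsubS : Af ⊆ S := by
    intro v hv
    rw [hAfdef, List.mem_toFinset] at hv
    exact (hlmem v).mp (List.mem_of_mem_drop hv)
  have hdisjAB : Disjoint Af Bf := by
    rw [Finset.disjoint_left]
    intro a haA haB
    rw [hAfdef, List.mem_toFinset, List.mem_drop_iff_getElem] at haA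
    obtain ⟨i, hi, hia⟩ := haA
    rw [hBfdef, List.mem_toFinset, List.mem_take_iff_getElem] at haB
    obtain ⟨j, hj, hja⟩ := haB
    have : (l[m - k + i]'(by omega)) = (l[j]'(by
        simp only [lt_inf_iff] at hj; exact hj.2)) := by rw [hia, hja]
    rw [hlnodup.getElem_inj_iff] at this
    simp only [lt_inf_iff] at hj
    omega
  have hF1 : ∀ b ∈ Bf, ∀ u ∈ S, u ∉ Bf → key b ≤ key u := by
    intro b hb u huS huB
    rw [hBfdef, List.mem_toFinset, List.mem_take_iff_getElem] at hb
    obtain ⟨i, hi, hib⟩ := hb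
    have hul : u ∈ l := (hlmem u).mpr huS
    have hud : u ∈ l.drop k := by
      have hsplit : u ∈ l.take k ++ l.drop k := by
        rw [List.take_append_drop]; exact hul
      rcases List.mem_append.mp hsplit with h | h
      · exact absurd (by rw [hBfdef, List.mem_toFinset]; exact h) huB
      · exact h
    rw [List.mem_drop_iff_getElem] at hud
    obtain ⟨j, hj, hju⟩ := hud
    simp only [lt_inf_iff] at hi
    rw [← hib, ← hju]
    exact hsorted i (k + j) (by omega) (by omega) (by omega)
  have hF2 : ∀ a ∈ Af, ∀ u ∈ S, u ∉ Af → key u ≤ key a := by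
    intro a ha u huS huA
    rw [hAfdef, List.mem_toFinset, List.mem_drop_iff_getElem] at ha
    obtain ⟨i, hi, hia⟩ := ha
    have hul : u ∈ l := (hlmem u).mpr huS
    have hut : u ∈ l.take (m - k) := by
      have hsplit : u ∈ l.take (m - k) ++ l.drop (m - k) := by
        rw [List.take_append_drop]; exact hul
      rcases List.mem_append.mp hsplit with h | h
      · exact h
      · exact absurd (by rw [hAfdef, List.mem_toFinset]; exact h) huA
    rw [List.mem_take_iff_getElem] at hut
    obtain ⟨j, hj, hju⟩ := hut
    simp only [lt_inf_iff] at hj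
    rw [← hia, ← hju]
    exact hsorted j (m - k + i) (by omega) (by omega) (by omega)
  -- apply well-linkedness
  obtain ⟨hlink, -⟩ := hwl Af Bf (hAsubS.trans hSsubT) (hBsubS.trans hSsubT) hdisjAB
    (by rw [hAcard, hBcard]) (by rw [hAcard]; exact hkr)
  rw [hAcard] at hlink
  obtain ⟨P, len, hP, hPd⟩ := hlink
  -- bad and good paths
  set Bad := Finset.univ.filter (fun i : Fin k => ∃ v ∈ walkVerts (P i) (len i), v ∈ X)
    with hBaddef
  have hABsubS : ∀ v : V, v ∈ (↑Af ∪ ↑Bf : Set V) → v ∈ S := by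
    intro v hv
    rcases hv with h | h
    · exact hAsubS (Finset.mem_coe.mp h)
    · exact hBsubS (Finset.mem_coe.mp h)
  have hBadcard : Bad.card ≤ (X \ T).card := by
    apply Finset.card_le_card_of_injOn
      (fun i => if hh : ∃ v ∈ walkVerts (P i) (len i), v ∈ X then hh.choose else P i 0)
    · intro i hi
      rw [hBaddef, Finset.mem_coe, Finset.mem_filter] at hi
      obtain ⟨-, hex⟩ := hi
      beta_reduce
      rw [dif_pos hex]
      obtain ⟨hv1, hv2⟩ := hex.choose_spec
      rw [Finset.mem_coe, Finset.mem_sdiff]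
      refine ⟨hv2, fun hvT => ?_⟩
      by_cases hab : hex.choose ∈ (↑Af ∪ ↑Bf : Set V)
      · have hvS := hABsubS _ hab
        rw [hSdef, Finset.mem_sdiff] at hvS
        exact hvS.2 hv2
      · exact (Set.disjoint_left.mp (hP i).2.2.2 hv1) ⟨Finset.mem_coe.mpr hvT, hab⟩
    · intro i hi j hj heq
      by_contra hne
      rw [Finset.mem_coe, hBaddef, Finset.mem_filter] at hi hj
      simp only [] at heq
      rw [dif_pos hi.2, dif_pos hj.2] at heq
      have h1 := hi.2.choose_spec.1
      have h2 := hj.2.choose_spec.1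
      rw [heq] at h1
      exact (Set.disjoint_left.mp (hPd i j hne) (heq ▸ hi.2.choose_spec.1)) h2
  set Good := (Finset.univ : Finset (Fin k)) \ Bad with hGooddef
  have hGoodBad : Good.card + Bad.card = k := by
    rw [hGooddef, Finset.card_sdiff_of_subset (Finset.subset_univ Bad)]
    have : Bad.card ≤ (Finset.univ : Finset (Fin k)).card :=
      Finset.card_le_card (Finset.subset_univ Bad)
    simp only [Finset.card_univ, Fintype.card_fin] at this ⊢
    omega
  have hGoodpath : ∀ i ∈ Good, ReachIn R W (P i 0) (P i (len i)) := by
    intro i hi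
    rw [hGooddef, Finset.mem_sdiff, hBaddef, Finset.mem_filter] at hi
    have hnb : ¬ ∃ v ∈ walkVerts (P i) (len i), v ∈ X := fun hc =>
      hi.2 ⟨Finset.mem_univ i, hc⟩
    refine ⟨P i, len i, (hP i).1.1, rfl, rfl, fun j hj => ?_⟩
    rw [hWdef, Set.mem_compl_iff, Finset.mem_coe]
    exact fun hx => hnb ⟨P i j, ⟨j, hj, rfl⟩, hx⟩
  have hsA : ∀ i, P i 0 ∈ Af := fun i => Finset.mem_coe.mp (hP i).2.1
  have heB : ∀ i, P i (len i) ∈ Bf := fun i => Finset.mem_coe.mp (hP i).2.2.1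
  have hsS : ∀ i, P i 0 ∈ S := fun i => hAsubS (hsA i)
  have heS : ∀ i, P i (len i) ∈ S := fun i => hBsubS (heB i)
  have hsnB : ∀ i, P i 0 ∉ Bf := fun i => Finset.disjoint_left.mp hdisjAB (hsA i)
  have henA : ∀ i, P i (len i) ∉ Af := fun i => Finset.disjoint_right.mp hdisjAB (heB i)
  -- keys of good endpoints
  have hkey_es : ∀ i ∈ Good, key (P i (len i)) = key (P i 0) := by
    intro i hi
    have h1 : key (P i (len i)) ≤ key (P i 0) := hF1 _ (heB i) _ (hsS i) (hsnB i)
    have hreach := hGoodpath i hi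
    have hf_se : fIdx R W S (P i 0) ≤ fIdx R W S (P i (len i)) := fIdx_mono R W S hreach
    have hf_es : fIdx R W S (P i (len i)) ≤ fIdx R W S (P i 0) := by
      have hdd := Nat.div_le_div_right (c := m + 1) h1
      rwa [hdec_f _ (heS i), hdec_f _ (hsS i)] at hdd
    have hfeq : fIdx R W S (P i (len i)) = fIdx R W S (P i 0) :=
      le_antisymm hf_es hf_se
    have hback : ReachIn R W (P i (len i)) (P i 0) :=
      reach_of_fIdx_le R W S (hsS i) (heS i) (hSW _ (heS i)) hreach hf_es
    have hheq : hIdx R W l₀ (P i (len i)) = hIdx R W l₀ (P i 0) :=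
      hIdx_eq_of_mutIn R W l₀ ⟨hback, hreach⟩
    rw [hkeydef]
    simp only []
    rw [hheq, hfeq]
  -- fix a good path
  have hGoodne : Good.Nonempty := by
    rw [← Finset.card_pos]
    have hXT : (X \ T).card + (X ∩ T).card = X.card := Finset.card_sdiff_add_card_inter X T
    omega
  obtain ⟨i₀, hi₀⟩ := hGoodne
  set s₀ := P i₀ 0 with hs₀def
  set κ := key s₀ with hκdef
  have hkGood : ∀ i ∈ Good, key (P i (len i)) = κ ∧ key (P i 0) = κ := by
    intro i hi
    have h1 : key (P i (len i)) ≤ κ := hF1 _ (heB i) _ (hsS i₀) (hsnB i₀)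
    have h2 : κ ≤ key (P i 0) := by
      have := hF1 _ (heB i₀) _ (hsS i) (hsnB i)
      rw [hkey_es i₀ hi₀] at this
      exact this
    have h3 := hkey_es i hi
    omega
  set C := {v | MutIn R W v s₀} with hCdef
  have hs₀S : s₀ ∈ S := hsS i₀
  have hSCC : IsSCCOf R W C := isSCCOf_class R (hSW _ hs₀S)
  have hCmem : ∀ u ∈ S, key u = κ → u ∈ C := by
    intro u hu hk
    have hh : hIdx R W l₀ u = hIdx R W l₀ s₀ := by
      rw [← hdec_h u hu, ← hdec_h s₀ hs₀S, hk, hκdef]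
    exact mutIn_of_hIdx_eq R W l₀ ((hl₀mem u).mpr hu) ((hl₀mem s₀).mpr hs₀S)
      (hSW u hu) (hSW s₀ hs₀S) hh
  -- counting
  set Lt := S.filter (fun u => key u < κ) with hLtdef
  set Gt := S.filter (fun u => κ < key u) with hGtdef
  set Lv := S.filter (fun u => key u = κ) with hLvdef
  have hpart : Lv.card + Lt.card + Gt.card = m := by
    have hun : Lt ∪ Lv ∪ Gt = S := by
      ext u
      simp only [hLtdef, hLvdef, hGtdef, Finset.mem_union, Finset.mem_filter]
      constructor
      · rintro ((⟨h, -⟩ | ⟨h, -⟩) | ⟨h, -⟩) <;> exact h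
      · intro hu
        rcases lt_trichotomy (key u) κ with h | h | h
        · exact Or.inl (Or.inl ⟨hu, h⟩)
        · exact Or.inl (Or.inr ⟨hu, h⟩)
        · exact Or.inr ⟨hu, h⟩
    have hd1 : Disjoint Lt Lv := by
      rw [Finset.disjoint_left]
      intro a ha hb
      rw [hLtdef, Finset.mem_filter] at ha
      rw [hLvdef, Finset.mem_filter] at hb
      omega
    have hd2 : Disjoint (Lt ∪ Lv) Gt := by
      rw [Finset.disjoint_left]
      intro a ha hb
      rw [hGtdef, Finset.mem_filter] at hb
      rcases Finset.mem_union.mp ha with h | h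
      · rw [hLtdef, Finset.mem_filter] at h; omega
      · rw [hLvdef, Finset.mem_filter] at h; omega
    have := Finset.card_union_of_disjoint hd2
    rw [hun] at this
    rw [Finset.card_union_of_disjoint hd1] at this
    omega
  have hinjE : Set.InjOn (fun i => P i (len i)) ↑Good := by
    intro i _ j _ heq
    simp only [] at heq
    by_contra hne
    exact (Set.disjoint_left.mp (hPd i j hne) ⟨len i, le_refl _, rfl⟩)
      (heq ▸ ⟨len j, le_refl _, rfl⟩)
  have hinjS : Set.InjOn (fun i => P i 0) ↑Good := by
    intro i _ j _ heq
    simp only [] at heq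
    by_contra hne
    exact (Set.disjoint_left.mp (hPd i j hne) ⟨0, Nat.zero_le _, rfl⟩)
      (heq ▸ ⟨0, Nat.zero_le _, rfl⟩)
  have hLt : Lt.card + Good.card ≤ k := by
    have himg : (Good.image (fun i => P i (len i))).card = Good.card :=
      Finset.card_image_of_injOn hinjE
    have hsub : Lt ∪ Good.image (fun i => P i (len i)) ⊆ Bf := by
      intro u hu
      rcases Finset.mem_union.mp hu with h | h
      · rw [hLtdef, Finset.mem_filter] at h
        by_contra hnB
        have := hF1 _ (heB i₀) _ h.1 hnB
        rw [hkey_es i₀ hi₀] at this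
        have h2 : κ ≤ key u := this
        omega
      · obtain ⟨i, hi, rfl⟩ := Finset.mem_image.mp h
        exact heB i
    have hdisj : Disjoint Lt (Good.image (fun i => P i (len i))) := by
      rw [Finset.disjoint_left]
      intro a ha hb
      rw [hLtdef, Finset.mem_filter] at ha
      obtain ⟨i, hi, rfl⟩ := Finset.mem_image.mp hb
      have := (hkGood i hi).1
      omega
    have := Finset.card_le_card hsub
    rw [Finset.card_union_of_disjoint hdisj, himg, hBcard] at this
    exact this
  have hGt : Gt.card + Good.card ≤ k := by
    have himg : (Good.image (fun i => P i 0)).card = Good.card :=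
      Finset.card_image_of_injOn hinjS
    have hsub : Gt ∪ Good.image (fun i => P i 0) ⊆ Af := by
      intro u hu
      rcases Finset.mem_union.mp hu with h | h
      · rw [hGtdef, Finset.mem_filter] at h
        by_contra hnA
        have := hF2 _ (hsA i₀) _ h.1 hnA
        have h2 : key u ≤ κ := this
        omega
      · obtain ⟨i, hi, rfl⟩ := Finset.mem_image.mp h
        exact hsA i
    have hdisj : Disjoint Gt (Good.image (fun i => P i 0)) := by
      rw [Finset.disjoint_left]
      intro a ha hb
      rw [hGtdef, Finset.mem_filter] at ha
      obtain ⟨i, hi, rfl⟩ := Finset.mem_image.mp hb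
      have := (hkGood i hi).2
      omega
    have := Finset.card_le_card hsub
    rw [Finset.card_union_of_disjoint hdisj, himg, hAcard] at this
    exact this
  -- the big SCC count
  have hfinT : ((↑T : Set V) ∩ C).Finite :=
    Set.Finite.subset (T.finite_toSet) Set.inter_subset_left
  have hTC : Lv.card ≤ ((↑T : Set V) ∩ C).ncard := by
    rw [← Set.ncard_coe_finset Lv]
    apply Set.ncard_le_ncard _ hfinT
    intro u hu
    rw [Finset.mem_coe, hLvdef, Finset.mem_filter] at hu
    exact ⟨Finset.mem_coe.mpr (hSsubT hu.1), hCmem u hu.1 hu.2⟩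
  have hXT : (X \ T).card + (X ∩ T).card = X.card := Finset.card_sdiff_add_card_inter X T
  have hXTcomm : (T ∩ X).card = (X ∩ T).card := by rw [Finset.inter_comm]
  have hbigC : T.card < 2 * ((↑T : Set V) ∩ C).ncard := by
    rw [hcard]
    omega
  refine ⟨C, ⟨hSCC, hbigC⟩, ?_⟩
  rintro C' ⟨hscc', hbig'⟩
  have hfinT' : ((↑T : Set V) ∩ C').Finite :=
    Set.Finite.subset (T.finite_toSet) Set.inter_subset_left
  have hex : ∃ v, v ∈ ((↑T : Set V) ∩ C) ∧ v ∈ ((↑T : Set V) ∩ C') := by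
    by_contra hcon
    push_neg at hcon
    have hdisj : Disjoint ((↑T : Set V) ∩ C) ((↑T : Set V) ∩ C') := by
      rw [Set.disjoint_left]
      intro a ha hb
      exact hcon a ha hb
    have hun := Set.ncard_union_eq hdisj hfinT hfinT'
    have hle : (((↑T : Set V) ∩ C) ∪ ((↑T : Set V) ∩ C')).ncard ≤ T.card := by
      rw [← Set.ncard_coe_finset T]
      exact Set.ncard_le_ncard
        (Set.union_subset Set.inter_subset_left Set.inter_subset_left) T.finite_toSet
    omega
  obtain ⟨v, hv1, hv2⟩ := hex
  exact isSCCOf_eq_of_mem hscc' hSCC hv2.2 hv1.2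
end

section
/- Let G be a digraph and let B be a bramble in G. Then there exists a directed path P in G intersecting every member of B. -/
variable {V : Type}

section BrambleHelpers

variable {R : V → V → Prop}

lemma isPathOn_mono {w : ℕ → V} {n n' : ℕ} (h : IsPathOn R w n) (hn : n' ≤ n) :
    IsPathOn R w n' :=
  ⟨fun i hi => h.1 i (lt_of_lt_of_le hi hn),
   fun i hi j hj hij => h.2 i (le_trans hi hn) j (le_trans hj hn) hij⟩

/-- Any walk can be shortened to a path with the same endpoints and vertices in the
same set. -/
lemma walk_to_path_s9 : ∀ (n : ℕ) (w : ℕ → V) (T : Set V), IsWalkOn R w n →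
    (∀ i ≤ n, w i ∈ T) →
    ∃ q m, IsPathOn R q m ∧ q 0 = w 0 ∧ q m = w n ∧ ∀ i ≤ m, q i ∈ T := by
  intro n
  induction n using Nat.strong_induction_on with
  | _ n IH =>
    intro w T hw hT
    by_cases hinj : ∀ i ≤ n, ∀ j ≤ n, w i = w j → i = j
    · exact ⟨w, n, ⟨hw, hinj⟩, rfl, rfl, hT⟩
    · push_neg at hinj
      obtain ⟨i, hi, j, hj, heq, hne⟩ := hinj
      -- produce a strictly shorter walk with the same endpoints
      have key : ∀ a b : ℕ, a < b → b ≤ n → w a = w b →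
          ∃ q m, IsPathOn R q m ∧ q 0 = w 0 ∧ q m = w n ∧ ∀ i ≤ m, q i ∈ T := by
        intro a b hab hbn hw_ab
        rcases eq_or_lt_of_le hbn with hbn' | hbn'
        · -- b = n : truncate the walk at a
          subst hbn'
          obtain ⟨q, m, hq, h0, hm, hmem⟩ := IH a hab w T
            (fun k hk => hw k (lt_trans hk hab)) (fun k hk => hT k (le_of_lt (lt_of_le_of_lt hk hab)))
          exact ⟨q, m, hq, h0, by rw [hm, hw_ab], hmem⟩
        · -- b < n : cut out the segment (a, b]
          set d := b - a with hd
          have hd0 : 0 < d := by omega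
          set w' : ℕ → V := fun k => if k ≤ a then w k else w (k + d) with hw'
          have hlen : n - d < n := by omega
          have hwalk' : IsWalkOn R w' (n - d) := by
            intro k hk
            rcases lt_trichotomy k a with h | h | h
            · have e1 : w' k = w k := if_pos (le_of_lt h)
              have e2 : w' (k + 1) = w (k + 1) := if_pos h
              rw [e1, e2]
              exact hw k (by omega)
            · subst h
              have e1 : w' k = w k := if_pos le_rfl
              have e2 : w' (k + 1) = w (b + 1) := by
                have : ¬ (k + 1 ≤ k) := by omega
                simp only [hw', this, if_false]
                congr 1
                omega
              rw [e1, e2, hw_ab]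
              exact hw b (by omega)
            · have e1 : w' k = w (k + d) := if_neg (by omega)
              have e2 : w' (k + 1) = w (k + d + 1) := by
                have : ¬ (k + 1 ≤ a) := by omega
                simp only [hw', this, if_false]
                congr 1
                omega
              rw [e1, e2]
              exact hw (k + d) (by omega)
          obtain ⟨q, m, hq, h0, hm, hmem⟩ := IH (n - d) hlen w' T hwalk'
            (by
              intro k hk
              by_cases h : k ≤ a
              · simpa [hw', h] using hT k (by omega)
              · simp only [hw', h, if_false]
                exact hT (k + d) (by omega))
          refine ⟨q, m, hq, ?_, ?_, hmem⟩
          · rw [h0]; simp [hw']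
          · rw [hm]
            have : ¬ (n - d ≤ a) := by omega
            simp only [hw', this, if_false]
            congr 1
            omega
      rcases lt_or_gt_of_ne hne with h | h
      · exact key i j h hj heq
      · exact key j i h hi heq.symm

/-- Concatenating two paths that meet only at the junction point. -/
lemma concat_path {w q : ℕ → V} {n m : ℕ} (hw : IsPathOn R w n) (hq : IsPathOn R q m)
    (h0 : q 0 = w n)
    (hcross : ∀ i ≤ n, ∀ j ≤ m, w i = q j → i = n ∧ j = 0) :
    ∃ w', IsPathOn R w' (n + m) ∧ (∀ i ≤ n, w' i = w i) ∧ w' (n + m) = q m := by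
  set w' : ℕ → V := fun k => if k ≤ n then w k else q (k - n) with hw'
  have hval : ∀ k, n < k → w' k = q (k - n) := by
    intro k hk
    simp only [hw', if_neg (by omega : ¬ k ≤ n)]
  have hval2 : ∀ k, k ≤ n → w' k = w k := by
    intro k hk
    simp only [hw', if_pos hk]
  have hgen : ∀ k, n ≤ k → w' k = q (k - n) := by
    intro k hk
    rcases eq_or_lt_of_le hk with h | h
    · rw [← h, hval2 n le_rfl, Nat.sub_self, h0]
    · exact hval k h
  refine ⟨w', ⟨?_, ?_⟩, hval2, ?_⟩
  · -- walk property
    intro k hk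
    rcases lt_or_ge k n with h | h
    · rw [hval2 k (le_of_lt h), hval2 (k + 1) h]
      exact hw.1 k h
    · rw [hgen k h, hgen (k + 1) (by omega)]
      have e : k + 1 - n = (k - n) + 1 := by omega
      rw [e]
      exact hq.1 (k - n) (by omega)
  · -- injectivity
    intro i hi j hj heq
    by_cases h1 : i ≤ n <;> by_cases h2 : j ≤ n
    · rw [hval2 i h1, hval2 j h2] at heq
      exact hw.2 i h1 j h2 heq
    · rw [hval2 i h1, hgen j (by omega)] at heq
      have := hcross i h1 (j - n) (by omega) heq
      omega
    · rw [hgen i (by omega), hval2 j h2] at heq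
      have := hcross j h2 (i - n) (by omega) heq.symm
      omega
    · rw [hgen i (by omega), hgen j (by omega)] at heq
      have := hq.2 (i - n) (by omega) (j - n) (by omega) heq
      omega
  · rw [hgen (n + m) (by omega)]
    congr 1
    omega

/-- Minimize a path hitting a nonempty family `S`: we can truncate it so that some
member `D` of `S` is hit only at the endpoint. -/
lemma min_hitting : ∀ (n : ℕ) (w : ℕ → V) (S : Set (Set V)),
    (∀ C ∈ S, ∃ i ≤ n, w i ∈ C) → S.Nonempty →
    ∃ n' ≤ n, (∀ C ∈ S, ∃ i ≤ n', w i ∈ C) ∧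
      ∃ D ∈ S, w n' ∈ D ∧ ∀ i ≤ n', w i ∈ D → i = n' := by
  intro n
  induction n using Nat.strong_induction_on with
  | _ n IH =>
    intro w S hhit hS
    by_cases hD : ∃ D ∈ S, w n ∈ D ∧ ∀ i ≤ n, w i ∈ D → i = n
    · exact ⟨n, le_rfl, hhit, hD⟩
    · push_neg at hD
      have hlt : ∀ C ∈ S, ∃ i < n, w i ∈ C := by
        intro C hC
        by_cases hn : w n ∈ C
        · obtain ⟨i, hi, hwi, hne⟩ := hD C hC hn
          exact ⟨i, lt_of_le_of_ne hi hne, hwi⟩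
        · obtain ⟨i, hi, hwi⟩ := hhit C hC
          have hne : i ≠ n := fun h => hn (h ▸ hwi)
          exact ⟨i, lt_of_le_of_ne hi hne, hwi⟩
      obtain ⟨C0, hC0⟩ := hS
      obtain ⟨i0, hi0, _⟩ := hlt C0 hC0
      have hn0 : 0 < n := by omega
      obtain ⟨n', hle, h1, h2⟩ := IH (n - 1) (by omega) w S
        (fun C hC => by obtain ⟨i, hi, hwi⟩ := hlt C hC; exact ⟨i, by omega, hwi⟩) ⟨C0, hC0⟩
      exact ⟨n', by omega, h1, h2⟩

/-- Extend a path whose endpoint is the unique vertex in a bramble member `D`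
into another member `C` disjoint from the path. -/
lemma extend_path {B : Set (Set V)} (hB : IsBramble R B) {w : ℕ → V} {n : ℕ}
    (hp : IsPathOn R w n) {D C : Set V} (hD : D ∈ B) (hC : C ∈ B)
    (hend : w n ∈ D) (honly : ∀ i ≤ n, w i ∈ D → i = n)
    (hmiss : ∀ i ≤ n, w i ∉ C) :
    ∃ w' n', IsPathOn R w' n' ∧ (∀ i ≤ n, w' i = w i) ∧ n ≤ n' ∧ ∃ i ≤ n', w' i ∈ C := by
  -- first get a walk from `w n` into `C` with all vertices in `D ∪ C`
  have hwalk : ∃ (q : ℕ → V) (m : ℕ), IsWalkOn R q m ∧ q 0 = w n ∧ q m ∈ C ∧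
      ∀ i ≤ m, q i ∈ D ∪ C := by
    rcases hB.2 D hD C hC with ⟨z, hzD, hzC⟩ | ⟨⟨u, huD, x, hxC, hux⟩, _⟩
    · obtain ⟨q, m, hq, h0, hm, hmem⟩ := (hB.1 D hD).2 (w n) hend z hzD
      exact ⟨q, m, hq, h0, hm ▸ hzC, fun i hi => Or.inl (hmem i hi)⟩
    · obtain ⟨q, m, hq, h0, hm, hmem⟩ := (hB.1 D hD).2 (w n) hend u huD
      refine ⟨fun k => if k ≤ m then q k else x, m + 1, ?_, ?_, ?_, ?_⟩
      · intro k hk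
        show R (if k ≤ m then q k else x) (if k + 1 ≤ m then q (k + 1) else x)
        rcases lt_or_ge k m with h | h
        · rw [if_pos (by omega : k ≤ m), if_pos (by omega : k + 1 ≤ m)]
          exact hq k h
        · have hkm : k = m := by omega
          subst hkm
          rw [if_pos le_rfl, if_neg (by omega : ¬ k + 1 ≤ k), hm]
          exact hux
      · show (if 0 ≤ m then q 0 else x) = w n
        rw [if_pos (Nat.zero_le m)]
        exact h0
      · show (if m + 1 ≤ m then q (m + 1) else x) ∈ C
        rw [if_neg (by omega : ¬ m + 1 ≤ m)]
        exact hxC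
      · intro i hi
        show (if i ≤ m then q i else x) ∈ D ∪ C
        by_cases h : i ≤ m
        · rw [if_pos h]
          exact Or.inl (hmem i h)
        · rw [if_neg h]
          exact Or.inr hxC
  obtain ⟨q, m, hq, hq0, hqm, hqmem⟩ := hwalk
  obtain ⟨p, ℓ, hpath, hp0, hpl, hpmem⟩ := walk_to_path_s9 m q (D ∪ C) hq
    (fun i hi => hqmem i hi)
  have hp0' : p 0 = w n := by rw [hp0, hq0]
  have hcross : ∀ i ≤ n, ∀ j ≤ ℓ, w i = p j → i = n ∧ j = 0 := by
    intro i hi j hj heq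
    have hpj : p j ∈ D ∪ C := hpmem j hj
    rcases hpj with hpj | hpj
    · have hiD : w i ∈ D := heq ▸ hpj
      have hin : i = n := honly i hi hiD
      subst hin
      have : p j = p 0 := by rw [hp0', ← heq]
      exact ⟨rfl, hpath.2 j hj 0 (Nat.zero_le _) this⟩
    · exact absurd (heq ▸ hpj) (hmiss i hi)
  obtain ⟨w', hw'path, hpre, hlast⟩ := concat_path hp hpath hp0' hcross
  refine ⟨w', n + ℓ, hw'path, hpre, by omega, n + ℓ, le_rfl, ?_⟩
  rw [hlast, hpl]
  exact hqm

/-- Main induction: decrease the number of unhit bramble members. -/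
lemma bramble_main [Fintype V] {B : Set (Set V)} (hB : IsBramble R B) :
    ∀ (k : ℕ) (w : ℕ → V) (n : ℕ), IsPathOn R w n →
      {C | C ∈ B ∧ ∀ i ≤ n, w i ∉ C}.ncard ≤ k →
      ∃ (w' : ℕ → V) (n' : ℕ), IsPathOn R w' n' ∧ ∀ C ∈ B, ∃ i ≤ n', w' i ∈ C := by
  intro k
  induction k with
  | zero =>
    intro w n hp hcard
    have hempty : {C | C ∈ B ∧ ∀ i ≤ n, w i ∉ C} = ∅ := by
      rw [← Set.ncard_eq_zero (Set.toFinite _)]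
      omega
    refine ⟨w, n, hp, fun C hC => ?_⟩
    by_contra hcon
    push_neg at hcon
    have : C ∈ ({C | C ∈ B ∧ ∀ i ≤ n, w i ∉ C} : Set (Set V)) := ⟨hC, hcon⟩
    rw [hempty] at this
    exact this
  | succ k IH =>
    intro w n hp hcard
    set U : Set (Set V) := {C | C ∈ B ∧ ∀ i ≤ n, w i ∉ C} with hU
    by_cases hUe : U = ∅
    · refine ⟨w, n, hp, fun C hC => ?_⟩
      by_contra hcon
      push_neg at hcon
      have : C ∈ U := ⟨hC, hcon⟩
      rw [hUe] at this
      exact this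
    · obtain ⟨C, hCU⟩ := Set.nonempty_iff_ne_empty.mpr hUe
      obtain ⟨hCB, hCmiss⟩ := hCU
      by_cases hS : ∃ D, D ∈ B ∧ ∃ i ≤ n, w i ∈ D
      · -- something is hit: minimize then extend
        set S : Set (Set V) := {D | D ∈ B ∧ ∃ i ≤ n, w i ∈ D} with hSdef
        obtain ⟨n', hn'n, hhit', D, hDS, hend, honly⟩ :=
          min_hitting n w S (fun C' hC' => hC'.2) hS
        have hp' : IsPathOn R w n' := isPathOn_mono hp hn'n
        have hmiss' : ∀ i ≤ n', w i ∉ C := fun i hi => hCmiss i (le_trans hi hn'n)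
        obtain ⟨w', n'', hp'', hpre, hnle, i0, hi0, hi0C⟩ :=
          extend_path hB hp' hDS.1 hCB hend honly hmiss'
        apply IH w' n'' hp''
        have hsub : {C' | C' ∈ B ∧ ∀ i ≤ n'', w' i ∉ C'} ⊆ U \ {C} := by
          intro C' hC'
          obtain ⟨hC'B, hC'miss⟩ := hC'
          constructor
          · refine ⟨hC'B, fun i hi hmem => ?_⟩
            -- C' is hit by original path → C' ∈ S → hit by (w, n') → hit by w'
            have hC'S : C' ∈ S := ⟨hC'B, i, hi, hmem⟩
            obtain ⟨j, hj, hwj⟩ := hhit' C' hC'S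
            exact hC'miss j (le_trans hj hnle) (by rw [hpre j hj]; exact hwj)
          · intro hmem
            rw [Set.mem_singleton_iff] at hmem
            subst hmem
            exact hC'miss i0 hi0 hi0C
        calc {C' | C' ∈ B ∧ ∀ i ≤ n'', w' i ∉ C'}.ncard
            ≤ (U \ {C}).ncard := Set.ncard_le_ncard hsub (Set.toFinite _)
          _ = U.ncard - 1 := Set.ncard_diff_singleton_of_mem (show C ∈ U from ⟨hCB, hCmiss⟩)
          _ ≤ k := by omega
      · -- nothing is hit: restart with a single vertex in C
        push_neg at hS
        obtain ⟨v, hv⟩ := (hB.1 C hCB).1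
        have hpv : IsPathOn R (fun _ => v) 0 := by
          constructor
          · intro i hi; omega
          · intro i hi j hj _; omega
        apply IH (fun _ => v) 0 hpv
        have hBU : B ⊆ U := fun D hD => ⟨hD, hS D hD⟩
        have hsub : {C' | C' ∈ B ∧ ∀ i ≤ (0 : ℕ), (fun _ => v) i ∉ C'} ⊆ U \ {C} := by
          intro C' hC'
          obtain ⟨hC'B, hC'miss⟩ := hC'
          refine ⟨hBU hC'B, ?_⟩
          intro hmem
          rw [Set.mem_singleton_iff] at hmem
          subst hmem
          exact hC'miss 0 le_rfl hv
        calc {C' | C' ∈ B ∧ ∀ i ≤ (0 : ℕ), (fun _ => v) i ∉ C'}.ncard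
            ≤ (U \ {C}).ncard := Set.ncard_le_ncard hsub (Set.toFinite _)
          _ = U.ncard - 1 := Set.ncard_diff_singleton_of_mem (show C ∈ U from ⟨hCB, hCmiss⟩)
          _ ≤ k := by omega

end BrambleHelpers

/-- In a (finite) digraph, for every bramble B there is a directed path
intersecting every member of B. -/
theorem bramble_hitting_path [Fintype V] [Nonempty V] (R : V → V → Prop)
    (B : Set (Set V)) (hB : IsBramble R B) :
    ∃ (w : ℕ → V) (n : ℕ), IsPathOn R w n ∧ ∀ C ∈ B, ∃ i ≤ n, w i ∈ C := by
  obtain ⟨v⟩ := ‹Nonempty V›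
  have hpv : IsPathOn R (fun _ => v) 0 := by
    constructor
    · intro i hi; omega
    · intro i hi j hj _; omega
  exact bramble_main hB ({C | C ∈ B ∧ ∀ i ≤ (0 : ℕ), (fun _ => v) i ∉ C}.ncard)
    (fun _ => v) 0 hpv le_rfl
end
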